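/- arXiv:1810.12811 — 4 statements merged into one kernel-verified Lean document; each statement's English description precedes it below -/
import Mathlib

section
/- Let η have reduced Witt index n ≥ 2 and singular defect d, with fixed decomposition V = V̄ ⊕ R where R = Rad(η) has dimension d and V̄ := V₁ ⊕ ⋯ ⊕ Vₙ ⊕ V₀. For 0 ≤ j let Ḡ_j denote the subspace of ⋀^j V̄ ⊆ ⋀^j V spanned by all pure wedges of bases of totally singular j-dimensional subspaces of V̄, with Ḡ₀ := F (the scalars in ⋀⁰V). Then for every 1 ≤ k ≤ n, G_k(η) = ⊕_{i=0}^{min(d,k)} Ḡ_{k−i} ∧ ⋀^i R, where Ḡ_{k−i} ∧ ⋀^i R denotes the span in ⋀^k V of all wedges u ∧ w with u ∈ Ḡ_{k−i} and w ∈ ⋀^i R, and the sum is direct. -/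
noncomputable section

namespace PolarGrass

open Module

variable (F : Type*) [Field F] (V : Type*) [AddCommGroup V] [Module F V]

/-- A subspace `W` is totally singular for the pairing `B` if `B` vanishes identically on it. -/
def TotSingB (B : V → V → F) (W : Submodule F V) : Prop :=
  ∀ x ∈ W, ∀ y ∈ W, B x y = 0

/-- A subspace `W` is totally singular for the quadratic form `q` if `q` vanishes on it. -/
def TotSingQ (q : QuadraticForm F V) (W : Submodule F V) : Prop :=
  ∀ x ∈ W, q x = 0

/-- The polarization of a quadratic form, as a bare pairing. -/
def polarF (q : QuadraticForm F V) : V → V → F :=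
  fun x y => QuadraticMap.polar (⇑q) x y

/-- The subspace of the `k`-th exterior power of `V` spanned by the pure wedges
`v₁ ∧ ⋯ ∧ v_k` where `v₁, …, v_k` is a basis of a `k`-dimensional subspace satisfying `P`,
all of whose vectors lie in `U`. -/
def grassmannIn (P : Submodule F V → Prop) (U : Submodule F V) (k : ℕ) :
    Submodule F (ExteriorAlgebra F V) :=
  Submodule.span F {x | ∃ v : Fin k → V, (∀ t, v t ∈ U) ∧ LinearIndependent F v ∧
    P (Submodule.span F (Set.range v)) ∧ x = ExteriorAlgebra.ιMulti F k v}

/-- The Grassmann image: the subspace of the `k`-th exterior power of `V` spanned by the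
pure wedges of bases of `k`-dimensional subspaces of `V` satisfying `P`. -/
def grassmann (P : Submodule F V → Prop) (k : ℕ) : Submodule F (ExteriorAlgebra F V) :=
  grassmannIn F V P ⊤ k

/-- `B` is a `σ`-Hermitian form. -/
def IsHermitianForm (σ : F ≃+* F) (B : V → V → F) : Prop :=
  (∀ x y z : V, B (x + y) z = B x z + B y z) ∧
  (∀ x y z : V, B x (y + z) = B x y + B x z) ∧
  (∀ (a b : F) (x y : V), B (a • x) (b • y) = σ a * b * B x y) ∧
  (∀ x y : V, B y x = σ (B x y))

/-- `B` is an alternating bilinear form. -/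
def IsAlternatingForm (B : V → V → F) : Prop :=
  (∀ x y z : V, B (x + y) z = B x z + B y z) ∧
  (∀ x y z : V, B x (y + z) = B x y + B x z) ∧
  (∀ (a : F) (x y : V), B (a • x) y = a * B x y) ∧
  (∀ (a : F) (x y : V), B x (a • y) = a * B x y) ∧
  (∀ x : V, B x x = 0)

/-- `V` is the orthogonal (w.r.t. the pairing `B`) direct sum of the subspaces
`W 0, …, W (n-1), W₀, R`, where each `W i` is a hyperbolic plane (spanned by two singular
vectors pairing to `1`, singularity being measured by `sv`), `W₀` is anisotropic of
dimension `d₀` (it contains no nonzero singular vector) and `R` is the radical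
(given as the set `RadSet`) and has dimension `d`. -/
def IsWittDecomp (B : V → V → F) (sv : V → Prop) (RadSet : Set V) (n d₀ d : ℕ)
    (W : Fin n → Submodule F V) (W₀ R : Submodule F V) : Prop :=
  DirectSum.IsInternal (Sum.elim W ![W₀, R]) ∧
  (∀ j j' : Fin n ⊕ Fin 2, j ≠ j' →
    ∀ x ∈ Sum.elim W ![W₀, R] j, ∀ y ∈ Sum.elim W ![W₀, R] j', B x y = 0) ∧
  (∀ i : Fin n, ∃ e f : V, W i = Submodule.span F {e, f} ∧ sv e ∧ sv f ∧ B e f = 1) ∧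
  (∀ v ∈ W₀, v ≠ 0 → ¬ sv v) ∧
  Module.finrank F W₀ = d₀ ∧
  (R : Set V) = RadSet ∧
  Module.finrank F R = d

/-- There is a Witt decomposition of `V` as above: `B` has reduced Witt index `n`,
anisotropic defect `d₀` and singular defect `d`. -/
def HasWittDecomp (B : V → V → F) (sv : V → Prop) (RadSet : Set V) (n d₀ d : ℕ) : Prop :=
  ∃ (W : Fin n → Submodule F V) (W₀ R : Submodule F V),
    IsWittDecomp F V B sv RadSet n d₀ d W W₀ R

/-- The radical (as a set) of a sesquilinear/bilinear pairing. -/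
def radSetB (B : V → V → F) : Set V := {v | ∀ w, B v w = 0}

/-- The radical (as a set) of a quadratic form. -/
def radSetQ (q : QuadraticForm F V) : Set V :=
  {v | q v = 0 ∧ ∀ w, polarF F V q v w = 0}

/-- The image of `⋀^i U` inside the exterior algebra of `V`: the span of the pure wedges of
`i`-tuples of vectors of `U`. -/
def extPowOf (U : Submodule F V) (i : ℕ) : Submodule F (ExteriorAlgebra F V) :=
  Submodule.span F {x | ∃ v : Fin i → V, (∀ t, v t ∈ U) ∧ x = ExteriorAlgebra.ιMulti F i v}

/-- `Ḡ_j`: for `j ≥ 1` the span of the pure wedges of bases of `j`-dimensional subspaces of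
`U` satisfying `P`; for `j = 0` the scalars `F ⊆ ⋀^0 V`. -/
def gbar (P : Submodule F V → Prop) (U : Submodule F V) : ℕ → Submodule F (ExteriorAlgebra F V)
  | 0 => 1
  | (j + 1) => grassmannIn F V P U (j + 1)

end PolarGrass

section Aux7

open PolarGrass Module ExteriorAlgebra

variable {F : Type*} [Field F] {V : Type*} [AddCommGroup V] [Module F V]

theorem aux_iMulti_append {a b : ℕ} (u : Fin a → V) (r : Fin b → V) :
    ιMulti F (a + b) (Fin.append u r) = ιMulti F a u * ιMulti F b r := by
  rw [ιMulti_apply, ιMulti_apply, ιMulti_apply]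
  have : (fun i => ι F (Fin.append u r i))
      = Fin.append (fun i => ι F (u i)) (fun i => ι F (r i)) := by
    funext i
    induction i using Fin.addCases with
    | left i => simp [Fin.append_left]
    | right i => simp [Fin.append_right]
  rw [this, List.ofFn_fin_append, List.prod_append]

theorem aux_ι_mul_ιMulti (x : V) : ∀ {n : ℕ} (r : Fin n → V),
    ι F x * ιMulti F n r = ((-1 : F) ^ n) • (ιMulti F n r * ι F x) := by
  intro n
  induction n with
  | zero => intro r; simp
  | succ n ih =>
    intro r
    rw [ιMulti_succ_apply]
    have h1 : ι F x * ι F (r 0) = -(ι F (r 0) * ι F x) := by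
      have := ExteriorAlgebra.ι_add_mul_swap (R := F) x (r 0)
      linear_combination (norm := noncomm_ring) this
    calc ι F x * (ι F (r 0) * ιMulti F n (Matrix.vecTail r))
        = (ι F x * ι F (r 0)) * ιMulti F n (Matrix.vecTail r) := by rw [mul_assoc]
      _ = -(ι F (r 0) * (ι F x * ιMulti F n (Matrix.vecTail r))) := by
          rw [h1]; noncomm_ring
      _ = -(ι F (r 0) * (((-1 : F) ^ n) • (ιMulti F n (Matrix.vecTail r) * ι F x))) := by
          rw [ih]
      _ = ((-1 : F) ^ (n + 1)) • (ι F (r 0) * ιMulti F n (Matrix.vecTail r) * ι F x) := by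
          rw [mul_smul_comm, pow_succ]
          rw [← neg_smul, mul_assoc]
          congr 1
          ring

theorem aux_extPow_zero (U : Submodule F V) : extPowOf F V U 0 = 1 := by
  rw [Submodule.one_eq_span, extPowOf]
  congr 1
  ext x
  simp only [Set.mem_setOf_eq, Set.mem_singleton_iff]
  constructor
  · rintro ⟨v, -, rfl⟩; simp
  · rintro rfl
    exact ⟨Fin.elim0, fun t => t.elim0, by simp⟩

theorem aux_ι_mul_extPow {U : Submodule F V} {i : ℕ} {x : V} (hx : x ∈ U)
    {w : ExteriorAlgebra F V} (hw : w ∈ extPowOf F V U i) :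
    ι F x * w ∈ extPowOf F V U (i + 1) := by
  induction hw using Submodule.span_induction with
  | mem w hw =>
    obtain ⟨v, hv, rfl⟩ := hw
    have h : ι F x * ιMulti F i v = ιMulti F (i + 1) (Fin.cons x v) := by
      rw [ιMulti_succ_apply, Fin.cons_zero]
      have hv' : Matrix.vecTail (Fin.cons x v : Fin (i+1) → V) = v :=
        funext fun t => by simp [Matrix.vecTail, Fin.cons_succ]
      rw [hv']
    rw [h]
    exact Submodule.subset_span ⟨Fin.cons x v, fun t => Fin.cases hx hv t, rfl⟩
  | zero => simp
  | add a b _ _ ha hb => rw [mul_add]; exact add_mem ha hb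
  | smul a w _ hw => rw [mul_smul_comm]; exact Submodule.smul_mem _ _ hw

theorem aux_extPow_comm {U : Submodule F V} {i : ℕ} {w : ExteriorAlgebra F V}
    (hw : w ∈ extPowOf F V U i) (x : V) :
    ι F x * w = ((-1 : F) ^ i) • (w * ι F x) := by
  induction hw using Submodule.span_induction with
  | mem w hw =>
    obtain ⟨v, hv, rfl⟩ := hw
    exact aux_ι_mul_ιMulti x v
  | zero => simp
  | add a b _ _ ha hb => rw [mul_add, add_mul, smul_add, ha, hb]
  | smul a w _ hw => rw [mul_smul_comm, smul_mul_assoc, hw, smul_comm]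

theorem aux_extPow_mul_ι {U : Submodule F V} {i : ℕ} {w : ExteriorAlgebra F V}
    (hw : w ∈ extPowOf F V U i) {x : V} (hx : x ∈ U) :
    w * ι F x ∈ extPowOf F V U (i + 1) := by
  have h : w * ι F x = ((-1 : F) ^ i) • (ι F x * w) := by
    rw [aux_extPow_comm hw x, smul_smul, ← pow_add]
    rw [Even.neg_one_pow ⟨i, by ring⟩, one_smul]
  rw [h]
  exact Submodule.smul_mem _ _ (aux_ι_mul_extPow hx hw)

theorem aux_extPow_eq_bot [FiniteDimensional F V] {U : Submodule F V} {i : ℕ}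
    (hi : finrank F U < i) : extPowOf F V U i = ⊥ := by
  rw [eq_bot_iff, extPowOf, Submodule.span_le]
  rintro x ⟨v, hv, rfl⟩
  have hdep : ¬ LinearIndependent F v := by
    intro h
    have h' : LinearIndependent F (fun t => (⟨v t, hv t⟩ : U)) :=
      LinearIndependent.of_comp U.subtype h
    have := h'.fintype_card_le_finrank
    simp only [Fintype.card_fin] at this
    omega
  have h0 : ιMulti F i v = 0 := AlternatingMap.map_linearDependent _ _ hdep
  simp [h0]

theorem aux_expand {M N : Submodule F V} : ∀ (k : ℕ) (v u r : Fin k → V),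
    (∀ t, u t ∈ M) → (∀ t, r t ∈ N) → (∀ t, v t = u t + r t) →
    ιMulti F k v ∈ ⨆ i : Fin (k + 1), extPowOf F V M (k - (i : ℕ)) * extPowOf F V N (i : ℕ) := by
  intro k
  induction k with
  | zero =>
    intro v u r hu hr hv
    refine Submodule.mem_iSup_of_mem (0 : Fin 1) ?_
    have h1 : ιMulti F 0 v = 1 := ιMulti_zero_apply v
    rw [h1]
    show (1 : ExteriorAlgebra F V) ∈ extPowOf F V M 0 * extPowOf F V N 0
    rw [aux_extPow_zero, aux_extPow_zero, one_mul]
    exact Submodule.one_le.1 le_rfl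
  | succ k ih =>
    intro v u r hu hr hv
    have hsplit : ιMulti F (k + 1) v = ι F (u 0) * ιMulti F k (Matrix.vecTail v)
        + ι F (r 0) * ιMulti F k (Matrix.vecTail v) := by
      rw [ιMulti_succ_apply, hv 0, map_add, add_mul]
    have hX : ιMulti F k (Matrix.vecTail v)
        ∈ ⨆ i : Fin (k + 1), extPowOf F V M (k - (i : ℕ)) * extPowOf F V N (i : ℕ) :=
      ih _ (fun t => u t.succ) (fun t => r t.succ) (fun t => hu _) (fun t => hr _)
        (fun t => hv t.succ)
    set T : Submodule F (ExteriorAlgebra F V) :=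
      ⨆ i : Fin (k + 2), extPowOf F V M (k + 1 - (i : ℕ)) * extPowOf F V N (i : ℕ) with hTdef
    have main : ∀ y ∈ (⨆ i : Fin (k + 1), extPowOf F V M (k - (i : ℕ)) * extPowOf F V N (i : ℕ)),
        ι F (u 0) * y ∈ T ∧ ι F (r 0) * y ∈ T := by
      intro y hy
      refine Submodule.iSup_induction
        (motive := fun y => ι F (u 0) * y ∈ T ∧ ι F (r 0) * y ∈ T) _ hy ?_ ?_ ?_
      · intro i y hy
        constructor
        · refine Submodule.mul_induction_on hy ?_ ?_
          · intro m hm p hp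
            refine Submodule.mem_iSup_of_mem i.castSucc ?_
            have h1 : ι F (u 0) * (m * p) = (ι F (u 0) * m) * p := by rw [mul_assoc]
            rw [h1]
            have h2 : ι F (u 0) * m ∈ extPowOf F V M (k - (i : ℕ) + 1) :=
              aux_ι_mul_extPow (hu 0) hm
            have h3 : k - (i : ℕ) + 1 = k + 1 - ((i.castSucc : Fin (k+2)) : ℕ) := by
              have := i.isLt; simp [Fin.coe_castSucc]; omega
            rw [← h3]
            exact Submodule.mul_mem_mul h2 hp
          · intro a b ha hb
            rw [mul_add]; exact add_mem ha hb
        · refine Submodule.mul_induction_on hy ?_ ?_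
          · intro m hm p hp
            refine Submodule.mem_iSup_of_mem i.succ ?_
            have h1 : ι F (r 0) * (m * p) = ((-1 : F) ^ (k - (i : ℕ))) • (m * (ι F (r 0) * p)) := by
              rw [← mul_assoc, aux_extPow_comm hm (r 0), smul_mul_assoc, mul_assoc]
            rw [h1]
            have h2 : ι F (r 0) * p ∈ extPowOf F V N ((i : ℕ) + 1) :=
              aux_ι_mul_extPow (hr 0) hp
            refine Submodule.smul_mem _ _ ?_
            have h4 : ((i.succ : Fin (k+2)) : ℕ) = (i : ℕ) + 1 := Fin.val_succ i
            rw [h4]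
            have h3 : k + 1 - ((i : ℕ) + 1) = k - (i : ℕ) := by omega
            rw [h3]
            exact Submodule.mul_mem_mul hm h2
          · intro a b ha hb
            rw [mul_add]; exact add_mem ha hb
      · constructor <;> · rw [mul_zero]; exact zero_mem _
      · intro a b ha hb
        exact ⟨by rw [mul_add]; exact add_mem ha.1 hb.1,
               by rw [mul_add]; exact add_mem ha.2 hb.2⟩
    rw [hsplit]
    exact add_mem (main _ hX).1 (main _ hX).2

section SingPart

variable {F : Type*} [Field F] {V : Type*} [AddCommGroup V] [Module F V]
variable {Orth : V → V → F} {sv : V → Prop} {Sing : Submodule F V → Prop} {RadSet : Set V}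

/-- The case hypothesis, abbreviated. -/
def Hcase (Orth : V → V → F) (sv : V → Prop) (Sing : Submodule F V → Prop)
    (RadSet : Set V) : Prop :=
  (∃ (σ : F ≃+* F) (h : V → V → F), (∀ a, σ (σ a) = a) ∧ IsHermitianForm F V σ h ∧
    Orth = h ∧ sv = (fun v => h v v = 0) ∧ Sing = TotSingB F V h ∧
    RadSet = radSetB F V h) ∨
  (∃ s : V → V → F, IsAlternatingForm F V s ∧ Orth = s ∧
    sv = (fun v => s v v = 0) ∧ Sing = TotSingB F V s ∧ RadSet = radSetB F V s) ∨
  (∃ q : QuadraticForm F V, Orth = polarF F V q ∧ sv = (fun v => q v = 0) ∧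
    Sing = TotSingQ F V q ∧ RadSet = radSetQ F V q)

theorem aux_polar_expand (q : QuadraticForm F V) (x y : V) :
    q (x + y) = q x + q y + QuadraticMap.polar (⇑q) x y := by
  simp [QuadraticMap.polar]

theorem aux_sing_mono (hc : Hcase Orth sv Sing RadSet) {U U' : Submodule F V}
    (hUU : U ≤ U') (hU' : Sing U') : Sing U := by
  rcases hc with ⟨σ, B, hσ, hB, rfl, rfl, rfl, rfl⟩ | ⟨B, hB, rfl, rfl, rfl, rfl⟩ |
    ⟨q, rfl, rfl, rfl, rfl⟩
  · exact fun x hx y hy => hU' x (hUU hx) y (hUU hy)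
  · exact fun x hx y hy => hU' x (hUU hx) y (hUU hy)
  · exact fun x hx => hU' x (hUU hx)

theorem aux_rad_orth (hc : Hcase Orth sv Sing RadSet) {r : V} (hr : r ∈ RadSet) :
    ∀ w, Orth r w = 0 ∧ Orth w r = 0 := by
  rcases hc with ⟨σ, B, hσ, hB, rfl, rfl, rfl, rfl⟩ | ⟨B, hB, rfl, rfl, rfl, rfl⟩ |
    ⟨q, rfl, rfl, rfl, rfl⟩
  · intro w
    refine ⟨hr w, ?_⟩
    have := hB.2.2.2 r w
    rw [this, hr w, map_zero]
  · intro w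
    refine ⟨hr w, ?_⟩
    obtain ⟨h1, h2, _, _, h5⟩ := hB
    have e1 : Orth (w + r) (w + r) = 0 := h5 _
    rw [h1, h2, h2] at e1
    rw [h5 w, h5 r, hr w] at e1
    linear_combination e1
  · intro w
    refine ⟨hr.2 w, ?_⟩
    show QuadraticMap.polar (⇑q) w r = 0
    rw [QuadraticMap.polar_comm]
    exact hr.2 w

theorem aux_rad_sv (hc : Hcase Orth sv Sing RadSet) {r : V} (hr : r ∈ RadSet) : sv r := by
  have h := aux_rad_orth hc hr r
  rcases hc with ⟨σ, B, hσ, hB, rfl, rfl, rfl, rfl⟩ | ⟨B, hB, rfl, rfl, rfl, rfl⟩ |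
    ⟨q, rfl, rfl, rfl, rfl⟩
  · exact hr r
  · exact hr r
  · exact hr.1

theorem aux_totsingB_span (B : V → V → F)
    (hadd1 : ∀ x y z : V, B (x + y) z = B x z + B y z)
    (hadd2 : ∀ x y z : V, B x (y + z) = B x y + B x z)
    (hsl : ∀ (a : F) (x y : V), ∃ c : F, B (a • x) y = c * B x y)
    (hsr : ∀ (a : F) (x y : V), ∃ c : F, B x (a • y) = c * B x y)
    (S : Set V) (h1 : ∀ x ∈ S, ∀ y ∈ S, B x y = 0) :
    TotSingB F V B (Submodule.span F S) := by
  have hz2 : ∀ x, B x 0 = 0 := fun x => by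
    have h := hadd2 x 0 0; rw [add_zero] at h
    exact (left_eq_add.mp h)
  have hz1 : ∀ y, B 0 y = 0 := fun y => by
    have h := hadd1 0 0 y; rw [add_zero] at h
    exact (left_eq_add.mp h)
  intro x hx
  induction hx using Submodule.span_induction with
  | mem x hxS =>
    intro y hy
    induction hy using Submodule.span_induction with
    | mem y hyS => exact h1 x hxS y hyS
    | zero => exact hz2 x
    | add y z _ _ hy hz => rw [hadd2, hy, hz, add_zero]
    | smul a y _ hy =>
      obtain ⟨c, hc⟩ := hsr a x y
      rw [hc, hy, mul_zero]
  | zero => intro y _; exact hz1 y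
  | add x z _ _ hx hz => intro y hy; rw [hadd1, hx _ hy, hz _ hy, add_zero]
  | smul a x _ hx =>
    intro y hy
    obtain ⟨c, hc⟩ := hsl a x y
    rw [hc, hx _ hy, mul_zero]

theorem aux_totsingQ_span (q : QuadraticForm F V) (S : Set V)
    (h1 : ∀ x ∈ S, ∀ y ∈ S, QuadraticMap.polar (⇑q) x y = 0)
    (h2 : ∀ x ∈ S, q x = 0) : TotSingQ F V q (Submodule.span F S) := by
  have inner : ∀ x, (∀ s ∈ S, QuadraticMap.polar (⇑q) x s = 0) →
      ∀ y ∈ Submodule.span F S, QuadraticMap.polar (⇑q) x y = 0 := by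
    intro x hx y hy
    induction hy using Submodule.span_induction with
    | mem y hyS => exact hx y hyS
    | zero => exact QuadraticMap.polar_zero_right q x
    | add y z _ _ hy hz => rw [QuadraticMap.polar_add_right, hy, hz, add_zero]
    | smul a y _ hy => rw [QuadraticMap.polar_smul_right, hy, smul_zero]
  have main : ∀ x ∈ Submodule.span F S,
      q x = 0 ∧ ∀ y ∈ Submodule.span F S, QuadraticMap.polar (⇑q) x y = 0 := by
    intro x hx
    induction hx using Submodule.span_induction with
    | mem x hxS => exact ⟨h2 x hxS, inner x (fun s hs => h1 x hxS s hs)⟩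
    | zero => exact ⟨map_zero q, fun y _ => QuadraticMap.polar_zero_left q y⟩
    | add x z hxm hzm hx hz =>
      refine ⟨?_, fun y hy => by
        rw [QuadraticMap.polar_add_left, hx.2 _ hy, hz.2 _ hy, add_zero]⟩
      rw [aux_polar_expand q x z, hx.1, hz.1, hx.2 _ hzm]
      ring
    | smul a x hxm hx =>
      refine ⟨?_, fun y hy => by rw [QuadraticMap.polar_smul_left, hx.2 _ hy, smul_zero]⟩
      rw [QuadraticMap.map_smul, hx.1]
      simp
  exact fun x hx => (main x hx).1

theorem aux_sing_span (hc : Hcase Orth sv Sing RadSet) (S : Set V)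
    (h1 : ∀ x ∈ S, ∀ y ∈ S, Orth x y = 0) (h2 : ∀ x ∈ S, sv x) :
    Sing (Submodule.span F S) := by
  rcases hc with ⟨σ, B, hσ, hB, rfl, rfl, rfl, rfl⟩ | ⟨B, hB, rfl, rfl, rfl, rfl⟩ |
    ⟨q, rfl, rfl, rfl, rfl⟩
  · obtain ⟨ha1, ha2, ha3, ha4⟩ := hB
    refine aux_totsingB_span Orth ha1 ha2 ?_ ?_ S h1
    · intro a x y
      refine ⟨σ a, ?_⟩
      have h := ha3 a 1 x y
      rw [one_smul, mul_one] at h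
      exact h
    · intro a x y
      refine ⟨a, ?_⟩
      have h := ha3 1 a x y
      rw [one_smul, σ.map_one, one_mul] at h
      exact h
  · obtain ⟨ha1, ha2, ha3, ha4, ha5⟩ := hB
    exact aux_totsingB_span Orth ha1 ha2 (fun a x y => ⟨a, ha3 a x y⟩)
      (fun a x y => ⟨a, ha4 a x y⟩) S h1
  · exact aux_totsingQ_span q S h1 h2

theorem aux_sing_pairs (hc : Hcase Orth sv Sing RadSet) {T : Submodule F V} (hT : Sing T) :
    (∀ x ∈ T, ∀ y ∈ T, Orth x y = 0) ∧ (∀ x ∈ T, sv x) := by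
  rcases hc with ⟨σ, B, hσ, hB, rfl, rfl, rfl, rfl⟩ | ⟨B, hB, rfl, rfl, rfl, rfl⟩ |
    ⟨q, rfl, rfl, rfl, rfl⟩
  · exact ⟨hT, fun x hx => hT x hx x hx⟩
  · exact ⟨hT, fun x hx => hT x hx x hx⟩
  · refine ⟨fun x hx y hy => ?_, fun x hx => hT x hx⟩
    show QuadraticMap.polar (⇑q) x y = 0
    have h := aux_polar_expand q x y
    rw [hT x hx, hT y hy, hT _ (T.add_mem hx hy)] at h
    linear_combination -h

theorem aux_sing_proj (hc : Hcase Orth sv Sing RadSet) {k : ℕ} (v u r : Fin k → V)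
    (hv : Sing (Submodule.span F (Set.range v))) (hr : ∀ t, r t ∈ RadSet)
    (hvur : ∀ t, v t = u t + r t) : Sing (Submodule.span F (Set.range u)) := by
  have hpairs := aux_sing_pairs hc hv
  have hvmem : ∀ t, v t ∈ Submodule.span F (Set.range v) :=
    fun t => Submodule.subset_span (Set.mem_range_self t)
  have hOvv : ∀ s t, Orth (v s) (v t) = 0 := fun s t => hpairs.1 _ (hvmem s) _ (hvmem t)
  have hrad : ∀ (j : Fin k) (w : V), Orth (r j) w = 0 ∧ Orth w (r j) = 0 :=
    fun j w => aux_rad_orth hc (hr j) w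
  have hsvv : ∀ s, sv (v s) := fun s => hpairs.2 _ (hvmem s)
  refine aux_sing_span hc _ ?_ ?_
  · rintro x ⟨s, rfl⟩ y ⟨t, rfl⟩
    have hus : u s = v s - r s := by rw [hvur s]; abel
    have hut : u t = v t - r t := by rw [hvur t]; abel
    rcases hc with ⟨σ, B, hσ, hB, rfl, rfl, rfl, rfl⟩ | ⟨B, hB, rfl, rfl, rfl, rfl⟩ |
      ⟨q, rfl, rfl, rfl, rfl⟩
    · obtain ⟨ha1, ha2, ha3, ha4⟩ := hB
      have hsub1 : ∀ x y z : V, Orth (x - y) z = Orth x z - Orth y z := fun x y z => by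
        have h := ha1 (x - y) y z; rw [sub_add_cancel] at h; linear_combination -h
      have hsub2 : ∀ x y z : V, Orth x (y - z) = Orth x y - Orth x z := fun x y z => by
        have h := ha2 x (y - z) z; rw [sub_add_cancel] at h; linear_combination -h
      rw [hus, hut, hsub1, hsub2, hsub2, (hrad s _).1, (hrad s _).1, hOvv s t,
        (hrad t _).2]
      ring
    · obtain ⟨ha1, ha2, ha3, ha4, ha5⟩ := hB
      have hsub1 : ∀ x y z : V, Orth (x - y) z = Orth x z - Orth y z := fun x y z => by
        have h := ha1 (x - y) y z; rw [sub_add_cancel] at h; linear_combination -h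
      have hsub2 : ∀ x y z : V, Orth x (y - z) = Orth x y - Orth x z := fun x y z => by
        have h := ha2 x (y - z) z; rw [sub_add_cancel] at h; linear_combination -h
      rw [hus, hut, hsub1, hsub2, hsub2, (hrad s _).1, (hrad s _).1, hOvv s t,
        (hrad t _).2]
      ring
    · show QuadraticMap.polar (⇑q) (u s) (u t) = 0
      have h1 : QuadraticMap.polar (⇑q) (r s) (u t) = 0 := (hrad s _).1
      have h2 : QuadraticMap.polar (⇑q) (v s) (r t) = 0 := (hrad t _).2
      have h3 : QuadraticMap.polar (⇑q) (v s) (v t) = 0 := hOvv s t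
      rw [hus, hut, QuadraticMap.polar_sub_left, QuadraticMap.polar_sub_right,
        QuadraticMap.polar_sub_right]
      have h4 : QuadraticMap.polar (⇑q) (r s) (v t) = 0 := (hrad s _).1
      have h5 : QuadraticMap.polar (⇑q) (r s) (r t) = 0 := (hrad s _).1
      have h6 : QuadraticMap.polar (⇑q) (v s) (r t) = 0 := (hrad t _).2
      rw [h3, h4, h5, h6]
      ring
  · rintro x ⟨t, rfl⟩
    have hut : u t = v t - r t := by rw [hvur t]; abel
    rcases hc with ⟨σ, B, hσ, hB, rfl, rfl, rfl, rfl⟩ | ⟨B, hB, rfl, rfl, rfl, rfl⟩ |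
      ⟨q, rfl, rfl, rfl, rfl⟩
    · obtain ⟨ha1, ha2, ha3, ha4⟩ := hB
      have hsub1 : ∀ x y z : V, Orth (x - y) z = Orth x z - Orth y z := fun x y z => by
        have h := ha1 (x - y) y z; rw [sub_add_cancel] at h; linear_combination -h
      have hsub2 : ∀ x y z : V, Orth x (y - z) = Orth x y - Orth x z := fun x y z => by
        have h := ha2 x (y - z) z; rw [sub_add_cancel] at h; linear_combination -h
      show Orth (u t) (u t) = 0
      rw [hut, hsub1, hsub2, hsub2, (hrad t _).1, (hrad t _).1, (hrad t _).2]
      have h := hsvv t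
      simp only at h
      rw [h]
      ring
    · exact hB.2.2.2.2 _
    · show q (u t) = 0
      have hq : q (v t) = 0 := hsvv t
      have hqr : q (r t) = 0 := (hr t).1
      have h2 : QuadraticMap.polar (⇑q) (u t) (r t) = 0 := (hrad t (u t)).2
      have h := aux_polar_expand q (u t) (r t)
      rw [← hvur t, hq, hqr, h2] at h
      linear_combination -h

end SingPart

section IncPart

open ExteriorAlgebra

variable {F : Type*} [Field F] {V : Type*} [AddCommGroup V] [Module F V]
variable {Orth : V → V → F} {sv : V → Prop} {Sing : Submodule F V → Prop} {RadSet : Set V}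

theorem aux_gbar_zero (U : Submodule F V) : gbar F V Sing U 0 = 1 := rfl

theorem aux_gbar_succ (U : Submodule F V) (j : ℕ) :
    gbar F V Sing U (j + 1) = grassmannIn F V Sing U (j + 1) := rfl

theorem aux_extPow_le_gbar (hc : Hcase Orth sv Sing RadSet) {T U : Submodule F V}
    (hTU : T ≤ U) (hT : Sing T) (j : ℕ) :
    extPowOf F V T j ≤ gbar F V Sing U j := by
  cases j with
  | zero => rw [aux_gbar_zero, aux_extPow_zero]
  | succ j =>
    rw [aux_gbar_succ, extPowOf, grassmannIn]
    refine Submodule.span_le.2 ?_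
    rintro x ⟨w, hw, rfl⟩
    by_cases hind : LinearIndependent F w
    · refine Submodule.subset_span ⟨w, fun t => hTU (hw t), hind, ?_, rfl⟩
      exact aux_sing_mono hc (Submodule.span_le.2 (Set.range_subset_iff.2 hw)) hT
    · have h0 : ιMulti F (j + 1) w = 0 := AlternatingMap.map_linearDependent _ _ hind
      rw [h0]
      exact Submodule.zero_mem _

theorem aux_extPowR_le_grassmann (hc : Hcase Orth sv Sing RadSet) {R : Submodule F V}
    (hRrad : (R : Set V) = RadSet) (b : ℕ) :
    extPowOf F V R b ≤ grassmann F V Sing b := by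
  rw [extPowOf, grassmann, grassmannIn]
  refine Submodule.span_le.2 ?_
  rintro x ⟨r, hrR, rfl⟩
  have hrRad : ∀ t, r t ∈ RadSet := fun t => hRrad ▸ hrR t
  by_cases hind : LinearIndependent F r
  · refine Submodule.subset_span ⟨r, fun t => trivial, hind, ?_, rfl⟩
    refine aux_sing_span hc _ ?_ ?_
    · rintro x ⟨s, rfl⟩ y ⟨t, rfl⟩
      exact (aux_rad_orth hc (hrRad s) (r t)).1
    · rintro x ⟨t, rfl⟩
      exact aux_rad_sv hc (hrRad t)
  · have h0 : ιMulti F b r = 0 := AlternatingMap.map_linearDependent _ _ hind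
    rw [h0]
    exact Submodule.zero_mem _

theorem aux_comp_le_grassmann (hc : Hcase Orth sv Sing RadSet) {U R : Submodule F V}
    (hRrad : (R : Set V) = RadSet) {a b c : ℕ} (habc : a + b = c) :
    gbar F V Sing U a * extPowOf F V R b ≤ grassmann F V Sing c := by
  cases a with
  | zero =>
    rw [Nat.zero_add] at habc
    subst habc
    rw [aux_gbar_zero, one_mul]
    exact aux_extPowR_le_grassmann hc hRrad b
  | succ a' =>
    subst habc
    rw [aux_gbar_succ, grassmannIn, extPowOf, Submodule.span_mul_span]
    refine Submodule.span_le.2 ?_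
    rintro x ⟨g1, ⟨u, hu, huind, husing, rfl⟩, g2, ⟨r, hrR, rfl⟩, rfl⟩
    beta_reduce
    rw [← aux_iMulti_append u r]
    have hrRad : ∀ t, r t ∈ RadSet := fun t => hRrad ▸ hrR t
    by_cases hind : LinearIndependent F (Fin.append u r)
    · refine Submodule.subset_span ⟨Fin.append u r, fun t => trivial, hind, ?_, rfl⟩
      have hpairsU := aux_sing_pairs hc husing
      have humem : ∀ t, u t ∈ Submodule.span F (Set.range u) :=
        fun t => Submodule.subset_span (Set.mem_range_self t)
      have hcases : ∀ x ∈ Set.range (Fin.append u r),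
          (∃ i, x = u i) ∨ (∃ i, x = r i) := by
        rintro x ⟨t, rfl⟩
        induction t using Fin.addCases with
        | left i => exact Or.inl ⟨i, (Fin.append_left u r i)⟩
        | right i => exact Or.inr ⟨i, (Fin.append_right u r i)⟩
      refine aux_sing_span hc _ ?_ ?_
      · intro x hx y hy
        rcases hcases x hx with ⟨i, rfl⟩ | ⟨i, rfl⟩
        · rcases hcases y hy with ⟨j, rfl⟩ | ⟨j, rfl⟩
          · exact hpairsU.1 _ (humem i) _ (humem j)
          · exact (aux_rad_orth hc (hrRad j) (u i)).2
        · exact (aux_rad_orth hc (hrRad i) y).1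
      · intro x hx
        rcases hcases x hx with ⟨i, rfl⟩ | ⟨i, rfl⟩
        · exact hpairsU.2 _ (humem i)
        · exact aux_rad_sv hc (hrRad i)
    · have h0 : ιMulti F (a' + 1 + b) (Fin.append u r) = 0 :=
        AlternatingMap.map_linearDependent _ _ hind
      rw [h0]
      exact Submodule.zero_mem _

end IncPart

section IndepPart

open ExteriorAlgebra

variable {F : Type*} [Field F] {V : Type*} [AddCommGroup V] [Module F V]
variable {Sing : Submodule F V → Prop}

theorem aux_gbar_le_extPow (U : Submodule F V) (j : ℕ) :
    gbar F V Sing U j ≤ extPowOf F V U j := by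
  cases j with
  | zero => rw [aux_gbar_zero, aux_extPow_zero]
  | succ j =>
    rw [aux_gbar_succ, grassmannIn, extPowOf]
    refine Submodule.span_le.2 ?_
    rintro x ⟨v, hv, -, -, rfl⟩
    exact Submodule.subset_span ⟨v, hv, rfl⟩

theorem aux_indep_span {M : Type*} [AddCommGroup M] [Module F M]
    {ι κ : Type*} {w : ι → M} (hw : LinearIndependent F w) (A : κ → Set ι)
    (hA : Pairwise (Function.onFun Disjoint A)) :
    iSupIndep (fun i => Submodule.span F (w '' A i)) := by
  rw [iSupIndep_def]
  intro i
  have h2 : (⨆ j, ⨆ (_ : j ≠ i), Submodule.span F (w '' A j))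
      ≤ Submodule.span F (w '' (⋃ (j) (_ : j ≠ i), A j)) := by
    refine iSup_le fun j => iSup_le fun hj => Submodule.span_mono (Set.image_mono ?_)
    exact Set.subset_iUnion₂ (s := fun j (_ : j ≠ i) => A j) j hj
  refine Disjoint.mono_right h2 (hw.disjoint_span_image ?_)
  rw [Set.disjoint_iUnion₂_right]
  exact fun j hj => hA (Ne.symm hj)

/-- The wedge family associated to a linearly ordered family of vectors. -/
noncomputable def wedgeFam {m : ℕ} (BB : Basis (Fin m) F V) (k : ℕ)
    (s : {s : Finset (Fin m) // s.card = k}) : ExteriorAlgebra F V :=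
  ιMulti F k (fun i => BB ((s.1.orderIsoOfFin s.2 i : Fin m)))

theorem aux_wedge_indep {m : ℕ} (BB : Basis (Fin m) F V) (k : ℕ) :
    LinearIndependent F (wedgeFam BB k) := by
  classical
  -- dual functionals via determinants of coordinates
  set D : {s : Finset (Fin m) // s.card = k} → (V [⋀^Fin k]→ₗ[F] F) := fun s =>
    (Matrix.detRowAlternating).compLinearMap
      (LinearMap.pi (fun j => BB.coord ((s.1.orderIsoOfFin s.2 j : Fin m)))) with hD
  set f : {s : Finset (Fin m) // s.card = k} → (∀ i, V [⋀^Fin i]→ₗ[F] F) := fun s i =>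
    if h : i = k then (D s).domDomCongr (finCongr h.symm) else 0 with hf
  set φ : {s : Finset (Fin m) // s.card = k} → (ExteriorAlgebra F V →ₗ[F] F) := fun s =>
    ExteriorAlgebra.liftAlternating (f s) with hφ
  have key : ∀ s t, φ s (wedgeFam BB k t) = if t = s then 1 else 0 := by
    intro s t
    rw [hφ]
    simp only [wedgeFam]
    rw [ExteriorAlgebra.liftAlternating_apply_ιMulti]
    rw [hf]
    beta_reduce
    rw [dif_pos rfl]
    rw [AlternatingMap.domDomCongr_apply]
    have hcomp : ((fun i => BB ((t.1.orderIsoOfFin t.2 i : Fin m))) ∘ (finCongr rfl))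
        = fun i => BB ((t.1.orderIsoOfFin t.2 i : Fin m)) := by
      funext i; simp
    rw [hcomp, hD]
    rw [AlternatingMap.compLinearMap_apply]
    have hentry : ∀ i j, (LinearMap.pi (fun j => BB.coord ((s.1.orderIsoOfFin s.2 j : Fin m))))
        (BB ((t.1.orderIsoOfFin t.2 i : Fin m))) j
        = if ((t.1.orderIsoOfFin t.2 i : Fin m)) = ((s.1.orderIsoOfFin s.2 j : Fin m)) then 1 else 0 := by
      intro i j
      rw [LinearMap.pi_apply, Basis.coord_apply, Basis.repr_self_apply]
    by_cases hts : t = s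
    · subst hts
      rw [if_pos rfl]
      have hone : (fun i => (LinearMap.pi (fun j => BB.coord ((t.1.orderIsoOfFin t.2 j : Fin m))))
          (BB ((t.1.orderIsoOfFin t.2 i : Fin m)))) = (1 : Matrix (Fin k) (Fin k) F) := by
        funext i j
        rw [hentry i j, Matrix.one_apply]
        congr 1
        simp only [eq_iff_iff]
        constructor
        · intro h
          exact (t.1.orderIsoOfFin t.2).injective (Subtype.coe_injective h)
        · rintro rfl; rfl
      rw [hone]
      exact Matrix.det_one
    · rw [if_neg hts]
      -- find an element of s not in t
      have hne : ¬ (s.1 ⊆ t.1) := by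
        intro hsub
        exact hts (Subtype.ext (Finset.eq_of_subset_of_card_le hsub (by rw [s.2, t.2])).symm)
      obtain ⟨x, hxs, hxt⟩ := Finset.not_subset.mp hne
      set j0 : Fin k := (s.1.orderIsoOfFin s.2).symm ⟨x, hxs⟩ with hj0
      have hcol : ∀ i, (LinearMap.pi (fun j => BB.coord ((s.1.orderIsoOfFin s.2 j : Fin m))))
          (BB ((t.1.orderIsoOfFin t.2 i : Fin m))) j0 = 0 := by
        intro i
        rw [hentry i j0]
        have hx : ((s.1.orderIsoOfFin s.2 j0 : Fin m)) = x := by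
          rw [hj0, OrderIso.apply_symm_apply]
        rw [hx]
        have : ((t.1.orderIsoOfFin t.2 i : Fin m)) ≠ x := by
          intro h
          exact hxt (h ▸ (t.1.orderIsoOfFin t.2 i).2)
        rw [if_neg this]
      exact Matrix.det_eq_zero_of_column_eq_zero j0 hcol
  rw [linearIndependent_iff]
  intro l hl
  ext s
  have h := congrArg (φ s) hl
  rw [map_zero, Finsupp.apply_linearCombination] at h
  rw [Finsupp.linearCombination_apply, Finsupp.sum] at h
  have hterm : ∀ t, l t • (φ s ∘ wedgeFam BB k) t = if t = s then l t else 0 := by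
    intro t
    simp only [Function.comp_apply]
    rw [key s t]
    by_cases h' : t = s
    · rw [if_pos h', if_pos h', smul_eq_mul, mul_one]
    · rw [if_neg h', if_neg h', smul_eq_mul, mul_zero]
  rw [Finset.sum_congr rfl (fun t _ => hterm t),
    Finset.sum_ite_eq' l.support s (fun t => l t)] at h
  by_cases hs : s ∈ l.support
  · rw [if_pos hs] at h
    simpa using h
  · simpa using (Finsupp.notMem_support_iff.mp hs)

theorem aux_extPow_le_span {m : ℕ} (BB : Basis (Fin m) F V) (U : Submodule F V)
    (I : Set (Fin m)) (hU : ∀ x ∈ U, ∀ j : Fin m, j ∉ I → BB.repr x j = 0) (a : ℕ) :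
    extPowOf F V U a ≤ Submodule.span F
      {x | ∃ c : Fin a → Fin m, (∀ i, c i ∈ I) ∧ x = ιMulti F a (fun i => BB (c i))} := by
  classical
  rw [extPowOf]
  refine Submodule.span_le.2 ?_
  rintro x ⟨u, hu, rfl⟩
  have hrep : ∀ i, u i = ∑ j : Fin m, BB.repr (u i) j • BB j :=
    fun i => (BB.sum_repr (u i)).symm
  have hexp : ιMulti F a u
      = ∑ p : Fin a → Fin m, (∏ i, BB.repr (u i) (p i)) • ιMulti F a (fun i => BB (p i)) := by
    have h1 : ιMulti F a u
        = (ιMulti F a).toMultilinearMap (fun i => ∑ j : Fin m, BB.repr (u i) j • BB j) := by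
      simp only [AlternatingMap.coe_multilinearMap]
      congr 1
      funext i
      exact hrep i
    rw [h1, MultilinearMap.map_sum]
    refine Finset.sum_congr rfl ?_
    intro p _
    rw [MultilinearMap.map_smul_univ]
    rfl
  rw [hexp]
  refine Submodule.sum_mem _ ?_
  intro p _
  by_cases hp : ∀ i, p i ∈ I
  · exact Submodule.smul_mem _ _ (Submodule.subset_span ⟨p, hp, rfl⟩)
  · push_neg at hp
    obtain ⟨i0, hi0⟩ := hp
    have hz : BB.repr (u i0) (p i0) = 0 := hU (u i0) (hu i0) (p i0) hi0
    rw [Finset.prod_eq_zero (Finset.mem_univ i0) hz, zero_smul]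
    exact Submodule.zero_mem _

theorem aux_wedge_inj_mem {m : ℕ} (BB : Basis (Fin m) F V) {k : ℕ} (c : Fin k → Fin m)
    (hc : Function.Injective c) (S : Set {s : Finset (Fin m) // s.card = k})
    (hS : (⟨Finset.image c Finset.univ, by
        rw [Finset.card_image_of_injective _ hc, Finset.card_univ, Fintype.card_fin]⟩ :
        {s : Finset (Fin m) // s.card = k}) ∈ S) :
    ιMulti F k (fun i => BB (c i)) ∈ Submodule.span F (wedgeFam BB k '' S) := by
  classical
  set t : Finset (Fin m) := Finset.image c Finset.univ with ht
  have htc : t.card = k := by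
    rw [ht, Finset.card_image_of_injective _ hc, Finset.card_univ, Fintype.card_fin]
  have hmem : ∀ i, c i ∈ t := fun i => by
    rw [ht]; exact Finset.mem_image_of_mem c (Finset.mem_univ i)
  set ψ : Fin k → Fin k := fun i => (t.orderIsoOfFin htc).symm ⟨c i, hmem i⟩ with hψ
  have hψinj : Function.Injective ψ := by
    intro i j h
    apply hc
    have := congrArg (fun z => ((t.orderIsoOfFin htc z : t) : Fin m)) h
    simpa [hψ, OrderIso.apply_symm_apply] using this
  have hψbij : Function.Bijective ψ := (Finite.injective_iff_bijective).1 hψinj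
  set π : Equiv.Perm (Fin k) := Equiv.ofBijective ψ hψbij with hπ
  have hcomp : (fun i => BB (c i))
      = (fun i => BB ((t.orderIsoOfFin htc i : Fin m))) ∘ π := by
    funext i
    simp only [Function.comp_apply, hπ, Equiv.ofBijective_apply, hψ,
      OrderIso.apply_symm_apply]
  rw [hcomp, AlternatingMap.map_perm]
  have hw : ιMulti F k (fun i => BB ((t.orderIsoOfFin htc i : Fin m)))
      ∈ Submodule.span F (wedgeFam BB k '' S) := by
    refine Submodule.subset_span ⟨⟨t, htc⟩, hS, ?_⟩
    rfl
  rcases Int.units_eq_one_or (Equiv.Perm.sign π) with h | h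
  · rw [h, one_smul]; exact hw
  · rw [h, Units.smul_def, Units.val_neg, Units.val_one, neg_zsmul, one_zsmul]
    exact Submodule.neg_mem _ hw

theorem aux_prod_le_span {m : ℕ} (BB : Basis (Fin m) F V) {UU RR : Submodule F V} {p : ℕ}
    (hUU : ∀ x ∈ UU, ∀ j : Fin m, ¬ ((j : ℕ) < p) → BB.repr x j = 0)
    (hRR : ∀ x ∈ RR, ∀ j : Fin m, ((j : ℕ) < p) → BB.repr x j = 0)
    {a b k : ℕ} (hab : a + b = k) :
    extPowOf F V UU a * extPowOf F V RR b ≤ Submodule.span F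
      (wedgeFam BB k '' {s | (s.1.filter (fun j : Fin m => p ≤ (j : ℕ))).card = b}) := by
  classical
  subst hab
  have h1 := aux_extPow_le_span BB UU {j : Fin m | (j : ℕ) < p}
    (fun x hx j hj => hUU x hx j hj) a
  have h2 := aux_extPow_le_span BB RR {j : Fin m | ¬ (j : ℕ) < p}
    (fun x hx j hj => hRR x hx j (not_not.mp hj)) b
  refine le_trans (mul_le_mul' h1 h2) ?_
  rw [Submodule.span_mul_span]
  refine Submodule.span_le.2 ?_
  rintro x ⟨g1, ⟨c, hcI, rfl⟩, g2, ⟨c', hcI', rfl⟩, rfl⟩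
  beta_reduce
  have happ : (fun i => BB (Fin.append c c' i))
      = Fin.append (fun i => BB (c i)) (fun i => BB (c' i)) := by
    funext i
    induction i using Fin.addCases with
    | left i => rw [Fin.append_left, Fin.append_left]
    | right i => rw [Fin.append_right, Fin.append_right]
  rw [show ιMulti F a (fun i => BB (c i)) * ιMulti F b (fun i => BB (c' i))
      = ιMulti F (a + b) (fun i => BB (Fin.append c c' i)) by
    rw [happ, aux_iMulti_append]]
  by_cases hinj : Function.Injective (Fin.append c c')
  · refine aux_wedge_inj_mem BB _ hinj _ ?_
    show ((Finset.image (Fin.append c c') Finset.univ).filter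
      (fun j : Fin m => p ≤ (j : ℕ))).card = b
    have hc'inj : Function.Injective c' := by
      intro i j h
      have h3 : Fin.append c c' (Fin.natAdd a i) = Fin.append c c' (Fin.natAdd a j) := by
        rw [Fin.append_right, Fin.append_right]; exact h
      have h4 := congrArg Fin.val (hinj h3)
      have h5 : (Fin.natAdd a i).val = a + i.val := rfl
      have h6 : (Fin.natAdd a j).val = a + j.val := rfl
      rw [h5, h6] at h4
      exact Fin.ext (by omega)
    have hfe : (Finset.image (Fin.append c c') Finset.univ).filter
        (fun j : Fin m => p ≤ (j : ℕ)) = Finset.image c' Finset.univ := by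
      ext j
      simp only [Finset.mem_filter, Finset.mem_image, Finset.mem_univ, true_and]
      constructor
      · rintro ⟨⟨i, hi⟩, hpj⟩
        revert hi
        refine Fin.addCases (fun i => ?_) (fun i => ?_) i
        · intro hi
          rw [Fin.append_left] at hi
          exfalso
          have hlt : ((c i : Fin m) : ℕ) < p := hcI i
          rw [hi] at hlt
          omega
        · intro hi
          rw [Fin.append_right] at hi
          exact ⟨i, hi⟩
      · rintro ⟨i, rfl⟩
        refine ⟨⟨Fin.natAdd a i, by rw [Fin.append_right]⟩, ?_⟩
        exact Nat.le_of_not_lt (hcI' i)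
    rw [hfe, Finset.card_image_of_injective _ hc'inj, Finset.card_univ, Fintype.card_fin]
  · obtain ⟨i, j, hij, hne⟩ := Function.not_injective_iff.mp hinj
    have h0 : ιMulti F (a + b) (fun i => BB (Fin.append c c' i)) = 0 :=
      AlternatingMap.map_eq_zero_of_eq _ _ (congrArg BB hij) hne
    rw [h0]
    exact Submodule.zero_mem _

end IndepPart

end Aux7

open PolarGrass Module in
/-- with a fixed Witt decomposition `V = V̄ ⊕ R`, `V̄ = V₁ ⊕ ⋯ ⊕ Vₙ ⊕ V₀`,
for `1 ≤ k ≤ n` the Grassmann image decomposes as the direct sum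
`⊕_{i=0}^{min(d,k)} Ḡ_{k-i} ∧ ⋀^i R`. -/
theorem stmt7 (F : Type*) [Field F] (V : Type*) [AddCommGroup V] [Module F V]
    [FiniteDimensional F V]
    (Orth : V → V → F) (sv : V → Prop) (Sing : Submodule F V → Prop) (RadSet : Set V)
    (hcase :
      (∃ (σ : F ≃+* F) (h : V → V → F), (∀ a, σ (σ a) = a) ∧ IsHermitianForm F V σ h ∧
        Orth = h ∧ sv = (fun v => h v v = 0) ∧ Sing = TotSingB F V h ∧
        RadSet = radSetB F V h) ∨
      (∃ s : V → V → F, IsAlternatingForm F V s ∧ Orth = s ∧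
        sv = (fun v => s v v = 0) ∧ Sing = TotSingB F V s ∧ RadSet = radSetB F V s) ∨
      (∃ q : QuadraticForm F V, Orth = polarF F V q ∧ sv = (fun v => q v = 0) ∧
        Sing = TotSingQ F V q ∧ RadSet = radSetQ F V q))
    (n d₀ d : ℕ) (hn : 2 ≤ n)
    (W : Fin n → Submodule F V) (W₀ R : Submodule F V)
    (hdec : IsWittDecomp F V Orth sv RadSet n d₀ d W W₀ R) :
    ∀ k : ℕ, 1 ≤ k → k ≤ n →
      grassmann F V Sing k
        = (⨆ i : Fin (min d k + 1),
            gbar F V Sing ((⨆ j, W j) ⊔ W₀) (k - (i : ℕ)) * extPowOf F V R (i : ℕ)) ∧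
      iSupIndep (fun i : Fin (min d k + 1) =>
        gbar F V Sing ((⨆ j, W j) ⊔ W₀) (k - (i : ℕ)) * extPowOf F V R (i : ℕ))    := by
  intro k hk1 hkn
  classical
  have hc : Hcase Orth sv Sing RadSet := hcase
  obtain ⟨hint, -, -, -, -, hRrad, hRd⟩ := hdec
  set UU : Submodule F V := (⨆ j, W j) ⊔ W₀ with hUUdef
  -- the two pieces fill V
  have htop : UU ⊔ R = ⊤ := by
    have h1 := hint.submodule_iSup_eq_top
    rw [iSup_sum] at h1
    have h2 : (⨆ i : Fin 2, Sum.elim W ![W₀, R] (Sum.inr i)) = W₀ ⊔ R := by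
      apply le_antisymm
      · refine iSup_le fun i => ?_
        fin_cases i
        · exact le_sup_left
        · exact le_sup_right
      · exact sup_le (le_iSup_of_le 0 le_rfl) (le_iSup_of_le 1 le_rfl)
    rw [h2] at h1
    rw [hUUdef, sup_assoc]
    exact h1
  have hdisjUR : Disjoint UU R := by
    have hind := hint.submodule_iSupIndep
    have h3 := (iSupIndep_def.mp hind) (Sum.inr 1)
    have hU_le : UU ≤ ⨆ (j) (_ : j ≠ Sum.inr 1), Sum.elim W ![W₀, R] j := by
      rw [hUUdef]
      refine sup_le ?_ ?_
      · refine iSup_le fun i => ?_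
        exact le_iSup_of_le (Sum.inl i) (le_iSup_of_le (by simp) le_rfl)
      · exact le_iSup_of_le (Sum.inr 0) (le_iSup_of_le (by simp) le_rfl)
    exact (Disjoint.mono_right hU_le h3).symm
  -- basis adapted to the decomposition
  set p : ℕ := finrank F UU with hpdef
  let bU : Basis (Fin p) F UU := Module.finBasis F UU
  let bR : Basis (Fin d) F R := (Module.finBasis F R).reindex (finCongr (by rw [hRd]))
  let bUc : Fin p → V := fun i => (bU i : V)
  let bRc : Fin d → V := fun i => (bR i : V)
  have hspanU : Submodule.span F (Set.range bUc) = UU := by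
    have h := congrArg (Submodule.map UU.subtype) bU.span_eq
    rw [Submodule.map_span, Submodule.map_top, Submodule.range_subtype] at h
    rw [← h]
    congr 1
    exact (Set.range_comp _ _)
  have hspanR : Submodule.span F (Set.range bRc) = R := by
    have h := congrArg (Submodule.map R.subtype) bR.span_eq
    rw [Submodule.map_span, Submodule.map_top, Submodule.range_subtype] at h
    rw [← h]
    congr 1
    exact (Set.range_comp _ _)
  have hindU : LinearIndependent F bUc :=
    bU.linearIndependent.map' UU.subtype UU.ker_subtype
  have hindR : LinearIndependent F bRc :=
    bR.linearIndependent.map' R.subtype R.ker_subtype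
  let e : Fin (p + d) → V := fun j => Sum.elim bUc bRc (finSumFinEquiv.symm j)
  have hinde : LinearIndependent F e := by
    have hsum : LinearIndependent F (Sum.elim bUc bRc) := by
      refine LinearIndependent.sum_type hindU hindR ?_
      rw [hspanU, hspanR]
      exact hdisjUR
    exact hsum.comp _ finSumFinEquiv.symm.injective
  have hrangee : Set.range e = Set.range (Sum.elim bUc bRc) :=
    Function.Surjective.range_comp finSumFinEquiv.symm.surjective _
  have hspane : ⊤ ≤ Submodule.span F (Set.range e) := by
    rw [hrangee, Set.Sum.elim_range, Submodule.span_union, hspanU, hspanR, htop]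
  let BB : Basis (Fin (p + d)) F V := Basis.mk hinde hspane
  have hBBapply : ∀ j, BB j = e j := fun j => Basis.mk_apply _ _ j
  -- support conditions
  have hUspan : UU = Submodule.span F (BB '' {j : Fin (p + d) | (j : ℕ) < p}) := by
    rw [← hspanU]
    congr 1
    ext x
    constructor
    · rintro ⟨i, rfl⟩
      refine ⟨Fin.castAdd d i, ?_, ?_⟩
      · show ((Fin.castAdd d i : Fin (p + d)) : ℕ) < p
        simpa using i.isLt
      · rw [hBBapply]
        show Sum.elim bUc bRc (finSumFinEquiv.symm (Fin.castAdd d i)) = bUc i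
        rw [finSumFinEquiv_symm_apply_castAdd]
        rfl
    · rintro ⟨j, hj, rfl⟩
      have hj' : (j : ℕ) < p := hj
      refine ⟨⟨(j : ℕ), hj'⟩, ?_⟩
      rw [hBBapply]
      have hje : j = Fin.castAdd d ⟨(j : ℕ), hj'⟩ := Fin.ext rfl
      calc bUc ⟨(j : ℕ), hj'⟩
          = e (Fin.castAdd d ⟨(j : ℕ), hj'⟩) := by
            show bUc _ = Sum.elim bUc bRc (finSumFinEquiv.symm (Fin.castAdd d ⟨(j : ℕ), hj'⟩))
            rw [finSumFinEquiv_symm_apply_castAdd]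
            rfl
        _ = e j := by rw [← hje]
  have hRspan : (R : Submodule F V) = Submodule.span F
      (BB '' {j : Fin (p + d) | ¬ (j : ℕ) < p}) := by
    rw [← hspanR]
    congr 1
    ext x
    constructor
    · rintro ⟨i, rfl⟩
      refine ⟨Fin.natAdd p i, ?_, ?_⟩
      · show ¬ ((Fin.natAdd p i : Fin (p + d)) : ℕ) < p
        have : ((Fin.natAdd p i : Fin (p + d)) : ℕ) = p + (i : ℕ) := rfl
        omega
      · rw [hBBapply]
        show Sum.elim bUc bRc (finSumFinEquiv.symm (Fin.natAdd p i)) = bRc i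
        rw [finSumFinEquiv_symm_apply_natAdd]
        rfl
    · rintro ⟨j, hj, rfl⟩
      have hj' : p ≤ (j : ℕ) := Nat.le_of_not_lt hj
      have hjd : (j : ℕ) - p < d := by have := j.isLt; omega
      refine ⟨⟨(j : ℕ) - p, hjd⟩, ?_⟩
      rw [hBBapply]
      have hje : j = Fin.natAdd p ⟨(j : ℕ) - p, hjd⟩ := Fin.ext (by
        show (j : ℕ) = p + ((j : ℕ) - p)
        omega)
      calc bRc ⟨(j : ℕ) - p, hjd⟩
          = e (Fin.natAdd p ⟨(j : ℕ) - p, hjd⟩) := by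
            show bRc _ = Sum.elim bUc bRc (finSumFinEquiv.symm (Fin.natAdd p ⟨(j : ℕ) - p, hjd⟩))
            rw [finSumFinEquiv_symm_apply_natAdd]
            rfl
        _ = e j := by rw [← hje]
  have hUUsupp : ∀ x ∈ UU, ∀ j : Fin (p + d), ¬ ((j : ℕ) < p) → BB.repr x j = 0 := by
    intro x hx j hj
    have hsupp := (BB.mem_span_image).1 (by rw [← hUspan]; exact hx)
    by_contra hne
    exact hj (hsupp (Finsupp.mem_support_iff.2 hne))
  have hRsupp : ∀ x ∈ R, ∀ j : Fin (p + d), ((j : ℕ) < p) → BB.repr x j = 0 := by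
    intro x hx j hj
    have hsupp := (BB.mem_span_image).1 (by rw [← hRspan]; exact hx)
    by_contra hne
    exact (hsupp (Finsupp.mem_support_iff.2 hne)) hj
  constructor
  · apply le_antisymm
    · rw [grassmann, grassmannIn]
      refine Submodule.span_le.2 ?_
      rintro x ⟨v, -, hvind, hvsing, rfl⟩
      have hdecomp : ∀ t, ∃ ur : V × V, ur.1 ∈ UU ∧ ur.2 ∈ R ∧ v t = ur.1 + ur.2 := by
        intro t
        have hvt : v t ∈ UU ⊔ R := by rw [htop]; trivial
        obtain ⟨u, hu, r, hr, h⟩ := Submodule.mem_sup.1 hvt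
        exact ⟨(u, r), hu, hr, h.symm⟩
      choose urf huf hrf hvf using hdecomp
      set uf : Fin k → V := fun t => (urf t).1 with hufdef
      set rf : Fin k → V := fun t => (urf t).2 with hrfdef
      have hrfR : ∀ t, rf t ∈ RadSet := fun t => hRrad ▸ hrf t
      have hTsing : Sing (Submodule.span F (Set.range uf)) :=
        aux_sing_proj hc v uf rf hvsing hrfR hvf
      have hTle : Submodule.span F (Set.range uf) ≤ UU :=
        Submodule.span_le.2 (Set.range_subset_iff.2 huf)
      have hexp := aux_expand (M := Submodule.span F (Set.range uf)) (N := R) k v uf rf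
        (fun t => Submodule.subset_span (Set.mem_range_self t)) hrf hvf
      have hle : (⨆ i : Fin (k + 1),
          extPowOf F V (Submodule.span F (Set.range uf)) (k - (i : ℕ)) * extPowOf F V R (i : ℕ))
          ≤ (⨆ i : Fin (min d k + 1),
            gbar F V Sing UU (k - (i : ℕ)) * extPowOf F V R (i : ℕ)) := by
        refine iSup_le fun i => ?_
        by_cases hi : (i : ℕ) ≤ min d k
        · refine le_trans
            (mul_le_mul' (aux_extPow_le_gbar hc hTle hTsing _) le_rfl) ?_
          exact le_iSup_of_le ⟨(i : ℕ), by omega⟩ le_rfl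
        · have hdi : finrank F R < (i : ℕ) := by
            rw [hRd]
            have := i.isLt
            omega
          rw [aux_extPow_eq_bot hdi, Submodule.mul_bot]
          exact bot_le
      exact hle hexp
    · refine iSup_le fun i => ?_
      have hik : (i : ℕ) ≤ k := by
        have := i.isLt
        omega
      exact aux_comp_le_grassmann hc hRrad (by omega : (k - (i : ℕ)) + (i : ℕ) = k)
  · have hwindep := aux_wedge_indep BB k
    have hpart := aux_indep_span hwindep
      (fun i : Fin (min d k + 1) =>
        {s : {s : Finset (Fin (p + d)) // s.card = k} |
          (s.1.filter (fun j : Fin (p + d) => p ≤ (j : ℕ))).card = (i : ℕ)})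
      (by
        intro i j hij
        rw [Function.onFun, Set.disjoint_left]
        rintro s hs1 hs2
        exact hij (Fin.val_injective (by rw [← hs1, ← hs2])))
    refine iSupIndep.mono hpart ?_
    intro i
    have hik : (i : ℕ) ≤ k := by
      have := i.isLt
      omega
    refine le_trans (mul_le_mul' (aux_gbar_le_extPow _ _) le_rfl) ?_
    exact aux_prod_le_span BB hUUsupp hRsupp (by omega : (k - (i : ℕ)) + (i : ℕ) = k)
end
end

section
/- Suppose h is non-degenerate with N = 2n and Witt index n ≥ 2 (anisotropic defect 0), i.e., V is an h-orthogonal direct sum of n hyperbolic planes. Then for every integer k with 1 ≤ k ≤ n, the Grassmann image G_k(h) equals all of ⋀^k V. -/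
noncomputable section

namespace PG
open PolarGrass
variable {F : Type*} [Field F] {V : Type*} [AddCommGroup V] [Module F V]
variable {σ : F ≃+* F} {h : V → V → F}

lemma h_smull (hh : IsHermitianForm F V σ h) (a : F) (x y : V) : h (a • x) y = σ a * h x y := by
  have := hh.2.2.1 a 1 x y; simpa using this

lemma h_smulr (hh : IsHermitianForm F V σ h) (a : F) (x y : V) : h x (a • y) = a * h x y := by
  have := hh.2.2.1 1 a x y; simpa using this

lemma h_zerol (hh : IsHermitianForm F V σ h) (y : V) : h 0 y = 0 := by
  have := hh.1 0 0 y
  rw [add_zero] at this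
  exact (left_eq_add.mp this)

lemma h_zeror (hh : IsHermitianForm F V σ h) (x : V) : h x 0 = 0 := by
  have := hh.2.1 x 0 0
  rw [add_zero] at this
  exact (left_eq_add.mp this)

lemma h_symm_zero (hh : IsHermitianForm F V σ h) {x y : V} (hxy : h x y = 0) : h y x = 0 := by
  rw [hh.2.2.2 x y, hxy, map_zero]

lemma h_expand (hh : IsHermitianForm F V σ h) (a b : F) (x y z w : V) :
    h (x + a • y) (z + b • w)
      = h x z + b * h x w + σ a * h y z + σ a * (b * h y w) := by
  simp only [hh.1, hh.2.1, h_smull hh, h_smulr hh]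
  ring

lemma orth_span (hh : IsHermitianForm F V σ h) {X Y : Set V}
    (hXY : ∀ x ∈ X, ∀ y ∈ Y, h x y = 0) :
    ∀ x ∈ Submodule.span F X, ∀ y ∈ Submodule.span F Y, h x y = 0 := by
  have step1 : ∀ y ∈ Y, ∀ x ∈ Submodule.span F X, h x y = 0 := by
    intro y hy x hx
    induction hx using Submodule.span_induction with
    | mem z hz => exact hXY z hz y hy
    | zero => exact h_zerol hh y
    | add u v _ _ hu hv => rw [hh.1, hu, hv, add_zero]
    | smul a u _ hu => rw [h_smull hh, hu, mul_zero]
  intro x hx y hy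
  induction hy using Submodule.span_induction with
  | mem z hz => exact step1 z hz x hx
  | zero => exact h_zeror hh x
  | add u v _ _ hu hv => rw [hh.2.1, hu, hv, add_zero]
  | smul a u _ hu => rw [h_smulr hh, hu, mul_zero]

lemma multilinear_mem_span {k : ℕ} {E : Type*} [AddCommGroup E] [Module F E]
    (f : MultilinearMap F (fun _ : Fin k => V) E) (S : Set V) (T : Submodule F E)
    (hgen : ∀ v : Fin k → V, (∀ i, v i ∈ S) → f v ∈ T) :
    ∀ v : Fin k → V, (∀ i, v i ∈ Submodule.span F S) → f v ∈ T := by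
  suffices H : ∀ j : ℕ, ∀ v : Fin k → V, (∀ i : Fin k, (j : ℕ) ≤ (i : ℕ) → v i ∈ S) →
      (∀ i, v i ∈ Submodule.span F S) → f v ∈ T by
    intro v hv
    exact H k v (fun i hi => absurd i.isLt (by omega)) hv
  intro j
  induction j with
  | zero => intro v hv _; exact hgen v (fun i => hv i (Nat.zero_le _))
  | succ j ih =>
    intro v hv hv'
    by_cases hjk : j < k
    · set i0 : Fin k := ⟨j, hjk⟩ with hi0
      have key : ∀ x ∈ Submodule.span F S, f (Function.update v i0 x) ∈ T := by
        intro x hx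
        induction hx using Submodule.span_induction with
        | mem z hz =>
          apply ih
          · intro i hi
            rcases eq_or_ne i i0 with rfl | hne
            · rwa [Function.update_self]
            · rw [Function.update_of_ne hne]
              apply hv
              have : (i : ℕ) ≠ j := fun hij => hne (Fin.ext (by simpa [hi0] using hij))
              omega
          · intro i
            rcases eq_or_ne i i0 with rfl | hne
            · rw [Function.update_self]; exact Submodule.subset_span hz
            · rw [Function.update_of_ne hne]; exact hv' i
        | zero =>
          rw [f.map_update_zero]
          exact Submodule.zero_mem T
        | add p q _ _ hp hq =>
          rw [f.map_update_add]
          exact Submodule.add_mem T hp hq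
        | smul a p _ hp =>
          rw [f.map_update_smul]
          exact Submodule.smul_mem T a hp
      have := key (v i0) (hv' i0)
      rwa [Function.update_eq_self] at this
    · refine ih v (fun i hi => absurd i.isLt (by omega)) hv'

/-- The span of the planes indexed by `S`. -/
def Wsup {n : ℕ} (W : Fin n → Submodule F V) (S : Finset (Fin n)) : Submodule F V :=
  Submodule.span F (⋃ i ∈ S, (W i : Set V))

lemma mem_Wsup {n : ℕ} {W : Fin n → Submodule F V} {S : Finset (Fin n)} {i : Fin n}
    (hi : i ∈ S) {x : V} (hx : x ∈ W i) : x ∈ Wsup W S :=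
  Submodule.subset_span (Set.mem_biUnion hi hx)

lemma Wsup_mono {n : ℕ} {W : Fin n → Submodule F V} {S S' : Finset (Fin n)} (hS : S ⊆ S') :
    Wsup W S ≤ Wsup W S' :=
  Submodule.span_mono (Set.biUnion_subset_biUnion_left hS)

lemma Wsup_orth (hh : IsHermitianForm F V σ h) {n : ℕ} {W : Fin n → Submodule F V}
    (horth : ∀ i j, i ≠ j → ∀ x ∈ W i, ∀ y ∈ W j, h x y = 0)
    {S : Finset (Fin n)} {j : Fin n} (hj : j ∉ S) :
    ∀ y ∈ W j, ∀ x ∈ Wsup W S, h y x = 0 ∧ h x y = 0 := by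
  intro y hy x hx
  have key : h y x = 0 := by
    refine orth_span hh (X := (W j : Set V)) (Y := ⋃ i ∈ S, (W i : Set V)) ?_ y ?_ x hx
    · intro a ha b hb
      rw [Set.mem_iUnion₂] at hb
      obtain ⟨i, hiS, hbi⟩ := hb
      exact horth j i (fun hji => hj (hji ▸ hiS)) a ha b hbi
    · rw [Submodule.span_eq]; exact hy
  exact ⟨key, h_symm_zero hh key⟩

set_option maxHeartbeats 1000000 in
lemma main (hh : IsHermitianForm F V σ h)
    (τ : F) (hτ : σ τ ≠ τ)
    {n : ℕ} (W : Fin n → Submodule F V) (e f : Fin n → V)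
    (he : ∀ i, e i ∈ W i) (hf : ∀ i, f i ∈ W i)
    (hee : ∀ i, h (e i) (e i) = 0) (hff : ∀ i, h (f i) (f i) = 0)
    (hef : ∀ i, h (e i) (f i) = 1)
    (horth : ∀ i j, i ≠ j → ∀ x ∈ W i, ∀ y ∈ W j, h x y = 0)
    (k : ℕ) :
    ∀ m : ℕ, ∀ (v : Fin k → V) (S : Finset (Fin n)) (pr : Fin m → Fin k × Fin k),
      (∀ t, v t ∈ Wsup W S) →
      S.card + m ≤ n →
      (∀ p, (pr p).1 ≠ (pr p).2) →
      (∀ p q, p ≠ q → (pr p).1 ≠ (pr q).1 ∧ (pr p).1 ≠ (pr q).2 ∧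
        (pr p).2 ≠ (pr q).1 ∧ (pr p).2 ≠ (pr q).2) →
      (∀ s t : Fin k, (∀ p, pr p ≠ (s, t) ∧ pr p ≠ (t, s)) → h (v s) (v t) = 0) →
      ExteriorAlgebra.ιMulti F k v ∈ grassmann F V (TotSingB F V h) k := by
  intro m
  induction m with
  | zero =>
    intro v S pr hvS hcard hne hdisj horthv
    by_cases hind : LinearIndependent F v
    · refine Submodule.subset_span ?_
      refine ⟨v, fun t => trivial, hind, ?_, rfl⟩
      intro x hx y hy
      refine orth_span hh (X := Set.range v) (Y := Set.range v) ?_ x hx y hy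
      rintro a ⟨s, rfl⟩ b ⟨t, rfl⟩
      exact horthv s t (fun p => p.elim0)
    · rw [(ExteriorAlgebra.ιMulti F k (M := V)).map_linearDependent v hind]
      exact Submodule.zero_mem _
  | succ m ih =>
    intro v S pr hvS hcard hne hdisj horthv
    classical
    -- the distinguished pair
    set s₀ : Fin k := (pr (Fin.last m)).1 with hs₀
    set s₁ : Fin k := (pr (Fin.last m)).2 with hs₁
    have hs01 : s₀ ≠ s₁ := hne (Fin.last m)
    set pr' : Fin m → Fin k × Fin k := pr ∘ Fin.castSucc with hpr'
    -- a spare plane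
    have hcard' : S.card < n := by omega
    obtain ⟨j, hj⟩ : ∃ j : Fin n, j ∉ S := by
      by_contra hcon
      push_neg at hcon
      have : (Finset.univ : Finset (Fin n)) ⊆ S := fun i _ => hcon i
      have := Finset.card_le_card this
      simp [Finset.card_univ] at this
      omega
    set γ : F := h (v s₀) (v s₁) with hγ
    -- basic orthogonality facts with the spare plane
    have hWj := Wsup_orth hh horth (S := S) hj
    have hte : ∀ t, h (v t) (e j) = 0 := fun t => (hWj (e j) (he j) (v t) (hvS t)).2
    have htf : ∀ t, h (v t) (f j) = 0 := fun t => (hWj (f j) (hf j) (v t) (hvS t)).2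
    have het : ∀ t, h (e j) (v t) = 0 := fun t => (hWj (e j) (he j) (v t) (hvS t)).1
    have hft : ∀ t, h (f j) (v t) = 0 := fun t => (hWj (f j) (hf j) (v t) (hvS t)).1
    have hfe : h (f j) (e j) = 1 := by rw [hh.2.2.2, hef j, map_one]
    -- original orthogonality in convenient form
    have horig : ∀ s t : Fin k, (∀ q : Fin m, pr' q ≠ (s, t) ∧ pr' q ≠ (t, s)) →
        (s₀, s₁) ≠ (s, t) → (s₀, s₁) ≠ (t, s) → h (v s) (v t) = 0 := by
      intro s t hq h1 h2
      refine horthv s t ?_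
      intro p
      induction p using Fin.lastCases with
      | last => exact ⟨h1, h2⟩
      | cast q => exact hq q
    have hsing : ∀ t, h (v t) (v t) = 0 := by
      intro t
      refine horthv t t ?_
      intro p
      constructor <;> (intro hpp; exact hne p (by rw [hpp]))
    -- tuples
    set Y₁ : Fin k → V := Function.update v s₁ (e j) with hY₁
    set Y₂ : Fin k → V := Function.update v s₀ (f j) with hY₂
    set Z : Fin k → V := Function.update Y₁ s₀ (f j) with hZ
    set μ : (Fin k → V) → ExteriorAlgebra F V := ⇑(ExteriorAlgebra.ιMulti F k (M := V)) with hμ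
    set G : Submodule F (ExteriorAlgebra F V) := grassmann F V (TotSingB F V h) k with hG
    set S' : Finset (Fin n) := insert j S with hS'
    have hSS' : S ⊆ S' := Finset.subset_insert j S
    have hjS' : j ∈ S' := Finset.mem_insert_self j S
    have hcard'' : S'.card + m ≤ n := by
      have := Finset.card_insert_le j S
      rw [← hS'] at this
      omega
    have hne' : ∀ p : Fin m, (pr' p).1 ≠ (pr' p).2 := fun p => hne _
    have hdisj' : ∀ p q : Fin m, p ≠ q → (pr' p).1 ≠ (pr' q).1 ∧ (pr' p).1 ≠ (pr' q).2 ∧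
        (pr' p).2 ≠ (pr' q).1 ∧ (pr' p).2 ≠ (pr' q).2 := by
      intro p q hpq
      exact hdisj _ _ (fun hc => hpq (Fin.castSucc_injective m hc))
    -- components of the last pair never occur in pr'
    have hlast_ne : ∀ q : Fin m, (pr' q).1 ≠ s₀ ∧ (pr' q).1 ≠ s₁ ∧
        (pr' q).2 ≠ s₀ ∧ (pr' q).2 ≠ s₁ := by
      intro q
      have := hdisj (Fin.castSucc q) (Fin.last m) (Fin.castSucc_lt_last q).ne
      exact ⟨this.1, this.2.1, this.2.2.1, this.2.2.2⟩
    -- membership of updates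
    have hY₁S : ∀ t, Y₁ t ∈ Wsup W S' := by
      intro t
      rcases eq_or_ne t s₁ with rfl | hts
      · rw [hY₁, Function.update_self]; exact mem_Wsup hjS' (he j)
      · rw [hY₁, Function.update_of_ne hts]; exact Wsup_mono hSS' (hvS t)
    have hY₂S : ∀ t, Y₂ t ∈ Wsup W S' := by
      intro t
      rcases eq_or_ne t s₀ with rfl | hts
      · rw [hY₂, Function.update_self]; exact mem_Wsup hjS' (hf j)
      · rw [hY₂, Function.update_of_ne hts]; exact Wsup_mono hSS' (hvS t)
    -- Y₁ and Y₂ are in G by the inductive hypothesis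
    have hY₁G : μ Y₁ ∈ G := by
      refine ih Y₁ S' pr' hY₁S hcard'' hne' hdisj' ?_
      intro s t hst
      rcases eq_or_ne s s₁ with rfl | hss
      · rcases eq_or_ne t s₁ with rfl | hts
        · rw [hY₁, Function.update_self]; exact hee j
        · rw [hY₁, Function.update_self, Function.update_of_ne hts]; exact het t
      · rcases eq_or_ne t s₁ with rfl | hts
        · rw [hY₁, Function.update_self, Function.update_of_ne hss]; exact hte s
        · rw [hY₁, Function.update_of_ne hss, Function.update_of_ne hts]
          refine horig s t hst ?_ ?_
          · intro hc; injection hc with h1 h2; exact hts h2.symm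
          · intro hc; injection hc with h1 h2; exact hss h2.symm
    have hY₂G : μ Y₂ ∈ G := by
      refine ih Y₂ S' pr' hY₂S hcard'' hne' hdisj' ?_
      intro s t hst
      rcases eq_or_ne s s₀ with rfl | hss
      · rcases eq_or_ne t s₀ with rfl | hts
        · rw [hY₂, Function.update_self]; exact hff j
        · rw [hY₂, Function.update_self, Function.update_of_ne hts]; exact hft t
      · rcases eq_or_ne t s₀ with rfl | hts
        · rw [hY₂, Function.update_self, Function.update_of_ne hss]; exact htf s
        · rw [hY₂, Function.update_of_ne hss, Function.update_of_ne hts]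
          refine horig s t hst ?_ ?_
          · intro hc; injection hc with h1 h2; exact hss h1.symm
          · intro hc; injection hc with h1 h2; exact hts h1.symm
    -- the key relation, for every nonzero parameter a
    have key : ∀ a : F, a ≠ 0 →
        μ v + (-(σ a)⁻¹ * γ * a) • μ Z ∈ G := by
      intro a ha
      have hσa : σ a ≠ 0 := by
        intro hc
        exact ha (by simpa using σ.injective (hc.trans (map_zero σ).symm))
      set b : F := -(σ a)⁻¹ * γ with hb
      set u : V := v s₀ + a • f j with hu
      set w : V := v s₁ + b • e j with hw
      set va : Fin k → V := Function.update (Function.update v s₀ u) s₁ w with hva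
      -- va is in G by the inductive hypothesis
      have hvaG : μ va ∈ G := by
        have hvaS : ∀ t, va t ∈ Wsup W S' := by
          intro t
          rcases eq_or_ne t s₁ with rfl | ht1
          · rw [hva, Function.update_self]
            exact Submodule.add_mem _ (Wsup_mono hSS' (hvS s₁))
              (Submodule.smul_mem _ _ (mem_Wsup hjS' (he j)))
          · rw [hva, Function.update_of_ne ht1]
            rcases eq_or_ne t s₀ with rfl | ht0
            · rw [Function.update_self]
              exact Submodule.add_mem _ (Wsup_mono hSS' (hvS s₀))
                (Submodule.smul_mem _ _ (mem_Wsup hjS' (hf j)))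
            · rw [Function.update_of_ne ht0]
              exact Wsup_mono hSS' (hvS t)
        refine ih va S' pr' hvaS hcard'' hne' hdisj' ?_
        -- values of va
        have hva0 : va s₀ = u := by
          rw [hva, Function.update_of_ne hs01, Function.update_self]
        have hva1 : va s₁ = w := by rw [hva, Function.update_self]
        have hvat : ∀ t, t ≠ s₀ → t ≠ s₁ → va t = v t := by
          intro t ht0 ht1
          rw [hva, Function.update_of_ne ht1, Function.update_of_ne ht0]
        -- h-values involving u and w
        have huu : h u u = 0 := by
          rw [hu, h_expand hh]
          rw [hsing s₀, htf s₀, hft s₀, hff j]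
          ring
        have hww : h w w = 0 := by
          rw [hw, h_expand hh]
          rw [hsing s₁, hte s₁, het s₁, hee j]
          ring
        have huw : h u w = 0 := by
          rw [hu, hw, h_expand hh]
          rw [hte s₀, hft s₁, hfe, hb]
          field_simp
          rw [← hγ]
          ring
        have hwu : h w u = 0 := h_symm_zero hh huw
        have hut : ∀ t, t ≠ s₀ → t ≠ s₁ →
            (∀ q : Fin m, pr' q ≠ (s₀, t) ∧ pr' q ≠ (t, s₀)) → h u (v t) = 0 := by
          intro t ht0 ht1 hq
          rw [hu, hh.1, h_smull hh, hft t, mul_zero, add_zero]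
          refine horig s₀ t hq ?_ ?_
          · intro hc; injection hc with h1 h2; exact ht1 h2.symm
          · intro hc; injection hc with h1 h2; exact ht0 h1.symm
        have hwt : ∀ t, t ≠ s₀ → t ≠ s₁ →
            (∀ q : Fin m, pr' q ≠ (s₁, t) ∧ pr' q ≠ (t, s₁)) → h w (v t) = 0 := by
          intro t ht0 ht1 hq
          rw [hw, hh.1, h_smull hh, het t, mul_zero, add_zero]
          refine horig s₁ t hq ?_ ?_
          · intro hc; injection hc with h1 h2; exact hs01 h1
          · intro hc; injection hc with h1 h2; exact ht0 h1.symm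
        intro s t hst
        rcases eq_or_ne s s₀ with rfl | hss0
        · rcases eq_or_ne t s₀ with rfl | hts0
          · rw [hva0]; exact huu
          · rcases eq_or_ne t s₁ with rfl | hts1
            · rw [hva0, hva1]; exact huw
            · rw [hva0, hvat t hts0 hts1]
              exact hut t hts0 hts1 hst
        · rcases eq_or_ne s s₁ with rfl | hss1
          · rcases eq_or_ne t s₀ with rfl | hts0
            · rw [hva1, hva0]; exact hwu
            · rcases eq_or_ne t s₁ with rfl | hts1
              · rw [hva1]; exact hww
              · rw [hva1, hvat t hts0 hts1]
                refine hwt t hts0 hts1 ?_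
                intro q
                exact ⟨(hst q).1, (hst q).2⟩
          · rcases eq_or_ne t s₀ with rfl | hts0
            · rw [hva0, hvat s hss0 hss1]
              refine h_symm_zero hh (hut s hss0 hss1 ?_)
              intro q
              exact ⟨(hst q).2, (hst q).1⟩
            · rcases eq_or_ne t s₁ with rfl | hts1
              · rw [hva1, hvat s hss0 hss1]
                refine h_symm_zero hh (hwt s hss0 hss1 ?_)
                intro q
                exact ⟨(hst q).2, (hst q).1⟩
              · rw [hvat s hss0 hss1, hvat t hts0 hts1]
                refine horig s t hst ?_ ?_
                · intro hc; injection hc with h1 h2; exact hss0 h1.symm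
                · intro hc; injection hc with h1 h2; exact hts0 h1.symm
      -- multilinear expansion of μ va
      have hexp : μ va = μ v + a • μ Y₂ + b • (μ Y₁ + a • μ Z) := by
        have e1 : μ va = μ (Function.update v s₀ u) +
            b • μ (Function.update (Function.update v s₀ u) s₁ (e j)) := by
          rw [hva, hw]
          have : v s₁ = (Function.update v s₀ u) s₁ := (Function.update_of_ne hs01.symm u v).symm
          rw [this]
          simp only [hμ]
          rw [(ExteriorAlgebra.ιMulti F k (M := V)).map_update_add,
            (ExteriorAlgebra.ιMulti F k (M := V)).map_update_smul, Function.update_eq_self]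
        have e2 : μ (Function.update v s₀ u) = μ v + a • μ Y₂ := by
          rw [hu]
          simp only [hμ]
          rw [(ExteriorAlgebra.ιMulti F k (M := V)).map_update_add,
            (ExteriorAlgebra.ιMulti F k (M := V)).map_update_smul, Function.update_eq_self, hY₂]
        have e3 : μ (Function.update (Function.update v s₀ u) s₁ (e j)) = μ Y₁ + a • μ Z := by
          rw [Function.update_comm hs01 u (e j) v, hu]
          have : v s₀ = (Function.update v s₁ (e j)) s₀ :=
            (Function.update_of_ne hs01 (e j) v).symm
          rw [this]
          simp only [hμ]
          rw [(ExteriorAlgebra.ιMulti F k (M := V)).map_update_add,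
            (ExteriorAlgebra.ιMulti F k (M := V)).map_update_smul, Function.update_eq_self, hY₁, hZ]
        rw [e1, e2, e3]
      have : μ v + (-(σ a)⁻¹ * γ * a) • μ Z
          = μ va - a • μ Y₂ - b • μ Y₁ := by
        rw [hexp, hb]
        module
      rw [this]
      exact Submodule.sub_mem _ (Submodule.sub_mem _ hvaG
        (Submodule.smul_mem _ _ hY₂G)) (Submodule.smul_mem _ _ hY₁G)
    -- eliminate μ Z using two parameters
    have hτ0 : τ ≠ 0 := by
      intro hc; rw [hc, map_zero] at hτ; exact hτ rfl
    have hστ0 : σ τ ≠ 0 := by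
      intro hc
      exact hτ0 (by simpa using σ.injective (hc.trans (map_zero σ).symm))
    have r1 := key 1 one_ne_zero
    have r2 := key τ hτ0
    rw [show -(σ 1)⁻¹ * γ * 1 = -γ by rw [map_one]; ring] at r1
    set c : F := (σ τ)⁻¹ * τ with hc
    have hc1 : c ≠ 1 := by
      intro hcon
      rw [hc] at hcon
      apply hτ
      field_simp at hcon
      exact hcon.symm
    have hcoef : -(σ τ)⁻¹ * γ * τ = c * -γ := by rw [hc]; ring
    rw [hcoef] at r2
    have hdiff : (c - 1) • μ v
        = c • (μ v + (-γ) • μ Z) - (μ v + (c * -γ) • μ Z) := by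
      module
    have hmem : (c - 1) • μ v ∈ G := by
      rw [hdiff]
      exact Submodule.sub_mem _ (Submodule.smul_mem _ _ r1) r2
    have hc0 : c - 1 ≠ 0 := sub_ne_zero.mpr hc1
    have := Submodule.smul_mem G (c - 1)⁻¹ hmem
    rwa [inv_smul_smul₀ hc0] at this
set_option maxHeartbeats 1000000 in
lemma basis_tuple (hh : IsHermitianForm F V σ h)
    (τ : F) (hτ : σ τ ≠ τ)
    {n : ℕ} (W : Fin n → Submodule F V) (e f : Fin n → V)
    (he : ∀ i, e i ∈ W i) (hf : ∀ i, f i ∈ W i)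
    (hee : ∀ i, h (e i) (e i) = 0) (hff : ∀ i, h (f i) (f i) = 0)
    (hef : ∀ i, h (e i) (f i) = 1)
    (horth : ∀ i j, i ≠ j → ∀ x ∈ W i, ∀ y ∈ W j, h x y = 0)
    (k : ℕ) (hk : k ≤ n) (c : Fin k → Fin n × Fin 2) :
    ExteriorAlgebra.ιMulti F k (fun t => if (c t).2 = 0 then e (c t).1 else f (c t).1)
      ∈ grassmann F V (TotSingB F V h) k := by
  classical
  set v : Fin k → V := fun t => if (c t).2 = 0 then e (c t).1 else f (c t).1 with hv
  have hvmem : ∀ t, v t ∈ W (c t).1 := by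
    intro t
    rw [hv]
    dsimp only
    split
    · exact he _
    · exact hf _
  by_cases hcinj : Function.Injective c
  · set S : Finset (Fin n) := Finset.image (fun t => (c t).1) Finset.univ with hS
    set P : Finset (Fin n) :=
      S.filter (fun i => (∃ t, c t = (i, 0)) ∧ (∃ t, c t = (i, 1))) with hP
    set m := P.card with hm
    have hPS : P ⊆ S := Finset.filter_subset _ _
    have hPmem : ∀ p : Fin m, (∃ t, c t = ((P.equivFin.symm p : Fin n), 0)) ∧
        (∃ t, c t = ((P.equivFin.symm p : Fin n), 1)) :=
      fun p => (Finset.mem_filter.mp (P.equivFin.symm p).2).2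
    set pr : Fin m → Fin k × Fin k :=
      fun p => ((hPmem p).1.choose, (hPmem p).2.choose) with hpr
    have hc0 : ∀ p, c (pr p).1 = ((P.equivFin.symm p : Fin n), 0) :=
      fun p => (hPmem p).1.choose_spec
    have hc1 : ∀ p, c (pr p).2 = ((P.equivFin.symm p : Fin n), 1) :=
      fun p => (hPmem p).2.choose_spec
    have hiofinj : ∀ p q : Fin m, (P.equivFin.symm p : Fin n) = (P.equivFin.symm q : Fin n)
        → p = q := by
      intro p q hpq
      exact P.equivFin.symm.injective (Subtype.ext hpq)
    refine main hh τ hτ W e f he hf hee hff hef horth k m v S pr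
      ?_ ?_ ?_ ?_ ?_
    · intro t
      refine mem_Wsup ?_ (hvmem t)
      exact Finset.mem_image_of_mem (fun t => (c t).1) (Finset.mem_univ t)
    · -- cardinality bound
      have hfib : ∀ i ∈ S, (if i ∈ P then 2 else 1)
          ≤ (Finset.univ.filter (fun t => (c t).1 = i)).card := by
        intro i hi
        by_cases hiP : i ∈ P
        · rw [if_pos hiP]
          obtain ⟨⟨ta, hta⟩, ⟨tb, htb⟩⟩ := (Finset.mem_filter.mp hiP).2
          refine Finset.one_lt_card.mpr ⟨ta, ?_, tb, ?_, ?_⟩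
          · simp [hta]
          · simp [htb]
          · intro hab
            rw [hab, htb] at hta
            simpa using congrArg Prod.snd hta
        · rw [if_neg hiP]
          obtain ⟨t, -, ht⟩ := Finset.mem_image.mp hi
          have htmem : t ∈ Finset.univ.filter (fun u => (c u).1 = i) := by simp [ht]
          exact Nat.one_le_iff_ne_zero.mpr (Finset.card_ne_zero_of_mem htmem)
      have hsum := Finset.sum_le_sum hfib
      have hright : ∑ i ∈ S, (Finset.univ.filter (fun t => (c t).1 = i)).card = k := by
        rw [← Finset.card_eq_sum_card_fiberwise
          (fun t _ => Finset.mem_image_of_mem (fun u => (c u).1) (Finset.mem_univ t))]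
        simp
      have hleft : ∑ i ∈ S, (if i ∈ P then 2 else 1) = S.card + m := by
        have hsplit : ∀ i ∈ S, (if i ∈ P then 2 else 1) = 1 + (if i ∈ P then 1 else 0) := by
          intro i _
          split <;> rfl
        rw [Finset.sum_congr rfl hsplit, Finset.sum_add_distrib, Finset.sum_const,
          smul_eq_mul, mul_one, Finset.sum_ite_mem, Finset.inter_eq_right.mpr hPS,
          Finset.sum_const, smul_eq_mul, mul_one, hm]
      rw [hleft, hright] at hsum
      omega
    · intro p heq
      have h0 := hc0 p
      rw [heq, hc1 p] at h0
      have h2 : (1 : Fin 2) = 0 := congrArg Prod.snd h0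
      exact absurd h2 (by decide)
    · intro p q hpq
      have hij : (P.equivFin.symm p : Fin n) ≠ (P.equivFin.symm q : Fin n) :=
        fun hc' => hpq (hiofinj p q hc')
      refine ⟨?_, ?_, ?_, ?_⟩
      · intro heq
        have := (hc0 p).symm.trans ((congrArg c heq).trans (hc0 q))
        exact hij (congrArg Prod.fst this)
      · intro heq
        have := (hc0 p).symm.trans ((congrArg c heq).trans (hc1 q))
        exact hij (congrArg Prod.fst this)
      · intro heq
        have := (hc1 p).symm.trans ((congrArg c heq).trans (hc0 q))
        exact hij (congrArg Prod.fst this)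
      · intro heq
        have := (hc1 p).symm.trans ((congrArg c heq).trans (hc1 q))
        exact hij (congrArg Prod.fst this)
    · intro s t hno
      rcases eq_or_ne s t with rfl | hst
      · rw [hv]
        dsimp only
        split
        · exact hee _
        · exact hff _
      by_cases hplane : (c s).1 = (c t).1
      swap
      · exact horth _ _ hplane _ (hvmem s) _ (hvmem t)
      -- same plane, different slots
      have hsl : (c s).2 ≠ (c t).2 := by
        intro hsame
        exact hst (hcinj (Prod.ext hplane hsame))
      set i : Fin n := (c s).1 with hi
      have hiS : i ∈ S := Finset.mem_image_of_mem (fun u => (c u).1) (Finset.mem_univ s)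
      have h2 : ∀ x : Fin 2, x = 0 ∨ x = 1 := by decide
      rcases h2 (c s).2 with hx | hx <;> rcases h2 (c t).2 with hy | hy
      · exact absurd (hx.trans hy.symm) hsl
      · have hcs : c s = (i, 0) := by rw [hi, ← hx]
        have hct : c t = (i, 1) := by rw [hplane, ← hy]
        have hiP' : i ∈ P := Finset.mem_filter.mpr ⟨hiS, ⟨s, hcs⟩, ⟨t, hct⟩⟩
        set p := P.equivFin ⟨i, hiP'⟩ with hp
        have hsymm : P.equivFin.symm p = ⟨i, hiP'⟩ := Equiv.symm_apply_apply _ _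
        have h0 := hc0 p
        have h1 := hc1 p
        rw [hsymm] at h0 h1
        have hs' : (pr p).1 = s := hcinj (h0.trans hcs.symm)
        have ht' : (pr p).2 = t := hcinj (h1.trans hct.symm)
        exact absurd (Prod.ext hs' ht') (hno p).1
      · have hcs : c s = (i, 1) := by rw [hi, ← hx]
        have hct : c t = (i, 0) := by rw [hplane, ← hy]
        have hiP' : i ∈ P := Finset.mem_filter.mpr ⟨hiS, ⟨t, hct⟩, ⟨s, hcs⟩⟩
        set p := P.equivFin ⟨i, hiP'⟩ with hp
        have hsymm : P.equivFin.symm p = ⟨i, hiP'⟩ := Equiv.symm_apply_apply _ _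
        have h0 := hc0 p
        have h1 := hc1 p
        rw [hsymm] at h0 h1
        have hs' : (pr p).1 = t := hcinj (h0.trans hct.symm)
        have ht' : (pr p).2 = s := hcinj (h1.trans hcs.symm)
        exact absurd (Prod.ext hs' ht') (hno p).2
      · exact absurd (hx.trans hy.symm) hsl
  · obtain ⟨s, t, hst, hstne⟩ := Function.not_injective_iff.mp hcinj
    have : v s = v t := by rw [hv]; dsimp only; rw [hst]
    rw [(ExteriorAlgebra.ιMulti F k (M := V)).map_eq_zero_of_eq v this hstne]
    exact Submodule.zero_mem _
end PG

open PolarGrass Module in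
/-- a non-degenerate σ-Hermitian form with `N = 2n`, Witt index `n ≥ 2`
(anisotropic defect 0): `V` is the orthogonal sum of `n` hyperbolic planes. For
`1 ≤ k ≤ n` the Grassmann image is all of `⋀^k V`. -/
theorem stmt12 (F : Type*) [Field F] (V : Type*) [AddCommGroup V] [Module F V]
    [FiniteDimensional F V]
    (σ : F ≃+* F) (hσinv : ∀ a, σ (σ a) = a) (hσne : σ ≠ RingEquiv.refl F)
    (h : V → V → F) (hherm : IsHermitianForm F V σ h)
    (hndeg : ∀ v : V, (∀ w : V, h v w = 0) → v = 0)
    (n : ℕ) (hn : 2 ≤ n)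
    (hdec : HasWittDecomp F V h (fun v => h v v = 0) (radSetB F V h) n 0 0)
    (hNV : Module.finrank F V = 2 * n) :
    ∀ k : ℕ, 1 ≤ k → k ≤ n →
      grassmann F V (TotSingB F V h) k = ⋀[F]^k V := by
  classical
  obtain ⟨W, W₀, R, hint, horthd, hplanes, _h4, hW₀rank, _h6, hRrank⟩ := hdec
  choose e f hWspan hsve hsvf hpair using hplanes
  have he : ∀ i, e i ∈ W i := fun i => by
    rw [hWspan i]
    exact Submodule.subset_span (Set.mem_insert _ _)
  have hf : ∀ i, f i ∈ W i := fun i => by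
    rw [hWspan i]
    exact Submodule.subset_span (Set.mem_insert_of_mem _ rfl)
  have horth : ∀ i j, i ≠ j → ∀ x ∈ W i, ∀ y ∈ W j, h x y = 0 := by
    intro i j hij x hx y hy
    exact horthd (Sum.inl i) (Sum.inl j) (fun hc => hij (Sum.inl.inj hc)) x hx y hy
  obtain ⟨τ, hτ⟩ : ∃ τ : F, σ τ ≠ τ := by
    by_contra hcon
    push_neg at hcon
    exact hσne (RingEquiv.ext fun a => hcon a)
  have hW₀ : W₀ = ⊥ := Submodule.finrank_eq_zero.mp hW₀rank
  have hR : R = ⊥ := Submodule.finrank_eq_zero.mp hRrank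
  set g : Fin n × Fin 2 → V := fun p => if p.2 = 0 then e p.1 else f p.1 with hg
  have hspan : Submodule.span F (Set.range g) = ⊤ := by
    rw [eq_top_iff, ← hint.submodule_iSup_eq_top]
    refine iSup_le ?_
    rintro (i | x)
    · rw [Sum.elim_inl, hWspan i]
      refine Submodule.span_le.mpr ?_
      rintro y (rfl | rfl)
      · exact Submodule.subset_span ⟨(i, 0), by simp [hg]⟩
      · exact Submodule.subset_span ⟨(i, 1), by simp [hg]⟩
    · fin_cases x
      · simp only [Sum.elim_inr, Matrix.cons_val_zero, hW₀]
        exact bot_le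
      · simp only [Sum.elim_inr, Matrix.cons_val_one, Matrix.head_cons, hR]
        exact bot_le
  intro k hk1 hkn
  refine le_antisymm ?_ ?_
  · refine Submodule.span_le.mpr ?_
    rintro x ⟨v, -, -, -, rfl⟩
    exact ExteriorAlgebra.ιMulti_range F k (Set.mem_range_self v)
  · rw [← ExteriorAlgebra.ιMulti_span_fixedDegree F k]
    refine Submodule.span_le.mpr ?_
    rintro x ⟨v, rfl⟩
    have hvmem : ∀ i : Fin k, v i ∈ Submodule.span F (Set.range g) := by
      rw [hspan]
      exact fun i => trivial
    refine PG.multilinear_mem_span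
      (ExteriorAlgebra.ιMulti F k (M := V)).toMultilinearMap (Set.range g) _ ?_ v hvmem
    intro u hu
    choose cf hcf using hu
    have hueq : u = fun t => if (cf t).2 = 0 then e (cf t).1 else f (cf t).1 := by
      funext t
      rw [← hcf t, hg]
    show ExteriorAlgebra.ιMulti F k u ∈ _
    rw [hueq]
    exact PG.basis_tuple hherm τ hτ W e f he hf hsve hsvf hpair horth k hkn cf
end
end

section
/- Suppose char(F) ≠ 2 and q is non-degenerate with N = 2n and Witt index n ≥ 2 (anisotropic defect 0), i.e., V is an f_q-orthogonal direct sum of n hyperbolic planes for q. Then for every integer k with 1 ≤ k ≤ n, the Grassmann image G_k(q) equals all of ⋀^k V. -/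
noncomputable section

namespace Stmt14Aux
open ExteriorAlgebra PolarGrass Module

variable {F : Type*} [Field F] {V : Type*} [AddCommGroup V] [Module F V]

lemma prod_map_perm (l1 l2 : List V) (h : l1.Perm l2) :
    ∃ ε : F, (ε = 1 ∨ ε = -1) ∧
      (l1.map (ι F)).prod = ε • (l2.map (ι F)).prod := by
  induction h with
  | nil => exact ⟨1, Or.inl rfl, by simp⟩
  | cons x h ih =>
      obtain ⟨ε, hε, he⟩ := ih
      exact ⟨ε, hε, by simp [he, mul_smul_comm]⟩
  | swap x y l =>
      refine ⟨-1, Or.inr rfl, ?_⟩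
      have h1 : ι F y * ι F x = -(ι F x * ι F y) := by
        have h := ExteriorAlgebra.ι_add_mul_swap (R := F) x y
        linear_combination (norm := noncomm_ring) h
      simp only [List.map_cons, List.prod_cons, ← mul_assoc, h1, neg_smul, one_smul, neg_mul]
  | trans h1 h2 ih1 ih2 =>
      obtain ⟨ε1, hε1, he1⟩ := ih1
      obtain ⟨ε2, hε2, he2⟩ := ih2
      refine ⟨ε1 * ε2, ?_, ?_⟩
      · rcases hε1 with h | h <;> rcases hε2 with h' | h' <;> simp [h, h']
      · rw [he1, he2, smul_smul]

lemma linearIndependent_of_repr {ι : Type*} [Fintype ι]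
    (b : Basis ι F V) {k : ℕ} (v : Fin k → V) (L : Fin k → ι)
    (h1 : ∀ t, b.repr (v t) (L t) = 1)
    (h0 : ∀ t s, t ≠ s → b.repr (v t) (L s) = 0) :
    LinearIndependent F v := by
  rw [Fintype.linearIndependent_iff]
  intro c hc s
  have h := congrArg (fun w => b.repr w (L s)) hc
  simp only [map_sum, map_smul, Finsupp.coe_finset_sum, Finset.sum_apply,
    Finsupp.coe_smul, Pi.smul_apply, map_zero, Finsupp.coe_zero, Pi.zero_apply] at h
  rw [Finset.sum_eq_single s] at h
  · rw [h1 s] at h; simpa using h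
  · intro t _ hts
    rw [h0 t s hts]; simp
  · simp

lemma polar_span_zero (q : QuadraticForm F V) {S T : Set V}
    (h : ∀ x ∈ S, ∀ y ∈ T, QuadraticMap.polar ⇑q x y = 0) :
    ∀ x ∈ Submodule.span F S, ∀ y ∈ Submodule.span F T, QuadraticMap.polar ⇑q x y = 0 := by
  have step : ∀ y ∈ T, ∀ x ∈ Submodule.span F S, QuadraticMap.polar ⇑q x y = 0 := by
    intro y hy x hx
    induction hx using Submodule.span_induction with
    | mem z hz => exact h z hz y hy
    | zero => simp [QuadraticMap.polar_zero_left]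
    | add a c _ _ ha hc => rw [QuadraticMap.polar_add_left, ha, hc, add_zero]
    | smul r a _ ha => rw [QuadraticMap.polar_smul_left, ha, smul_zero]
  intro x hx y hy
  induction hy using Submodule.span_induction with
  | mem z hz => exact step z hz x hx
  | zero => simp [QuadraticMap.polar_zero_right]
  | add a c _ _ ha hc => rw [QuadraticMap.polar_add_right, ha, hc, add_zero]
  | smul r a _ ha => rw [QuadraticMap.polar_smul_right, ha, smul_zero]

lemma q_add (q : QuadraticForm F V) (x y : V) :
    q (x + y) = q x + q y + QuadraticMap.polar ⇑q x y := by
  rw [QuadraticMap.polar]; ring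

lemma polar_self (q : QuadraticForm F V) (x : V) :
    QuadraticMap.polar ⇑q x x = 2 * q x := by
  rw [QuadraticMap.polar]
  have h : x + x = (2 : F) • x := by rw [two_smul]
  rw [h, QuadraticMap.map_smul, smul_eq_mul]
  ring

lemma totSingQ_span (q : QuadraticForm F V) {S : Set V}
    (h0 : ∀ x ∈ S, q x = 0)
    (h1 : ∀ x ∈ S, ∀ y ∈ S, QuadraticMap.polar ⇑q x y = 0) :
    ∀ x ∈ Submodule.span F S, q x = 0 := by
  have hp := polar_span_zero q h1
  intro x hx
  induction hx using Submodule.span_induction with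
  | mem z hz => exact h0 z hz
  | zero => exact map_zero q
  | add a c ha' hc' ha hc =>
      rw [q_add, ha, hc, hp a ha' c hc']; ring
  | smul r a _ ha => rw [QuadraticMap.map_smul, ha]; simp

lemma repr_zero_of_mem_span {ι : Type*} (b : Basis ι F V) {s : Set ι} {u : V}
    (hu : u ∈ Submodule.span F (⇑b '' s)) {x : ι} (hx : x ∉ s) : b.repr u x = 0 := by
  by_contra h
  exact hx (b.mem_span_image.mp hu (Finsupp.mem_support_iff.mpr h))

section Key

variable {n : ℕ} (q : QuadraticForm F V) (b : Basis (Fin n × Bool) F V)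

/-- indices appearing as a full hyperbolic pair in the monomial list -/
def pairs (cs : List (Fin n × Bool)) : Finset (Fin n) :=
  Finset.univ.filter (fun i => (i, false) ∈ cs ∧ (i, true) ∈ cs)

lemma mem_pairs {cs : List (Fin n × Bool)} {i : Fin n} :
    i ∈ pairs cs ↔ (i, false) ∈ cs ∧ (i, true) ∈ cs := by
  simp [pairs]

lemma polar_zero_of_mem_span
    (hB0 : ∀ x y : Fin n × Bool, x.1 ≠ y.1 → QuadraticMap.polar ⇑q (b x) (b y) = 0)
    {S : Finset (Fin n)} {u : V}
    (hu : u ∈ Submodule.span F (⇑b '' {x | x.1 ∈ S}))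
    (x : Fin n × Bool) (hx : x.1 ∉ S) : QuadraticMap.polar ⇑q u (b x) = 0 := by
  refine polar_span_zero q (T := {b x}) ?_ u hu (b x) (Submodule.subset_span rfl)
  rintro z ⟨y, hy, rfl⟩ w hw
  rw [Set.mem_singleton_iff] at hw
  subst hw
  exact hB0 y x (fun hc => hx (hc ▸ hy))

set_option maxHeartbeats 2000000 in
lemma key (hq0 : ∀ x, q (b x) = 0)
    (hB1 : ∀ x y : Fin n × Bool, x.1 = y.1 → x.2 ≠ y.2 → QuadraticMap.polar ⇑q (b x) (b y) = 1)
    (hB0 : ∀ x y : Fin n × Bool, x.1 ≠ y.1 → QuadraticMap.polar ⇑q (b x) (b y) = 0)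
    (hchar2 : (2 : F) ≠ 0) (k : ℕ) (p : ℕ) :
    ∀ (us : List (V × (Fin n × Bool))) (cs : List (Fin n × Bool)) (T : Finset (Fin n)),
    (pairs cs).card ≤ p →
    (∀ u ∈ us, q u.1 = 0) →
    (∀ u ∈ us, ∀ u' ∈ us, QuadraticMap.polar ⇑q u.1 u'.1 = 0) →
    (∀ u ∈ us, u.1 ∈ Submodule.span F (⇑b '' {x : Fin n × Bool | x.1 ∈ T})) →
    (∀ u ∈ us, u.2.1 ∈ T) →
    (∀ u ∈ us, b.repr u.1 u.2 = 1) →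
    us.Pairwise (fun u u' => b.repr u.1 u'.2 = 0 ∧ b.repr u'.1 u.2 = 0) →
    cs.Nodup →
    (∀ x ∈ cs, x.1 ∉ T) →
    us.length + cs.length = k →
    T.card + cs.length ≤ n →
    (us.map (fun u => ι F u.1)).prod * (cs.map (fun x => ι F (b x))).prod
      ∈ grassmann F V (TotSingQ F V q) k := by
  induction p with
  | zero =>
      intro us cs T hpair H1 H2 H3 H4 H5 H6 H7 H8 H9 H10
      subst H9
      have hpairs0 : pairs cs = ∅ := Finset.card_eq_zero.mp (Nat.le_zero.mp hpair)
      set v : Fin (us.length + cs.length) → V :=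
        Fin.append (fun t => (us.get t).1) (fun t => b (cs.get t)) with hv
      set L : Fin (us.length + cs.length) → (Fin n × Bool) :=
        Fin.append (fun t => (us.get t).2) (fun t => cs.get t) with hL
      have hprod : (us.map (fun u => ι F u.1)).prod * (cs.map (fun x => ι F (b x))).prod
          = ExteriorAlgebra.ιMulti F (us.length + cs.length) v := by
        rw [ExteriorAlgebra.ιMulti_apply]
        have hcomp : (fun t => ι F (v t)) =
            Fin.append (fun t => ι F ((us.get t).1)) (fun t => ι F (b (cs.get t))) := by
          funext t
          induction t using Fin.addCases with
          | left t0 => simp [hv, Fin.append_left]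
          | right t0 => simp [hv, Fin.append_right]
        rw [hcomp, List.ofFn_fin_append, List.prod_append]
        congr 1
        · exact congrArg List.prod (by apply List.ext_get <;> simp)
        · exact congrArg List.prod (by apply List.ext_get <;> simp)
      have hindep : LinearIndependent F v := by
        refine linearIndependent_of_repr b v L ?_ ?_
        · intro t
          induction t using Fin.addCases with
          | left t0 =>
              simpa [hv, hL, Fin.append_left] using H5 _ (List.get_mem us t0)
          | right t0 => simp [hv, hL, Fin.append_right, Basis.repr_self]
        · intro t s hts
          induction t using Fin.addCases with
          | left t0 =>
              induction s using Fin.addCases with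
              | left s0 =>
                  have hts0 : t0 ≠ s0 := fun hh => hts (by rw [hh])
                  have hPW := List.pairwise_iff_get.mp H6
                  rcases lt_or_gt_of_ne hts0 with hlt | hgt
                  · simpa [hv, hL, Fin.append_left] using (hPW t0 s0 hlt).1
                  · simpa [hv, hL, Fin.append_left] using (hPW s0 t0 hgt).2
              | right s0 =>
                  have h := repr_zero_of_mem_span b (H3 _ (List.get_mem us t0))
                    (x := cs.get s0) (H8 _ (List.get_mem cs s0))
                  simpa [hv, hL, Fin.append_left, Fin.append_right] using h
          | right t0 =>
              induction s using Fin.addCases with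
              | left s0 =>
                  have hne : (cs.get t0) ≠ (us.get s0).2 := by
                    intro hh
                    exact H8 _ (List.get_mem cs t0)
                      (by rw [hh]; exact H4 _ (List.get_mem us s0))
                  simp only [hv, hL, Fin.append_right, Fin.append_left, Basis.repr_self]
                  exact Finsupp.single_eq_of_ne' hne
              | right s0 =>
                  have ht0s0 : t0 ≠ s0 := fun hh => hts (by rw [hh])
                  have hne : cs.get t0 ≠ cs.get s0 := fun hh => ht0s0 (H7.get_inj_iff.mp hh)
                  simp only [hv, hL, Fin.append_right, Basis.repr_self]
                  exact Finsupp.single_eq_of_ne' hne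
      have hcs2 : ∀ x ∈ cs, ∀ y ∈ cs, QuadraticMap.polar ⇑q (b x) (b y) = 0 := by
        rintro ⟨a1, a2⟩ h1 ⟨c1, c2⟩ h2
        by_cases hfst : a1 = c1
        · subst hfst
          by_cases hsnd : a2 = c2
          · subst hsnd; rw [polar_self, hq0]; ring
          · exfalso
            have hmemp : a1 ∈ pairs cs := by
              rw [mem_pairs]
              cases a2 <;> cases c2
              · exact absurd rfl hsnd
              · exact ⟨h1, h2⟩
              · exact ⟨h2, h1⟩
              · exact absurd rfl hsnd
            simp [hpairs0] at hmemp
        · exact hB0 _ _ (by simpa using hfst)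
      have horthall : ∀ t s, QuadraticMap.polar ⇑q (v t) (v s) = 0 := by
        intro t s
        induction t using Fin.addCases with
        | left t0 =>
            induction s using Fin.addCases with
            | left s0 =>
                simpa [hv, Fin.append_left] using
                  H2 _ (List.get_mem us t0) _ (List.get_mem us s0)
            | right s0 =>
                simpa [hv, Fin.append_left, Fin.append_right] using
                  polar_zero_of_mem_span q b hB0 (H3 _ (List.get_mem us t0)) (cs.get s0)
                    (H8 _ (List.get_mem cs s0))
        | right t0 =>
            induction s using Fin.addCases with
            | left s0 =>
                have h := polar_zero_of_mem_span q b hB0 (H3 _ (List.get_mem us s0))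
                  (cs.get t0) (H8 _ (List.get_mem cs t0))
                rw [QuadraticMap.polar_comm] at h
                simpa [hv, Fin.append_left, Fin.append_right] using h
            | right s0 =>
                simpa [hv, Fin.append_right] using
                  hcs2 _ (List.get_mem cs t0) _ (List.get_mem cs s0)
      have hqall : ∀ t, q (v t) = 0 := by
        intro t
        induction t using Fin.addCases with
        | left t0 => simpa [hv, Fin.append_left] using H1 _ (List.get_mem us t0)
        | right t0 => simp [hv, Fin.append_right, hq0]
      have htot : TotSingQ F V q (Submodule.span F (Set.range v)) := by
        intro x hx
        refine totSingQ_span q ?_ ?_ x hx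
        · rintro y ⟨t, rfl⟩; exact hqall t
        · rintro y ⟨t, rfl⟩ z ⟨s, rfl⟩; exact horthall t s
      rw [hprod]
      exact Submodule.subset_span ⟨v, fun t => Submodule.mem_top, hindep, htot, rfl⟩
  | succ p ih =>
      intro us cs T hpair H1 H2 H3 H4 H5 H6 H7 H8 H9 H10
      by_cases hple : (pairs cs).card ≤ p
      · exact ih us cs T hple H1 H2 H3 H4 H5 H6 H7 H8 H9 H10
      have hcard1 : 0 < (pairs cs).card := by omega
      obtain ⟨i, hi⟩ := Finset.card_pos.mp hcard1
      obtain ⟨hif, hit⟩ := mem_pairs.mp hi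
      have hiT : i ∉ T := H8 _ hif
      set U : Finset (Fin n) := T ∪ cs.toFinset.image Prod.fst with hU
      have hUcard : U.card < n := by
        have h1 : (cs.toFinset.image Prod.fst) ⊆
            ((cs.toFinset.erase (i, true)).image Prod.fst) := by
          intro a ha
          obtain ⟨y, hy, rfl⟩ := Finset.mem_image.mp ha
          by_cases hyy : y = (i, true)
          · subst hyy
            exact Finset.mem_image.mpr ⟨(i, false),
              Finset.mem_erase.mpr ⟨by simp, List.mem_toFinset.mpr hif⟩, rfl⟩
          · exact Finset.mem_image.mpr ⟨y, Finset.mem_erase.mpr ⟨hyy, hy⟩, rfl⟩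
        have h2 : ((cs.toFinset.erase (i, true)).image Prod.fst).card ≤
            (cs.toFinset.erase (i, true)).card := Finset.card_image_le
        have h3 : (cs.toFinset.erase (i, true)).card = cs.toFinset.card - 1 :=
          Finset.card_erase_of_mem (List.mem_toFinset.mpr hit)
        have h4 : cs.toFinset.card ≤ cs.length := cs.toFinset_card_le
        have h5 : 0 < cs.toFinset.card :=
          Finset.card_pos.mpr ⟨_, List.mem_toFinset.mpr hit⟩
        have h6 : U.card ≤ T.card + (cs.toFinset.image Prod.fst).card :=
          Finset.card_union_le _ _
        have h7 := Finset.card_le_card h1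
        omega
      obtain ⟨j, hjU⟩ : ∃ j : Fin n, j ∉ U := by
        by_contra h
        push_neg at h
        have hsub : (Finset.univ : Finset (Fin n)) ⊆ U := fun x _ => h x
        have := Finset.card_le_card hsub
        simp only [Finset.card_univ, Fintype.card_fin] at this
        omega
      have hjT : j ∉ T := fun h => hjU (Finset.mem_union_left _ h)
      have hjcs : ∀ x ∈ cs, x.1 ≠ j := by
        intro x hx hxe
        exact hjU (Finset.mem_union_right _
          (Finset.mem_image.mpr ⟨x, List.mem_toFinset.mpr hx, hxe⟩))
      have hij : i ≠ j := hjcs _ hif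
      obtain ⟨cs1, hp1⟩ : ∃ cs1 : List (Fin n × Bool), cs.Perm ((i, false) :: cs1) :=
        ⟨_, List.perm_cons_erase hif⟩
      have hitmem : (i, true) ∈ cs1 := by
        have h := hp1.mem_iff.mp hit
        rcases List.mem_cons.mp h with h | h
        · exact absurd (congrArg Prod.snd h) (by simp)
        · exact h
      obtain ⟨rest, hperm⟩ : ∃ rest : List (Fin n × Bool),
          cs.Perm ((i, false) :: (i, true) :: rest) :=
        ⟨_, hp1.trans ((List.perm_cons_erase hitmem).cons _)⟩
      clear hp1 hitmem cs1
      have hndall : ((i, false) :: (i, true) :: rest).Nodup := hperm.nodup_iff.mp H7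
      have hndrest : rest.Nodup := (hndall.of_cons).of_cons
      have hifrest : (i, false) ∉ rest := by
        have h := (List.nodup_cons.mp hndall).1
        exact fun hh => h (List.mem_cons_of_mem _ hh)
      have hitrest : (i, true) ∉ rest := (List.nodup_cons.mp hndall.of_cons).1
      have hrestsub : ∀ x ∈ rest, x ∈ cs := fun x h =>
        hperm.symm.subset (List.mem_cons_of_mem _ (List.mem_cons_of_mem _ h))
      have hlen : cs.length = rest.length + 2 := by
        have h := hperm.length_eq
        simpa using h
      have hresti : ∀ x ∈ rest, x.1 ≠ i := by
        rintro ⟨x1, x2⟩ hx hxe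
        simp only at hxe
        subst hxe
        cases x2
        · exact hifrest hx
        · exact hitrest hx
      have hrestT : ∀ x ∈ rest, x.1 ∉ T ∪ ({i, j} : Finset (Fin n)) := by
        intro x hx
        simp only [Finset.mem_union, Finset.mem_insert, Finset.mem_singleton]
        push_neg
        exact ⟨H8 _ (hrestsub _ hx), hresti _ hx, hjcs _ (hrestsub _ hx)⟩
      have hpairsrest : ∀ (cs' : List (Fin n × Bool)),
          (∀ a : Fin n, ((a, false) ∈ cs' ∧ (a, true) ∈ cs') →
            (a ∈ pairs cs ∧ a ≠ i)) → (pairs cs').card ≤ p := by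
        intro cs' h
        have hsub : pairs cs' ⊆ (pairs cs).erase i := by
          intro a ha
          obtain ⟨h1, h2⟩ := mem_pairs.mp ha
          obtain ⟨hm, hne⟩ := h a ⟨h1, h2⟩
          exact Finset.mem_erase.mpr ⟨hne, hm⟩
        have hcle := Finset.card_le_card hsub
        have hce : ((pairs cs).erase i).card = (pairs cs).card - 1 :=
          Finset.card_erase_of_mem hi
        omega
      -- polar values
      have hBef : QuadraticMap.polar ⇑q (b (i, false)) (b (i, true)) = 1 :=
        hB1 _ _ rfl (by simp)
      have hcross : ∀ s s' : Bool, QuadraticMap.polar ⇑q (b (i, s)) (b (j, s')) = 0 :=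
        fun s s' => hB0 _ _ (by simpa using hij)
      have hcross' : ∀ s s' : Bool, QuadraticMap.polar ⇑q (b (j, s)) (b (i, s')) = 0 :=
        fun s s' => hB0 _ _ (by simpa using hij.symm)
      have hBjj : ∀ s s' : Bool, s ≠ s' →
          QuadraticMap.polar ⇑q (b (j, s)) (b (j, s')) = 1 :=
        fun s s' hss => hB1 _ _ rfl hss
      have horthu : ∀ u ∈ us, ∀ (x : Fin n × Bool), x.1 ∉ T →
          QuadraticMap.polar ⇑q u.1 (b x) = 0 :=
        fun u hu x hx => polar_zero_of_mem_span q b hB0 (H3 u hu) x hx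
      -- the A/B/C-type extension
      have extMem : ∀ (δ1 δ2 : F) (s1 s2 : Bool), s1 ≠ s2 → δ1 * δ2 = -1 →
          (us.map (fun u => ι F u.1)).prod *
            ((ι F (b (i, false) + δ1 • b (j, s1)) * ι F (b (i, true) + δ2 • b (j, s2))) *
              (rest.map (fun x => ι F (b x))).prod)
            ∈ grassmann F V (TotSingQ F V q) k := by
        intro δ1 δ2 s1 s2 hss hδδ
        set w1 := b (i, false) + δ1 • b (j, s1) with hw1
        set w2 := b (i, true) + δ2 • b (j, s2) with hw2
        have hqw1 : q w1 = 0 := by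
          rw [hw1, q_add, QuadraticMap.map_smul, QuadraticMap.polar_smul_right]
          simp [hq0, hcross]
        have hqw2 : q w2 = 0 := by
          rw [hw2, q_add, QuadraticMap.map_smul, QuadraticMap.polar_smul_right]
          simp [hq0, hcross]
        have hpw12 : QuadraticMap.polar ⇑q w1 w2 = 0 := by
          rw [hw1, hw2]
          simp only [QuadraticMap.polar_add_left, QuadraticMap.polar_add_right,
            QuadraticMap.polar_smul_left, QuadraticMap.polar_smul_right,
            hBef, hcross, hcross', hBjj _ _ hss, smul_eq_mul]
          ring_nf
          linear_combination hδδ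
        have hw11 : QuadraticMap.polar ⇑q w1 w1 = 0 := by rw [polar_self, hqw1]; ring
        have hw22 : QuadraticMap.polar ⇑q w2 w2 = 0 := by rw [polar_self, hqw2]; ring
        have hw21 : QuadraticMap.polar ⇑q w2 w1 = 0 := by
          rw [QuadraticMap.polar_comm]; exact hpw12
        have hporth : ∀ u ∈ us, QuadraticMap.polar ⇑q u.1 w1 = 0 ∧
            QuadraticMap.polar ⇑q u.1 w2 = 0 := by
          intro u hu
          constructor
          · rw [hw1, QuadraticMap.polar_add_right, QuadraticMap.polar_smul_right,
              horthu u hu _ hiT, horthu u hu _ hjT]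
            simp
          · rw [hw2, QuadraticMap.polar_add_right, QuadraticMap.polar_smul_right,
              horthu u hu _ hiT, horthu u hu _ hjT]
            simp
        have hrw1 : ∀ x : Fin n × Bool, b.repr w1 x =
            (if ((i : Fin n), false) = x then (1:F) else 0) +
              δ1 * (if ((j : Fin n), s1) = x then (1:F) else 0) := by
          intro x
          rw [hw1, map_add, map_smul, Basis.repr_self, Basis.repr_self]
          simp [Finsupp.single_apply]
        have hrw2 : ∀ x : Fin n × Bool, b.repr w2 x =
            (if ((i : Fin n), true) = x then (1:F) else 0) +
              δ2 * (if ((j : Fin n), s2) = x then (1:F) else 0) := by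
          intro x
          rw [hw2, map_add, map_smul, Basis.repr_self, Basis.repr_self]
          simp [Finsupp.single_apply]
        have hji1 : ∀ s s' : Bool, ((j : Fin n), s) ≠ ((i : Fin n), s') := by
          intro s s' h
          exact hij.symm (congrArg Prod.fst h)
        set A1 : V × (Fin n × Bool) := (w1, (i, false)) with hA1
        set A2 : V × (Fin n × Bool) := (w2, (i, true)) with hA2
        have mem2 : ∀ u, u ∈ [A1, A2] → u = A1 ∨ u = A2 := by
          intro u hu; simpa using hu
        have H1' : ∀ u ∈ us ++ [A1, A2], q u.1 = 0 := by
          intro u hu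
          rcases List.mem_append.mp hu with hu | hu
          · exact H1 u hu
          · rcases mem2 u hu with rfl | rfl
            · exact hqw1
            · exact hqw2
        have H2' : ∀ u ∈ us ++ [A1, A2], ∀ u' ∈ us ++ [A1, A2],
            QuadraticMap.polar ⇑q u.1 u'.1 = 0 := by
          intro u hu u' hu'
          rcases List.mem_append.mp hu with hu | hu <;>
            rcases List.mem_append.mp hu' with hu' | hu'
          · exact H2 u hu u' hu'
          · rcases mem2 _ hu' with rfl | rfl
            · exact (hporth u hu).1
            · exact (hporth u hu).2
          · rcases mem2 _ hu with rfl | rfl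
            · rw [QuadraticMap.polar_comm]; exact (hporth u' hu').1
            · rw [QuadraticMap.polar_comm]; exact (hporth u' hu').2
          · rcases mem2 _ hu with rfl | rfl <;> rcases mem2 _ hu' with rfl | rfl
            · exact hw11
            · exact hpw12
            · exact hw21
            · exact hw22
        have hsubT : Submodule.span F (⇑b '' {x : Fin n × Bool | x.1 ∈ T}) ≤
            Submodule.span F (⇑b '' {x : Fin n × Bool | x.1 ∈ T ∪ ({i, j} : Finset (Fin n))}) := by
          refine Submodule.span_mono (Set.image_mono ?_)
          intro x hx
          simp only [Set.mem_setOf_eq] at hx ⊢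
          exact Finset.mem_union_left _ hx
        have hw1span : w1 ∈ Submodule.span F
            (⇑b '' {x : Fin n × Bool | x.1 ∈ T ∪ ({i, j} : Finset (Fin n))}) := by
          rw [hw1]
          refine Submodule.add_mem _ (Submodule.subset_span ⟨(i, false), by simp, rfl⟩)
            (Submodule.smul_mem _ _ (Submodule.subset_span ⟨(j, s1), by simp, rfl⟩))
        have hw2span : w2 ∈ Submodule.span F
            (⇑b '' {x : Fin n × Bool | x.1 ∈ T ∪ ({i, j} : Finset (Fin n))}) := by
          rw [hw2]
          refine Submodule.add_mem _ (Submodule.subset_span ⟨(i, true), by simp, rfl⟩)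
            (Submodule.smul_mem _ _ (Submodule.subset_span ⟨(j, s2), by simp, rfl⟩))
        have H3' : ∀ u ∈ us ++ [A1, A2], u.1 ∈ Submodule.span F
            (⇑b '' {x : Fin n × Bool | x.1 ∈ T ∪ ({i, j} : Finset (Fin n))}) := by
          intro u hu
          rcases List.mem_append.mp hu with hu | hu
          · exact hsubT (H3 u hu)
          · rcases mem2 _ hu with rfl | rfl
            · exact hw1span
            · exact hw2span
        have H4' : ∀ u ∈ us ++ [A1, A2], u.2.1 ∈ T ∪ ({i, j} : Finset (Fin n)) := by
          intro u hu
          rcases List.mem_append.mp hu with hu | hu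
          · exact Finset.mem_union_left _ (H4 u hu)
          · rcases mem2 _ hu with rfl | rfl <;> simp [hA1, hA2]
        have H5' : ∀ u ∈ us ++ [A1, A2], b.repr u.1 u.2 = 1 := by
          intro u hu
          rcases List.mem_append.mp hu with hu | hu
          · exact H5 u hu
          · rcases mem2 _ hu with rfl | rfl
            · rw [hrw1]
              rw [if_pos rfl, if_neg (hji1 s1 false)]
              ring
            · rw [hrw2]
              rw [if_pos rfl, if_neg (hji1 s2 true)]
              ring
        have hu2ne : ∀ u ∈ us, ∀ s : Bool, u.2 ≠ ((i : Fin n), s) := by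
          intro u hu s h
          apply hiT
          have := H4 u hu
          rw [h] at this
          exact this
        have H6' : (us ++ [A1, A2]).Pairwise
            (fun u u' => b.repr u.1 u'.2 = 0 ∧ b.repr u'.1 u.2 = 0) := by
          rw [List.pairwise_append]
          refine ⟨H6, ?_, ?_⟩
          · simp only [List.pairwise_cons, List.mem_singleton, List.pairwise_cons,
              List.not_mem_nil, false_implies, implies_true, List.Pairwise.nil, and_true]
            intro u' hu'
            subst hu'
            constructor
            · rw [hrw1, if_neg (by simp [hA1, hA2]), if_neg (hji1 s1 true)]; ring
            · rw [hrw2, if_neg (by simp [hA1, hA2]), if_neg (hji1 s2 false)]; ring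
          · intro u hu u' hu'
            rcases mem2 _ hu' with rfl | rfl
            · constructor
              · exact repr_zero_of_mem_span b (H3 u hu) hiT
              · rw [hrw1, if_neg (Ne.symm (hu2ne u hu false)),
                  if_neg (fun h => hjT (by have hh := H4 u hu; rw [← h] at hh; exact hh))]
                ring
            · constructor
              · exact repr_zero_of_mem_span b (H3 u hu) hiT
              · rw [hrw2, if_neg (Ne.symm (hu2ne u hu true)),
                  if_neg (fun h => hjT (by have hh := H4 u hu; rw [← h] at hh; exact hh))]
                ring
        have H9' : (us ++ [A1, A2]).length + rest.length = k := by
          rw [List.length_append]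
          simp only [List.length_cons, List.length_nil]
          omega
        have H10' : (T ∪ ({i, j} : Finset (Fin n))).card + rest.length ≤ n := by
          have hc1 : (T ∪ ({i, j} : Finset (Fin n))).card ≤ T.card + ({i, j} : Finset (Fin n)).card :=
            Finset.card_union_le _ _
          have hc2 : ({i, j} : Finset (Fin n)).card ≤ 2 :=
            Finset.card_insert_le _ _ |>.trans (by simp)
          omega
        have hpair' : (pairs rest).card ≤ p := by
          refine hpairsrest rest ?_
          intro a ⟨haf, hat⟩
          refine ⟨mem_pairs.mpr ⟨hrestsub _ haf, hrestsub _ hat⟩, ?_⟩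
          exact hresti _ haf
        have hmem := ih (us ++ [A1, A2]) rest (T ∪ ({i, j} : Finset (Fin n)))
          hpair' H1' H2' H3' H4' H5' H6' hndrest hrestT H9' H10'
        have heqprod : ((us ++ [A1, A2]).map (fun u => ι F u.1)).prod =
            (us.map (fun u => ι F u.1)).prod * (ι F w1 * ι F w2) := by
          rw [List.map_append, List.prod_append]
          simp [hA1, hA2, mul_assoc]
        rw [heqprod, mul_assoc] at hmem
        exact hmem
      -- the monomial-type extension
      have extMem2 : ∀ s : Bool,
          (us.map (fun u => ι F u.1)).prod *
            ((ι F (b (i, s)) * ι F (b (j, s))) * (rest.map (fun x => ι F (b x))).prod)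
            ∈ grassmann F V (TotSingQ F V q) k := by
        intro s
        have hnd'' : ((i, s) :: (j, s) :: rest).Nodup := by
          refine List.Pairwise.cons ?_ (List.Pairwise.cons ?_ hndrest)
          · intro x hx
            rcases List.mem_cons.mp hx with rfl | hx
            · intro h; exact hij (congrArg Prod.fst h)
            · intro h; exact hresti x hx (by rw [← h])
          · intro x hx h
            exact hjcs _ (hrestsub _ hx) (by rw [← h])
        have H8'' : ∀ x ∈ (i, s) :: (j, s) :: rest, x.1 ∉ T := by
          intro x hx
          rcases List.mem_cons.mp hx with rfl | hx
          · exact hiT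
          · rcases List.mem_cons.mp hx with rfl | hx
            · exact hjT
            · exact H8 _ (hrestsub _ hx)
        have H9'' : us.length + ((i, s) :: (j, s) :: rest).length = k := by
          simp only [List.length_cons]
          omega
        have H10'' : T.card + ((i, s) :: (j, s) :: rest).length ≤ n := by
          simp only [List.length_cons]
          omega
        have hpair'' : (pairs ((i, s) :: (j, s) :: rest)).card ≤ p := by
          refine hpairsrest _ ?_
          rintro a ⟨haf, hat⟩
          have hx : (a, !s) ∈ rest := by
            cases s
            · simp only [List.mem_cons] at hat
              rcases hat with h | h | h
              · exact absurd (congrArg Prod.snd h) (by simp)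
              · exact absurd (congrArg Prod.snd h) (by simp)
              · exact h
            · simp only [List.mem_cons] at haf
              rcases haf with h | h | h
              · exact absurd (congrArg Prod.snd h) (by simp)
              · exact absurd (congrArg Prod.snd h) (by simp)
              · exact h
          have hai : a ≠ i := by
            have := hresti _ hx; simpa using this
          have haj : a ≠ j := by
            have := hjcs _ (hrestsub _ hx); simpa using this
          have hy : (a, s) ∈ rest := by
            cases s
            · simp only [List.mem_cons] at haf
              rcases haf with h | h | h
              · exact absurd (congrArg Prod.fst h) hai
              · exact absurd (congrArg Prod.fst h) haj
              · exact h
            · simp only [List.mem_cons] at hat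
              rcases hat with h | h | h
              · exact absurd (congrArg Prod.fst h) hai
              · exact absurd (congrArg Prod.fst h) haj
              · exact h
          refine ⟨mem_pairs.mpr ?_, hai⟩
          cases s
          · exact ⟨hrestsub _ hy, hrestsub _ hx⟩
          · exact ⟨hrestsub _ hx, hrestsub _ hy⟩
        have hmem := ih us ((i, s) :: (j, s) :: rest) T
          hpair'' H1 H2 H3 H4 H5 H6 hnd'' H8'' H9'' H10''
        simp only [List.map_cons, List.prod_cons] at hmem
        rw [← mul_assoc (ι F (b (i, s)))] at hmem
        exact hmem
      -- assemble
      set usP := (us.map (fun u => ι F u.1)).prod with husP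
      set restP := (rest.map (fun x => ι F (b x))).prod with hrestPdef
      set x1 := ι F (b (i, false)) with hx1
      set y1 := ι F (b (i, true)) with hy1
      set x2 := ι F (b (j, false)) with hx2
      set y2 := ι F (b (j, true)) with hy2
      have MA : usP * ((x1 + x2) * (y1 + -y2) * restP) ∈ grassmann F V (TotSingQ F V q) k := by
        have h := extMem 1 (-1) false true (by simp) (by ring)
        rw [one_smul, neg_one_smul] at h
        simp only [map_add, map_neg] at h
        exact h
      have MB : usP * ((x1 + -x2) * (y1 + y2) * restP) ∈ grassmann F V (TotSingQ F V q) k := by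
        have h := extMem (-1) 1 false true (by simp) (by ring)
        rw [one_smul, neg_one_smul] at h
        simp only [map_add, map_neg] at h
        exact h
      have MC : usP * ((x1 + y2) * (y1 + -x2) * restP) ∈ grassmann F V (TotSingQ F V q) k := by
        have h := extMem 1 (-1) true false (by simp) (by ring)
        rw [one_smul, neg_one_smul] at h
        simp only [map_add, map_neg] at h
        exact h
      have ME : usP * (x1 * x2 * restP) ∈ grassmann F V (TotSingQ F V q) k := by
        have h := extMem2 false
        rw [← hx1, ← hx2] at h
        exact h
      have MY : usP * (y1 * y2 * restP) ∈ grassmann F V (TotSingQ F V q) k := by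
        have h := extMem2 true
        rw [← hy1, ← hy2] at h
        exact h
      have hs1 : y2 * y1 = -(y1 * y2) := by
        have h := ExteriorAlgebra.ι_add_mul_swap (R := F) (b (j, true)) (b (i, true))
        rw [← hy1, ← hy2] at h
        linear_combination (norm := noncomm_ring) h
      have hs2 : y2 * x2 = -(x2 * y2) := by
        have h := ExteriorAlgebra.ι_add_mul_swap (R := F) (b (j, true)) (b (j, false))
        rw [← hx2, ← hy2] at h
        linear_combination (norm := noncomm_ring) h
      have hexp : (x1 + y2) * (y1 + -x2) = x1*y1 + -(x1*x2) + -(y1*y2) + x2*y2 := by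
        have e1 : (x1 + y2) * (y1 + -x2) = x1*y1 + -(x1*x2) + y2*y1 + -(y2*x2) := by
          noncomm_ring
        rw [e1, hs1, hs2]
        abel
      have hid : (x1 + x2) * (y1 + -y2) + (x1 + -x2) * (y1 + y2)
          + ((x1 + y2) * (y1 + -x2) + (x1 + y2) * (y1 + -x2))
          + (x1*x2 + x1*x2) + (y1*y2 + y1*y2) = (4:F) • (x1*y1) := by
        rw [hexp]
        have h4 : (4:F) • (x1*y1) = x1*y1 + x1*y1 + x1*y1 + x1*y1 := by
          rw [show (4:F) = 1+1+1+1 by norm_num]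
          simp [add_smul]
        rw [h4]
        noncomm_ring
      have hbig : usP * ((x1 + x2) * (y1 + -y2) * restP) + usP * ((x1 + -x2) * (y1 + y2) * restP)
          + (usP * ((x1 + y2) * (y1 + -x2) * restP) + usP * ((x1 + y2) * (y1 + -x2) * restP))
          + (usP * (x1*x2 * restP) + usP * (x1*x2 * restP))
          + (usP * (y1*y2 * restP) + usP * (y1*y2 * restP))
          = (4:F) • (usP * (x1*y1 * restP)) := by
        calc usP * ((x1 + x2) * (y1 + -y2) * restP) + usP * ((x1 + -x2) * (y1 + y2) * restP)
              + (usP * ((x1 + y2) * (y1 + -x2) * restP) + usP * ((x1 + y2) * (y1 + -x2) * restP))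
              + (usP * (x1*x2 * restP) + usP * (x1*x2 * restP))
              + (usP * (y1*y2 * restP) + usP * (y1*y2 * restP))
            = usP * (((x1 + x2) * (y1 + -y2) + (x1 + -x2) * (y1 + y2)
                + ((x1 + y2) * (y1 + -x2) + (x1 + y2) * (y1 + -x2))
                + (x1*x2 + x1*x2) + (y1*y2 + y1*y2)) * restP) := by
              noncomm_ring
          _ = usP * (((4:F) • (x1*y1)) * restP) := by rw [hid]
          _ = (4:F) • (usP * (x1*y1 * restP)) := by
              rw [smul_mul_assoc, mul_smul_comm]
      have G4 : (4:F) • (usP * (x1*y1 * restP)) ∈ grassmann F V (TotSingQ F V q) k := by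
        rw [← hbig]
        exact Submodule.add_mem _ (Submodule.add_mem _ (Submodule.add_mem _
          (Submodule.add_mem _ MA MB) (Submodule.add_mem _ MC MC))
          (Submodule.add_mem _ ME ME)) (Submodule.add_mem _ MY MY)
      have h4ne : (4:F) ≠ 0 := by
        have h := mul_ne_zero hchar2 hchar2
        norm_num at h
        exact h
      have Gmem : usP * (x1*y1 * restP) ∈ grassmann F V (TotSingQ F V q) k := by
        have h := Submodule.smul_mem (grassmann F V (TotSingQ F V q) k) ((4:F)⁻¹) G4
        rwa [smul_smul, inv_mul_cancel₀ h4ne, one_smul] at h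
      obtain ⟨ε, hε, hεeq⟩ := prod_map_perm (F := F) (cs.map b)
        (((i, false) :: (i, true) :: rest).map b) (hperm.map b)
      have hcsP : (cs.map (fun x => ι F (b x))).prod = ε • (x1 * (y1 * restP)) := by
        have h1 : (cs.map (fun x => ι F (b x))) = (cs.map b).map (ι F) := by
          simp [List.map_map, Function.comp]
        rw [h1, hεeq]
        congr 1
        simp [List.map_map, Function.comp_def, hx1, hy1, hrestPdef]
      rw [hcsP, mul_smul_comm]
      refine Submodule.smul_mem _ _ ?_
      rw [mul_assoc] at Gmem
      exact Gmem

end Key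
end Stmt14Aux

open PolarGrass Module in
/-- `char F ≠ 2`, a non-degenerate quadratic form with `N = 2n`, Witt index
`n ≥ 2` (anisotropic defect 0). For `1 ≤ k ≤ n` the Grassmann image is all of `⋀^k V`. -/
theorem stmt14 (F : Type*) [Field F] (V : Type*) [AddCommGroup V] [Module F V]
    [FiniteDimensional F V]
    (hchar : ringChar F ≠ 2)
    (q : QuadraticForm F V)
    (hndeg : ∀ v : V, q v = 0 → (∀ w : V, polarF F V q v w = 0) → v = 0)
    (n : ℕ) (hn : 2 ≤ n)
    (hdec : HasWittDecomp F V (polarF F V q) (fun v => q v = 0) (radSetQ F V q) n 0 0)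
    (hNV : Module.finrank F V = 2 * n) :
    ∀ k : ℕ, 1 ≤ k → k ≤ n →
      grassmann F V (TotSingQ F V q) k = ⋀[F]^k V := by
  classical
  obtain ⟨W, W₀, R, hint, horth, hblocks, hanis, hW0rank, hRset, hRrank⟩ := hdec
  have hW0 : W₀ = ⊥ := Submodule.finrank_eq_zero.mp hW0rank
  have hR : R = ⊥ := Submodule.finrank_eq_zero.mp hRrank
  choose e f hWi hqe hqf hBef using hblocks
  set g : Fin n × Bool → V := fun x => if x.2 = true then f x.1 else e x.1 with hg
  have hge : ∀ i, g (i, false) = e i := fun i => rfl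
  have hgf : ∀ i, g (i, true) = f i := fun i => rfl
  have hgW : ∀ x : Fin n × Bool, g x ∈ W x.1 := by
    rintro ⟨i, s⟩
    cases s
    · rw [hge, hWi i]; exact Submodule.subset_span (Set.mem_insert _ _)
    · rw [hgf, hWi i]; exact Submodule.subset_span (Set.mem_insert_of_mem _ rfl)
  have htop : ⊤ ≤ Submodule.span F (Set.range g) := by
    have h1 : iSup (Sum.elim W ![W₀, R]) = ⊤ := hint.submodule_iSup_eq_top
    rw [iSup_sum] at h1
    have h2 : (⨆ jj : Fin 2, Sum.elim W ![W₀, R] (Sum.inr jj)) = ⊥ := by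
      refine le_antisymm (iSup_le fun jj => ?_) bot_le
      fin_cases jj
      · simpa using hW0.le
      · simpa using hR.le
    rw [h2, sup_bot_eq] at h1
    rw [← h1]
    refine iSup_le fun i => ?_
    rw [show Sum.elim W ![W₀, R] (Sum.inl i) = W i from rfl, hWi i]
    refine Submodule.span_le.mpr ?_
    rintro z hz
    rcases hz with rfl | hz
    · exact Submodule.subset_span ⟨(i, false), rfl⟩
    · rw [Set.mem_singleton_iff] at hz; subst hz
      exact Submodule.subset_span ⟨(i, true), rfl⟩
  have hcardeq : Fintype.card (Fin n × Bool) = Module.finrank F V := by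
    simp [hNV, Nat.mul_comm]
  let b : Basis (Fin n × Bool) F V := basisOfTopLeSpanOfCardEqFinrank g htop hcardeq
  have hb : ⇑b = g := coe_basisOfTopLeSpanOfCardEqFinrank g htop hcardeq
  have hq0 : ∀ x, q (b x) = 0 := by
    rintro ⟨i, s⟩
    rw [hb]
    cases s
    · exact hqe i
    · exact hqf i
  have hB0 : ∀ x y : Fin n × Bool, x.1 ≠ y.1 → QuadraticMap.polar ⇑q (b x) (b y) = 0 := by
    intro x y hxy
    rw [hb]
    exact horth (Sum.inl x.1) (Sum.inl y.1) (by simpa using hxy) _ (hgW x) _ (hgW y)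
  have hB1 : ∀ x y : Fin n × Bool, x.1 = y.1 → x.2 ≠ y.2 →
      QuadraticMap.polar ⇑q (b x) (b y) = 1 := by
    rintro ⟨i, s⟩ ⟨i', s'⟩ h1 h2
    simp only at h1
    subst h1
    rw [hb]
    cases s <;> cases s'
    · simp at h2
    · exact hBef i
    · rw [QuadraticMap.polar_comm]; exact hBef i
    · simp at h2
  have hchar2 : (2 : F) ≠ 0 := Ring.two_ne_zero hchar
  intro k hk1 hkn
  refine le_antisymm ?_ ?_
  · refine Submodule.span_le.mpr ?_
    rintro x ⟨v, -, -, -, rfl⟩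
    exact ExteriorAlgebra.ιMulti_range F k ⟨v, rfl⟩
  · rw [← ExteriorAlgebra.ιMulti_span_fixedDegree]
    refine Submodule.span_le.mpr ?_
    rintro x ⟨v, rfl⟩
    have hveq : v = fun t => ∑ x : Fin n × Bool, b.repr (v t) x • b x := by
      funext t; exact (b.sum_repr (v t)).symm
    have hexpand : ExteriorAlgebra.ιMulti F k v
        = ∑ r : Fin k → (Fin n × Bool), (∏ t, b.repr (v t) (r t)) •
            ExteriorAlgebra.ιMulti F k (fun t => b (r t)) := by
      conv_lhs => rw [hveq]
      rw [show ((ExteriorAlgebra.ιMulti F k) (fun t => ∑ x : Fin n × Bool, b.repr (v t) x • b x))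
          = (ExteriorAlgebra.ιMulti F k).toMultilinearMap
              (fun t => ∑ x : Fin n × Bool, b.repr (v t) x • b x) from rfl]
      rw [MultilinearMap.map_sum]
      refine Finset.sum_congr rfl ?_
      intro r _
      rw [MultilinearMap.map_smul_univ]
      rfl
    rw [hexpand]
    refine Submodule.sum_mem _ ?_
    intro r _
    refine Submodule.smul_mem _ _ ?_
    by_cases hinj : Function.Injective r
    · have hres := Stmt14Aux.key q b hq0 hB1 hB0 hchar2 k n [] (List.ofFn r) ∅
        (le_trans (Finset.card_le_univ _) (by simp))
        (fun u hu => absurd hu List.not_mem_nil)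
        (fun u hu => absurd hu List.not_mem_nil)
        (fun u hu => absurd hu List.not_mem_nil)
        (fun u hu => absurd hu List.not_mem_nil)
        (fun u hu => absurd hu List.not_mem_nil)
        List.Pairwise.nil
        (List.nodup_ofFn.mpr hinj)
        (fun x _ => Finset.notMem_empty x.1)
        (by simp)
        (by simpa using hkn)
      rw [ExteriorAlgebra.ιMulti_apply]
      simpa [List.map_ofFn, Function.comp_def] using hres
    · obtain ⟨t, s, hts, hne⟩ := Function.not_injective_iff.mp hinj
      have hz : ExteriorAlgebra.ιMulti F k (fun t => b (r t)) = 0 :=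
        AlternatingMap.map_eq_zero_of_eq _ _ (by rw [hts]) hne
      rw [hz]
      exact Submodule.zero_mem _
end
end

section
/- Suppose char(F) = 2 and q is non-degenerate with N = 2n and Witt index n ≥ 2 (anisotropic defect 0), i.e., V is an f_q-orthogonal direct sum of n hyperbolic planes for q. Then for every integer k with 1 ≤ k ≤ n, the Grassmann image G_k(q) coincides with the symplectic Grassmann image S_k(f_q). -/
noncomputable section

section Stmt16Aux

open QuadraticMap Submodule

variable {F : Type*} [Field F] {V : Type*} [AddCommGroup V] [Module F V]
variable (q : QuadraticForm F V)

private lemma addF {F : Type*} [Field F] (h2 : (2:F) = 0) (a : F) : a + a = 0 := by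
  rw [← two_mul, h2, zero_mul]

private lemma char2_eq {F : Type*} [Field F] (h2 : (2:F) = 0) {a b : F}
    (h : a + b = 0) : a = b := by
  have := addF h2 b
  linear_combination h - this

private lemma addV (h2 : (2:F) = 0) (x : V) : x + x = 0 := by
  rw [← two_smul F x, h2, zero_smul]

private lemma char2_eqV (h2 : (2:F) = 0) {x y : V} (h : x + y = 0) : x = y := by
  have hy := addV (V := V) h2 y
  have : x + y + y = 0 + y := by rw [h]
  rwa [add_assoc, hy, add_zero, zero_add] at this

private lemma qadd (x y : V) : q (x + y) = q x + q y + polar ⇑q x y := by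
  simp only [QuadraticMap.polar]
  ring

private lemma qsmul (a : F) (x : V) : q (a • x) = a * a * q x := by
  rw [QuadraticMap.map_smul, smul_eq_mul]

private lemma Bself (h2 : (2:F) = 0) (x : V) : polar ⇑q x x = 0 := by
  simp only [QuadraticMap.polar, addV h2 x, map_zero, zero_sub]
  linear_combination -(addF h2 (q x))

private lemma polar_sum_left {ι : Type*} (s : Finset ι) (c : ι → F) (x : ι → V) (z : V) :
    polar ⇑q (∑ t ∈ s, c t • x t) z = ∑ t ∈ s, c t * polar ⇑q (x t) z := by
  classical
  induction s using Finset.induction with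
  | empty => simp
  | insert a s h ih =>
    rw [Finset.sum_insert h, polar_add_left, polar_smul_left, ih, Finset.sum_insert h,
      smul_eq_mul]

private lemma B_span {s : Set V} (hs : ∀ x ∈ s, ∀ y ∈ s, polar ⇑q x y = 0) :
    ∀ x ∈ span F s, ∀ y ∈ span F s, polar ⇑q x y = 0 := by
  intro x hx y hy
  refine Submodule.span_induction₂ (p := fun x y _ _ => polar ⇑q x y = 0)
    (fun x y hx hy => hs x hx y hy) ?_ ?_ ?_ ?_ ?_ ?_ hx hy
  · intro y _; simp
  · intro x _; simp
  · intro a b z _ _ _ h1 h2; simp [h1, h2]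
  · intro a b z _ _ _ h1 h2; simp [h1, h2]
  · intro r a b _ _ h; simp [h]
  · intro r a b _ _ h; simp [h]

private lemma q_span (h2 : (2:F) = 0) {s : Set V}
    (hs : ∀ x ∈ s, ∀ y ∈ s, polar ⇑q x y = 0)
    (hq : ∀ x ∈ s, q x = 0) : ∀ x ∈ span F s, q x = 0 := by
  intro x hx
  induction hx using Submodule.span_induction with
  | mem x h => exact hq x h
  | zero => simp
  | add x y hx hy ihx ihy =>
    rw [qadd, ihx, ihy, B_span q hs x hx y hy]; ring
  | smul a x hx ih => rw [qsmul, ih, mul_zero]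

/-- perp of two vectors inside U -/
private def perp2 (U : Submodule F V) (p p' : V) : Submodule F V where
  carrier := {x | x ∈ U ∧ polar ⇑q x p = 0 ∧ polar ⇑q x p' = 0}
  add_mem' := by
    rintro a b ⟨ha, hap, hap'⟩ ⟨hb, hbp, hbp'⟩
    exact ⟨add_mem ha hb, by rw [polar_add_left, hap, hbp, add_zero],
      by rw [polar_add_left, hap', hbp', add_zero]⟩
  zero_mem' := ⟨zero_mem _, polar_zero_left _ _, polar_zero_left _ _⟩
  smul_mem' := by
    rintro a x ⟨hx, hxp, hxp'⟩
    exact ⟨smul_mem _ _ hx, by rw [polar_smul_left, hxp, smul_zero],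
      by rw [polar_smul_left, hxp', smul_zero]⟩

private lemma mem_perp2 {U : Submodule F V} {p p' x : V} :
    x ∈ perp2 q U p p' ↔ x ∈ U ∧ polar ⇑q x p = 0 ∧ polar ⇑q x p' = 0 := Iff.rfl

/-- hyperbolic-space invariant -/
private structure IsHyp (U : Submodule F V) : Prop where
  nondeg : ∀ x ∈ U, (∀ y ∈ U, polar ⇑q x y = 0) → x = 0
  lag : ∃ L : Submodule F V, L ≤ U ∧ (∀ x ∈ L, q x = 0) ∧
      ∀ x ∈ U, (∀ y ∈ L, polar ⇑q x y = 0) → x ∈ L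

private lemma B_of_sing {L : Submodule F V} (hL : ∀ x ∈ L, q x = 0) :
    ∀ x ∈ L, ∀ y ∈ L, polar ⇑q x y = 0 := by
  intro x hx y hy
  have h1 := hL _ (add_mem hx hy)
  have h2 := hL _ hx
  have h3 := hL _ hy
  have := qadd q x y
  rw [h1, h2, h3] at this
  linear_combination -this

private lemma exists_sing (h2 : (2:F) = 0) {U : Submodule F V} (hU : IsHyp q U)
    {v₀ : V} (hv₀ : v₀ ∈ U) (hne : v₀ ≠ 0) :
    ∃ u ∈ U, q u = 0 ∧ polar ⇑q u v₀ ≠ 0 := by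
  obtain ⟨L, hLU, hLs, hLp⟩ := hU.lag
  by_cases hc : ∃ s ∈ L, polar ⇑q s v₀ ≠ 0
  · obtain ⟨s, hsL, hs⟩ := hc
    exact ⟨s, hLU hsL, hLs _ hsL, hs⟩
  · push_neg at hc
    have hv₀L : v₀ ∈ L := hLp v₀ hv₀ (fun y hy => by rw [polar_comm]; exact hc y hy)
    have hqv₀ : q v₀ = 0 := hLs _ hv₀L
    have : ¬(∀ y ∈ U, polar ⇑q v₀ y = 0) := fun h => hne (hU.nondeg v₀ hv₀ h)
    push_neg at this
    obtain ⟨x, hxU, hγ⟩ := this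
    set γ := polar ⇑q x v₀ with hγdef
    have hγne : γ ≠ 0 := by rw [hγdef, polar_comm]; exact hγ
    refine ⟨x + (q x / γ) • v₀, add_mem hxU (smul_mem _ _ (hLU hv₀L)), ?_, ?_⟩
    · rw [qadd, qsmul, polar_smul_right, smul_eq_mul, hqv₀, ← hγdef,
        div_mul_cancel₀ _ hγne, mul_zero, add_zero]
      exact addF h2 (q x)
    · rw [polar_add_left, polar_smul_left, Bself q h2, smul_zero, add_zero, ← hγdef]
      exact hγne

private lemma exists_plane (h2 : (2:F) = 0) {U : Submodule F V} (hU : IsHyp q U)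
    {w : V} (hw : w ∈ U) (hne : w ≠ 0) :
    ∃ p p', p ∈ U ∧ p' ∈ U ∧ q p = 0 ∧ q p' = 0 ∧ polar ⇑q p p' = 1 ∧
      w = p' + q w • p := by
  obtain ⟨u, huU, hqu, hγ⟩ := exists_sing q h2 hU hw hne
  set γ := polar ⇑q u w with hγdef
  set p := γ⁻¹ • u with hpdef
  have hqp : q p = 0 := by rw [hpdef, qsmul, hqu, mul_zero]
  have hpw : polar ⇑q p w = 1 := by
    rw [hpdef, polar_smul_left, smul_eq_mul, ← hγdef, inv_mul_cancel₀ hγ]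
  set p' := w + q w • p with hp'def
  have hqp' : q p' = 0 := by
    rw [hp'def, qadd, qsmul, hqp, polar_smul_right, smul_eq_mul, polar_comm, hpw, mul_one,
      mul_zero, add_zero]
    exact addF h2 (q w)
  refine ⟨p, p', smul_mem _ _ huU, add_mem hw (smul_mem _ _ (smul_mem _ _ huU)), hqp, hqp',
    ?_, ?_⟩
  · rw [hp'def, polar_add_right, polar_smul_right, hpw, Bself q h2, smul_zero, add_zero]
  · rw [hp'def, add_assoc, addV h2, add_zero]

section Plane

variable (h2 : (2:F) = 0) {U : Submodule F V} {p p' : V}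

/-- projection away from the hyperbolic plane spanned by `p`, `p'` -/
private def piL (p p' : V) : V →ₗ[F] V :=
  LinearMap.id + ((QuadraticMap.polarBilin q p').smulRight p) +
    ((QuadraticMap.polarBilin q p).smulRight p')

private lemma piL_apply (x : V) :
    piL q p p' x = x + polar ⇑q p' x • p + polar ⇑q p x • p' := rfl

variable (hp : q p = 0) (hp' : q p' = 0) (hpp' : polar ⇑q p p' = 1)

include h2 hp hp' hpp'

private lemma piL_perp (x : V) :
    polar ⇑q (piL q p p' x) p = 0 ∧ polar ⇑q (piL q p p' x) p' = 0 := by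
  constructor
  · rw [piL_apply, polar_add_left, polar_add_left, polar_smul_left, polar_smul_left,
      Bself q h2, polar_comm ⇑q p' p, hpp', smul_eq_mul, smul_eq_mul, mul_zero, mul_one,
      add_zero, polar_comm ⇑q x p]
    exact addF h2 _
  · rw [piL_apply, polar_add_left, polar_add_left, polar_smul_left, polar_smul_left,
      Bself q h2, hpp', smul_eq_mul, smul_eq_mul, mul_zero, mul_one, add_zero,
      polar_comm ⇑q x p']
    linear_combination addF h2 (polar ⇑q p' x)

private lemma piL_mem (hpU : p ∈ U) (hp'U : p' ∈ U) {x : V} (hx : x ∈ U) :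
    piL q p p' x ∈ perp2 q U p p' := by
  refine ⟨?_, (piL_perp q h2 hp hp' hpp' x).1, (piL_perp q h2 hp hp' hpp' x).2⟩
  rw [piL_apply]
  exact add_mem (add_mem hx (smul_mem _ _ hpU)) (smul_mem _ _ hp'U)

omit hp hp' hpp'

private lemma piL_decomp (x : V) :
    x = piL q p p' x + (polar ⇑q p' x • p + polar ⇑q p x • p') := by
  rw [piL_apply, add_assoc, add_assoc, ← add_assoc (polar ⇑q p' x • p), addV h2, add_zero]

include hp hp' hpp'

private lemma polar_piL_piL (x y : V) :
    polar ⇑q (piL q p p' x) (piL q p p' y) =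
      polar ⇑q x y + polar ⇑q p x * polar ⇑q p' y + polar ⇑q p' x * polar ⇑q p y := by
  rw [piL_apply, piL_apply]
  rw [polar_add_left, polar_add_left, polar_add_right, polar_add_right, polar_add_right,
    polar_add_right, polar_add_right, polar_add_right]
  rw [polar_smul_left, polar_smul_left, polar_smul_left, polar_smul_left, polar_smul_right,
    polar_smul_right, polar_smul_right, polar_smul_right, polar_smul_left, polar_smul_left,
    polar_smul_right, polar_smul_right]
  simp only [smul_eq_mul, Bself q h2, hpp', polar_comm ⇑q p' p, mul_zero, mul_one, add_zero,
    zero_add, mul_zero]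
  rw [polar_comm ⇑q x p, polar_comm ⇑q x p']
  ring_nf
  linear_combination (polar ⇑q p x * polar ⇑q p' y + polar ⇑q p' x * polar ⇑q p y) * h2

private lemma q_piL (x : V) :
    q (piL q p p' x) = q x + polar ⇑q p x * polar ⇑q p' x := by
  rw [piL_apply, add_assoc, qadd, qadd, qsmul, qsmul, hp, hp', polar_smul_left,
    polar_smul_right, polar_add_right, polar_smul_right, polar_smul_right, hpp']
  simp only [smul_eq_mul, mul_zero, mul_one, zero_add, add_zero]
  rw [polar_comm ⇑q x p, polar_comm ⇑q x p']
  ring_nf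
  linear_combination (polar ⇑q p x * polar ⇑q p' x) * h2

end Plane

private lemma decomp2 (h2 : (2:F) = 0) (l u w : V) (a b : F) :
    ((l + a • u) + b • w) + (a • u + b • w) = l := by
  have ha := addF h2 a
  have hb := addF h2 b
  have key : ((l + a • u) + b • w) + (a • u + b • w) = l + (a + a) • u + (b + b) • w := by
    module
  rw [key, ha, hb, zero_smul, zero_smul, add_zero, add_zero]

private lemma Msing (h2 : (2:F) = 0) {U : Submodule F V} {p p' : V}
    {L : Submodule F V} (hLs : ∀ x ∈ L, q x = 0)
    {z l₀ r : V} (hl₀ : l₀ ∈ L) (hzlr : z = l₀ + r)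
    (hr : ∀ k ∈ perp2 q U p p', polar ⇑q k r = 0)
    (hqz : q z = 0) :
    ∀ x ∈ (L ⊓ perp2 q U p p') ⊔ Submodule.span F {z}, q x = 0 := by
  intro x hx
  rw [Submodule.mem_sup] at hx
  obtain ⟨k, hk, m, hm, rfl⟩ := hx
  rw [Submodule.mem_span_singleton] at hm
  obtain ⟨c, rfl⟩ := hm
  obtain ⟨hkL, hkP⟩ := Submodule.mem_inf.mp hk
  rw [qadd, qsmul, hqz, mul_zero, polar_smul_right, hLs k hkL, hzlr, polar_add_right,
    B_of_sing q hLs k hkL l₀ hl₀, hr k hkP]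
  simp

private lemma step (h2 : (2:F) = 0) {U : Submodule F V} (hU : IsHyp q U)
    {p p' : V} (hpU : p ∈ U) (hp'U : p' ∈ U)
    (hp : q p = 0) (hp' : q p' = 0) (hpp' : polar ⇑q p p' = 1) :
    IsHyp q (perp2 q U p p') := by
  obtain ⟨L, hLU, hLs, hLp⟩ := hU.lag
  have hLB := B_of_sing q hLs
  constructor
  · rintro x ⟨hxU, hxp, hxp'⟩ hall
    refine hU.nondeg x hxU (fun y hyU => ?_)
    rw [piL_decomp q h2 (p := p) (p' := p') y, polar_add_right, polar_add_right,
      polar_smul_right, polar_smul_right, hxp, hxp', smul_zero, smul_zero, add_zero,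
      add_zero]
    exact hall _ (piL_mem q h2 hp hp' hpp' hpU hp'U hyU)
  · have hKz_mem : ∀ {z : V}, z ∈ perp2 q U p p' →
        (L ⊓ perp2 q U p p') ⊔ Submodule.span F {z} ≤ perp2 q U p p' := fun {z} hz =>
      sup_le inf_le_right (Submodule.span_le.mpr (by simpa using hz))
    have hzK_self : ∀ z : V, z ∈ (L ⊓ perp2 q U p p') ⊔ Submodule.span F {z} := fun z =>
      Submodule.mem_sup_right (Submodule.mem_span_singleton_self z)
    by_cases hex : ∃ x₀ ∈ L, polar ⇑q p x₀ ≠ 0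
    · obtain ⟨x₀, hx₀L, hx₀⟩ := hex
      have hxL : (polar ⇑q p x₀)⁻¹ • x₀ ∈ L := Submodule.smul_mem _ _ hx₀L
      set x := (polar ⇑q p x₀)⁻¹ • x₀ with hxdef
      have hpx : polar ⇑q p x = 1 := by
        rw [hxdef, polar_smul_right, smul_eq_mul, inv_mul_cancel₀ hx₀]
      set s := polar ⇑q p' x with hsdef
      by_cases hkey : ∃ l ∈ L, polar ⇑q p l = 0 ∧ polar ⇑q p' l ≠ 0
      · -- the generic case: both dual functionals realized
        obtain ⟨l, hlL, hlp, hlp'⟩ := hkey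
        have hy'L : (polar ⇑q p' l)⁻¹ • l ∈ L := Submodule.smul_mem _ _ hlL
        set y' := (polar ⇑q p' l)⁻¹ • l with hy'def
        have hpy' : polar ⇑q p y' = 0 := by
          rw [hy'def, polar_smul_right, hlp, smul_zero]
        have hp'y' : polar ⇑q p' y' = 1 := by
          rw [hy'def, polar_smul_right, smul_eq_mul, inv_mul_cancel₀ hlp']
        have hx'L : x + s • y' ∈ L := add_mem hxL (Submodule.smul_mem _ _ hy'L)
        set x' := x + s • y' with hx'def
        have hpx' : polar ⇑q p x' = 1 := by
          rw [hx'def, polar_add_right, hpx, polar_smul_right, hpy', smul_zero, add_zero]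
        have hp'x' : polar ⇑q p' x' = 0 := by
          rw [hx'def, polar_add_right, ← hsdef, polar_smul_right, hp'y', smul_eq_mul,
            mul_one]
          exact addF h2 s
        set z := x' + p' with hzdef
        have hzP2 : z ∈ perp2 q U p p' := by
          refine ⟨add_mem (hLU hx'L) hp'U, ?_, ?_⟩
          · rw [hzdef, polar_add_left, polar_comm ⇑q x' p, hpx', polar_comm ⇑q p' p, hpp']
            exact addF h2 1
          · rw [hzdef, polar_add_left, Bself q h2, add_zero, polar_comm ⇑q x' p']
            exact hp'x'
        have hqz : q z = 0 := by
          rw [hzdef, qadd, hLs _ hx'L, hp', polar_comm ⇑q x' p', hp'x', add_zero, add_zero]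
        refine ⟨(L ⊓ perp2 q U p p') ⊔ Submodule.span F {z}, hKz_mem hzP2,
          Msing q h2 hLs hx'L hzdef (fun k hk => hk.2.2) hqz, ?_⟩
        intro y₀ hy₀P2 hy₀M
        have hy₀z : polar ⇑q y₀ z = 0 := hy₀M z (hzK_self z)
        have hy₀K : ∀ k ∈ L ⊓ perp2 q U p p', polar ⇑q y₀ k = 0 := fun k hk =>
          hy₀M k (Submodule.mem_sup_left hk)
        have hy₀p : polar ⇑q y₀ p = 0 := hy₀P2.2.1
        have hy₀p' : polar ⇑q y₀ p' = 0 := hy₀P2.2.2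
        have hy₀x' : polar ⇑q y₀ x' = 0 := by
          have hxz : x' = z + p' := by rw [hzdef, add_assoc, addV h2, add_zero]
          rw [hxz, polar_add_right, hy₀z, hy₀p', add_zero]
        set d := polar ⇑q y₀ y' with hddef
        have hy₁P2 : y₀ + d • z ∈ perp2 q U p p' :=
          add_mem hy₀P2 (Submodule.smul_mem _ _ hzP2)
        set y₁ := y₀ + d • z with hy₁def
        have hzx' : polar ⇑q z x' = 0 := by
          rw [hzdef, polar_add_left, Bself q h2, hp'x', add_zero]
        have hzw : polar ⇑q z (y' + p) = 1 := by
          rw [hzdef, polar_add_left, polar_add_right, polar_add_right, hLB x' hx'L y' hy'L,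
            polar_comm ⇑q x' p, hpx', hp'y', polar_comm ⇑q p' p, hpp']
          linear_combination h2
        have hy₁w : polar ⇑q y₁ (y' + p) = 0 := by
          rw [hy₁def, polar_add_left, polar_smul_left, hzw, smul_eq_mul, mul_one,
            polar_add_right, ← hddef, hy₀p, add_zero]
          exact addF h2 d
        have hy₁p : polar ⇑q y₁ p = 0 := hy₁P2.2.1
        have hy₁y' : polar ⇑q y₁ y' = 0 := by
          have hyw : y' = (y' + p) + p := by rw [add_assoc, addV h2, add_zero]
          rw [hyw, polar_add_right, hy₁w, hy₁p, add_zero]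
        have hy₁x' : polar ⇑q y₁ x' = 0 := by
          rw [hy₁def, polar_add_left, hy₀x', polar_smul_left, hzx', smul_zero, add_zero]
        have hy₁K : ∀ k ∈ L ⊓ perp2 q U p p', polar ⇑q y₁ k = 0 := by
          intro k hk
          obtain ⟨hkL, hkP⟩ := Submodule.mem_inf.mp hk
          have hzk : polar ⇑q z k = 0 := by
            rw [hzdef, polar_add_left, hLB x' hx'L k hkL, polar_comm ⇑q p' k, hkP.2.2,
              add_zero]
          rw [hy₁def, polar_add_left, hy₀K k hk, polar_smul_left, hzk, smul_zero, add_zero]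
        have hy₁L : ∀ l' ∈ L, polar ⇑q y₁ l' = 0 := by
          intro l' hl'
          have hlK : l' + polar ⇑q p l' • x' + polar ⇑q p' l' • y' ∈
              L ⊓ perp2 q U p p' := by
            have hmemL : l' + polar ⇑q p l' • x' + polar ⇑q p' l' • y' ∈ L :=
              add_mem (add_mem hl' (Submodule.smul_mem _ _ hx'L))
                (Submodule.smul_mem _ _ hy'L)
            refine Submodule.mem_inf.mpr ⟨hmemL, hLU hmemL, ?_, ?_⟩
            · rw [polar_comm, polar_add_right, polar_add_right, polar_smul_right,
                polar_smul_right, hpx', hpy']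
              simp only [smul_eq_mul, mul_one, mul_zero, smul_zero, add_zero]
              exact addF h2 _
            · rw [polar_comm, polar_add_right, polar_add_right, polar_smul_right,
                polar_smul_right, hp'x', hp'y']
              simp only [smul_eq_mul, mul_one, mul_zero, smul_zero, zero_add, add_zero]
              exact addF h2 _
          have hld : (l' + polar ⇑q p l' • x' + polar ⇑q p' l' • y') +
              (polar ⇑q p l' • x' + polar ⇑q p' l' • y') = l' := decomp2 h2 l' x' y' _ _
          calc polar ⇑q y₁ l'
              = polar ⇑q y₁ ((l' + polar ⇑q p l' • x' + polar ⇑q p' l' • y') +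
                (polar ⇑q p l' • x' + polar ⇑q p' l' • y')) := by rw [hld]
            _ = 0 := by
                rw [polar_add_right, hy₁K _ hlK, polar_add_right, polar_smul_right,
                  polar_smul_right, hy₁x', hy₁y']
                simp
        have hy₁U : y₁ ∈ U := hy₁P2.1
        have hy₁K' : y₁ ∈ L ⊓ perp2 q U p p' :=
          Submodule.mem_inf.mpr ⟨hLp y₁ hy₁U hy₁L, hy₁P2⟩
        have hy₀eq : y₀ = y₁ + d • z := by rw [hy₁def, add_assoc, addV h2, add_zero]
        rw [hy₀eq]
        exact add_mem (Submodule.mem_sup_left hy₁K')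
          (Submodule.mem_sup_right (Submodule.smul_mem _ _ (Submodule.mem_span_singleton_self z)))
      · push_neg at hkey
        have hprop : ∀ l ∈ L, polar ⇑q p' l = s * polar ⇑q p l := by
          intro l hl
          have hlL' : l + polar ⇑q p l • x ∈ L := add_mem hl (Submodule.smul_mem _ _ hxL)
          have h1 : polar ⇑q p (l + polar ⇑q p l • x) = 0 := by
            rw [polar_add_right, polar_smul_right, hpx, smul_eq_mul, mul_one]
            exact addF h2 _
          have h2' := hkey _ hlL' h1
          rw [polar_add_right, polar_smul_right, ← hsdef, smul_eq_mul] at h2'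
          rw [char2_eq h2 h2', mul_comm]
        by_cases hs : s = 0
        · have hp'L : ∀ l ∈ L, polar ⇑q p' l = 0 := fun l hl => by
            rw [hprop l hl, hs, zero_mul]
          set z := x + p' with hzdef
          have hzP2 : z ∈ perp2 q U p p' := by
            refine ⟨add_mem (hLU hxL) hp'U, ?_, ?_⟩
            · rw [hzdef, polar_add_left, polar_comm ⇑q x p, hpx, polar_comm ⇑q p' p, hpp']
              exact addF h2 1
            · rw [hzdef, polar_add_left, polar_comm ⇑q x p', ← hsdef, hs, Bself q h2,
                add_zero]
          have hqz : q z = 0 := by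
            rw [hzdef, qadd, hLs _ hxL, hp', polar_comm ⇑q x p', ← hsdef, hs, add_zero,
              add_zero]
          refine ⟨(L ⊓ perp2 q U p p') ⊔ Submodule.span F {z}, hKz_mem hzP2,
            Msing q h2 hLs hxL hzdef (fun k hk => hk.2.2) hqz, ?_⟩
          intro y₀ hy₀P2 hy₀M
          have hy₀z : polar ⇑q y₀ z = 0 := hy₀M z (hzK_self z)
          have hy₀x : polar ⇑q y₀ x = 0 := by
            have hxz : x = z + p' := by rw [hzdef, add_assoc, addV h2, add_zero]
            rw [hxz, polar_add_right, hy₀z, hy₀P2.2.2, add_zero]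
          have hy₀L : ∀ l ∈ L, polar ⇑q y₀ l = 0 := by
            intro l hl
            have hlL' : l + polar ⇑q p l • x ∈ L := add_mem hl (Submodule.smul_mem _ _ hxL)
            have hld : (l + polar ⇑q p l • x) + polar ⇑q p l • x = l := by
              rw [add_assoc, addV h2, add_zero]
            calc polar ⇑q y₀ l
                = polar ⇑q y₀ ((l + polar ⇑q p l • x) + polar ⇑q p l • x) := by rw [hld]
              _ = 0 := by
                  have hKmem : l + polar ⇑q p l • x ∈ L ⊓ perp2 q U p p' := by
                    refine Submodule.mem_inf.mpr ⟨hlL', hLU hlL', ?_, ?_⟩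
                    · rw [polar_comm, polar_add_right, polar_smul_right, hpx, smul_eq_mul,
                        mul_one]
                      exact addF h2 _
                    · rw [polar_comm]
                      exact hp'L _ hlL'
                  rw [polar_add_right, polar_smul_right, hy₀M _ (Submodule.mem_sup_left hKmem), hy₀x,
                    smul_zero, add_zero]
          have hy₀K : y₀ ∈ L ⊓ perp2 q U p p' :=
            Submodule.mem_inf.mpr ⟨hLp y₀ hy₀P2.1 hy₀L, hy₀P2⟩
          exact Submodule.mem_sup_left hy₀K
        · exfalso
          set pt := p' + s • p with hptdef
          have hptL : ∀ l ∈ L, polar ⇑q pt l = 0 := fun l hl => by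
            rw [hptdef, polar_add_left, polar_smul_left, hprop l hl, smul_eq_mul]
            exact addF h2 _
          have hptU : pt ∈ U := add_mem hp'U (Submodule.smul_mem _ _ hpU)
          have hptmem : pt ∈ L := hLp pt hptU (fun y hy => hptL y hy)
          have hq0 : q pt = 0 := hLs _ hptmem
          rw [hptdef, qadd, hp', qsmul, hp, mul_zero, polar_smul_right,
            polar_comm ⇑q p' p, hpp', smul_eq_mul, mul_one, zero_add, zero_add] at hq0
          exact hs hq0
    · push_neg at hex
      by_cases hex' : ∃ y₀ ∈ L, polar ⇑q p' y₀ ≠ 0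
      · obtain ⟨yy, hyyL, hyy⟩ := hex'
        have hyL : (polar ⇑q p' yy)⁻¹ • yy ∈ L := Submodule.smul_mem _ _ hyyL
        set y := (polar ⇑q p' yy)⁻¹ • yy with hydef
        have hp'y : polar ⇑q p' y = 1 := by
          rw [hydef, polar_smul_right, smul_eq_mul, inv_mul_cancel₀ hyy]
        have hpy : polar ⇑q p y = 0 := by
          rw [hydef, polar_smul_right, hex yy hyyL, smul_zero]
        set z := y + p with hzdef
        have hzP2 : z ∈ perp2 q U p p' := by
          refine ⟨add_mem (hLU hyL) hpU, ?_, ?_⟩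
          · rw [hzdef, polar_add_left, polar_comm ⇑q y p, hpy, Bself q h2, add_zero]
          · rw [hzdef, polar_add_left, polar_comm ⇑q y p', hp'y, hpp']
            exact addF h2 1
        have hqz : q z = 0 := by
          rw [hzdef, qadd, hLs _ hyL, hp, polar_comm ⇑q y p, hpy, add_zero, add_zero]
        refine ⟨(L ⊓ perp2 q U p p') ⊔ Submodule.span F {z}, hKz_mem hzP2,
          Msing q h2 hLs hyL hzdef (fun k hk => hk.2.1) hqz, ?_⟩
        intro y₀ hy₀P2 hy₀M
        have hy₀z : polar ⇑q y₀ z = 0 := hy₀M z (hzK_self z)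
        have hy₀y : polar ⇑q y₀ y = 0 := by
          have hyz : y = z + p := by rw [hzdef, add_assoc, addV h2, add_zero]
          rw [hyz, polar_add_right, hy₀z, hy₀P2.2.1, add_zero]
        have hy₀L : ∀ l ∈ L, polar ⇑q y₀ l = 0 := by
          intro l hl
          have hlL' : l + polar ⇑q p' l • y ∈ L := add_mem hl (Submodule.smul_mem _ _ hyL)
          have hld : (l + polar ⇑q p' l • y) + polar ⇑q p' l • y = l := by
            rw [add_assoc, addV h2, add_zero]
          calc polar ⇑q y₀ l
              = polar ⇑q y₀ ((l + polar ⇑q p' l • y) + polar ⇑q p' l • y) := by rw [hld]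
            _ = 0 := by
                have hKmem : l + polar ⇑q p' l • y ∈ L ⊓ perp2 q U p p' := by
                  refine Submodule.mem_inf.mpr ⟨hlL', hLU hlL', ?_, ?_⟩
                  · rw [polar_comm]
                    exact hex _ hlL'
                  · rw [polar_comm, polar_add_right, polar_smul_right, hp'y, smul_eq_mul,
                      mul_one]
                    exact addF h2 _
                rw [polar_add_right, polar_smul_right, hy₀M _ (Submodule.mem_sup_left hKmem), hy₀y,
                  smul_zero, add_zero]
        have hy₀K : y₀ ∈ L ⊓ perp2 q U p p' :=
          Submodule.mem_inf.mpr ⟨hLp y₀ hy₀P2.1 hy₀L, hy₀P2⟩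
        exact Submodule.mem_sup_left hy₀K
      · push_neg at hex'
        exfalso
        have hpL : p ∈ L := hLp p hpU (fun y hy => hex y hy)
        have hp'L : p' ∈ L := hLp p' hp'U (fun y hy => hex' y hy)
        have h0 := hLB p hpL p' hp'L
        rw [hpp'] at h0
        exact one_ne_zero h0

private lemma key (h2 : (2:F) = 0) :
    ∀ (k : ℕ) (U : Submodule F V), IsHyp q U → ∀ v : Fin (k+1) → V,
      (∀ t, v t ∈ U) → LinearIndependent F v →
      (∀ i j, polar ⇑q (v i) (v j) = 0) → ∀ i₀ : Fin (k+1),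
      ∃ u ∈ U, q u = 0 ∧ polar ⇑q u (v i₀) ≠ 0 ∧
        ∀ j, j ≠ i₀ → polar ⇑q u (v j) = 0 := by
  intro k
  induction k with
  | zero =>
    intro U hU v hvU hli hiso i₀
    obtain ⟨u, hu, hqu, hne⟩ := exists_sing q h2 hU (hvU i₀) (hli.ne_zero i₀)
    exact ⟨u, hu, hqu, hne, fun j hj => absurd (Fin.ext (by omega)) hj⟩
  | succ k IH =>
    intro U hU v hvU hli hiso i₀
    obtain ⟨j₁, hj₁⟩ := exists_ne i₀
    obtain ⟨p, p', hpU, hp'U, hqp, hqp', hpp', hw⟩ :=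
      exists_plane q h2 hU (hvU j₁) (hli.ne_zero j₁)
    set c := q (v j₁) with hcdef
    -- the relation polar p' x = c * polar p x for x in the span
    have hrel : ∀ x : V, polar ⇑q x (v j₁) = 0 → polar ⇑q p' x = c * polar ⇑q p x := by
      intro x hx
      rw [hw, polar_add_right, polar_smul_right, smul_eq_mul] at hx
      have h' : polar ⇑q x p' = c * polar ⇑q x p := by
        have := char2_eq h2 hx
        rw [this]
      rw [polar_comm ⇑q p' x, polar_comm ⇑q p x, h']
    set U' := perp2 q U p p' with hU'def
    have hU' : IsHyp q U' := step q h2 hU hpU hp'U hqp hqp' hpp'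
    set v' : Fin (k+1) → V := fun t => piL q p p' (v (j₁.succAbove t)) with hv'def
    have hv'U : ∀ t, v' t ∈ U' := fun t =>
      piL_mem q h2 hqp hqp' hpp' hpU hp'U (hvU _)
    have hiso' : ∀ i j, polar ⇑q (v' i) (v' j) = 0 := by
      intro i j
      rw [hv'def]
      rw [polar_piL_piL q h2 hqp hqp' hpp', hiso,
        hrel _ (hiso (j₁.succAbove i) j₁), hrel _ (hiso (j₁.succAbove j) j₁)]
      ring_nf
      linear_combination (polar ⇑q p (v (j₁.succAbove i)) *
        polar ⇑q p (v (j₁.succAbove j)) * c) * h2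
    have hli' : LinearIndependent F v' := by
      rw [Fintype.linearIndependent_iff]
      intro g hg
      set y := ∑ t, g t • v (j₁.succAbove t) with hydef
      have hπy : piL q p p' y = 0 := by
        rw [hydef, map_sum]
        simp only [LinearMap.map_smul]
        exact hg
      have hyeq : y = polar ⇑q p' y • p + polar ⇑q p y • p' := by
        have := piL_decomp q h2 (p := p) (p' := p') y
        rw [hπy, zero_add] at this
        exact this
      have hyv : polar ⇑q y (v j₁) = 0 := by
        rw [hydef, polar_sum_left]
        exact Finset.sum_eq_zero fun t _ => by rw [hiso, mul_zero]
      set a := polar ⇑q p y with hadef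
      set b := polar ⇑q p' y with hbdef
      have hba : b = a * c := by
        have hcomp : polar ⇑q y (v j₁) = b + a * c := by
          rw [hyeq, hw]
          simp only [polar_add_left, polar_add_right, polar_smul_left, polar_smul_right,
            smul_eq_mul, Bself q h2, polar_comm ⇑q p' p, hpp']
          ring
        rw [hyv] at hcomp
        exact char2_eq h2 hcomp.symm
      have hyvj : y = a • v j₁ := by
        rw [hyeq, hba, hw, smul_add, smul_smul]
        exact add_comm _ _
      -- build the full relation
      have hrel0 : ∑ i, (j₁.insertNth (α := fun _ => F) (-a) g) i • v i = 0 := by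
        rw [Fin.sum_univ_succAbove (fun i => (j₁.insertNth (α := fun _ => F) (-a) g) i • v i) j₁]
        simp only [Fin.insertNth_apply_same, Fin.insertNth_apply_succAbove]
        rw [← hydef, hyvj, neg_smul, neg_add_cancel]
      have hall := Fintype.linearIndependent_iff.mp hli _ hrel0
      intro t
      have := hall (j₁.succAbove t)
      rwa [Fin.insertNth_apply_succAbove] at this
    obtain ⟨t₀, ht₀⟩ := Fin.exists_succAbove_eq (Ne.symm hj₁)
    obtain ⟨u, huU', hqu, hne, hzero⟩ := IH U' hU' v' hv'U hli' hiso' t₀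
    have huU : u ∈ U := huU'.1
    have hup : polar ⇑q u p = 0 := huU'.2.1
    have hup' : polar ⇑q u p' = 0 := huU'.2.2
    have hlift : ∀ x : V, polar ⇑q u x = polar ⇑q u (piL q p p' x) := by
      intro x
      conv_lhs => rw [piL_decomp q h2 (p := p) (p' := p') x]
      rw [polar_add_right, polar_add_right, polar_smul_right, polar_smul_right, hup, hup',
        smul_zero, smul_zero, add_zero, add_zero]
    refine ⟨u, huU, hqu, ?_, ?_⟩
    · rw [hlift]
      have hv'e : v' t₀ = piL q p p' (v i₀) := by simp only [hv'def]; rw [ht₀]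
      rw [← hv'e]
      exact hne
    · intro j hj
      by_cases hjj : j = j₁
      · subst hjj
        rw [hw, polar_add_right, polar_smul_right, hup, hup', smul_zero, add_zero]
      · obtain ⟨t, ht⟩ := Fin.exists_succAbove_eq hjj
        have htne : t ≠ t₀ := fun h => hj (by rw [← ht, h, ht₀])
        rw [hlift]
        have hv'e : v' t = piL q p p' (v j) := by simp only [hv'def]; rw [ht]
        rw [← hv'e]
        exact hzero t htne

open scoped Classical in
private lemma mainind {F : Type*} [Field F] {V : Type*} [AddCommGroup V] [Module F V]
    (q : QuadraticForm F V) (h2 : (2:F) = 0) (hHyp : IsHyp q ⊤) (k : ℕ) :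
    ∀ (c : ℕ) (v : Fin k → V), LinearIndependent F v →
      (∀ i j, polar ⇑q (v i) (v j) = 0) →
      ((Finset.univ.filter fun t => q (v t) ≠ 0).card ≤ c) →
      ExteriorAlgebra.ιMulti F k v ∈
        PolarGrass.grassmann F V (PolarGrass.TotSingQ F V q) k := by
  classical
  have hdone : ∀ v : Fin k → V, LinearIndependent F v →
      (∀ i j, polar ⇑q (v i) (v j) = 0) → (∀ t, q (v t) = 0) →
      ExteriorAlgebra.ιMulti F k v ∈
        PolarGrass.grassmann F V (PolarGrass.TotSingQ F V q) k := by
    intro v hli hiso hall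
    simp only [PolarGrass.grassmann, PolarGrass.grassmannIn]
    apply Submodule.subset_span
    refine ⟨v, fun t => Submodule.mem_top, hli, ?_, rfl⟩
    intro x hx
    refine q_span q h2 ?_ ?_ x hx
    · rintro a ⟨i, rfl⟩ b ⟨j, rfl⟩; exact hiso i j
    · rintro a ⟨i, rfl⟩; exact hall i
  intro c
  induction c with
  | zero =>
    intro v hli hiso hcard
    refine hdone v hli hiso fun t => ?_
    by_contra hq
    have hmem : t ∈ Finset.univ.filter fun t => q (v t) ≠ 0 :=
      Finset.mem_filter.mpr ⟨Finset.mem_univ t, hq⟩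
    have := Finset.card_pos.mpr ⟨t, hmem⟩
    omega
  | succ c ih =>
    intro v hli hiso hcard
    by_cases hall : ∀ t, q (v t) = 0
    · exact hdone v hli hiso hall
    push_neg at hall
    obtain ⟨i₀, hi₀⟩ := hall
    have hk : k ≠ 0 := by
      rintro rfl
      exact i₀.elim0
    obtain ⟨m, rfl⟩ := Nat.exists_eq_succ_of_ne_zero hk
    obtain ⟨u, huU, hqu, hγ, hzero⟩ :=
      key q h2 m ⊤ hHyp v (fun t => Submodule.mem_top) hli hiso i₀
    set γ := polar ⇑q u (v i₀) with hγdef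
    set u' := (q (v i₀) / γ) • u with hu'def
    have hqu' : q u' = 0 := by rw [hu'def, qsmul, hqu, mul_zero]
    have hu'j : ∀ j, j ≠ i₀ → polar ⇑q u' (v j) = 0 := fun j hj => by
      rw [hu'def, polar_smul_left, hzero j hj, smul_zero]
    have hu'i : polar ⇑q u' (v i₀) = q (v i₀) := by
      rw [hu'def, polar_smul_left, ← hγdef, smul_eq_mul, div_mul_cancel₀ _ hγ]
    set w := v i₀ + u' with hwdef
    have hqw : q w = 0 := by
      rw [hwdef, qadd, hqu', add_zero, polar_comm ⇑q (v i₀) u', hu'i]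
      exact addF h2 _
    have hwj : ∀ j, j ≠ i₀ → polar ⇑q w (v j) = 0 := fun j hj => by
      rw [hwdef, polar_add_left, hiso, hu'j j hj, add_zero]
    have hvsplit : v = Function.update v i₀ (u' + w) := by
      have h1 : u' + w = v i₀ := by
        rw [hwdef, add_comm (v i₀) u', ← add_assoc, addV h2, zero_add]
      rw [h1, Function.update_eq_self]
    have hstep : ∀ z : V, q z = 0 → (∀ j, j ≠ i₀ → polar ⇑q z (v j) = 0) →
        ExteriorAlgebra.ιMulti F (m+1) (Function.update v i₀ z) ∈
          PolarGrass.grassmann F V (PolarGrass.TotSingQ F V q) (m+1) := by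
      intro z hqz hzj
      by_cases hind : LinearIndependent F (Function.update v i₀ z)
      · apply ih _ hind
        · intro i j
          rcases eq_or_ne i i₀ with hi | hi <;> rcases eq_or_ne j i₀ with hj2 | hj2
          · subst hi; subst hj2
            simp only [Function.update_self]
            exact Bself q h2 z
          · subst hi
            rw [Function.update_self, Function.update_of_ne hj2]
            exact hzj j hj2
          · subst hj2
            rw [Function.update_self, Function.update_of_ne hi, polar_comm]
            exact hzj i hi
          · rw [Function.update_of_ne hi, Function.update_of_ne hj2]
            exact hiso i j
        · have hsub : (Finset.univ.filter fun t => q (Function.update v i₀ z t) ≠ 0) ⊆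
              (Finset.univ.filter fun t => q (v t) ≠ 0).erase i₀ := by
            intro t ht
            rw [Finset.mem_filter] at ht
            rcases eq_or_ne t i₀ with h | h
            · subst h
              rw [Function.update_self] at ht
              exact absurd hqz ht.2
            · rw [Function.update_of_ne h] at ht
              exact Finset.mem_erase.mpr
                ⟨h, Finset.mem_filter.mpr ⟨Finset.mem_univ t, ht.2⟩⟩
          have hmem : i₀ ∈ Finset.univ.filter fun t => q (v t) ≠ 0 :=
            Finset.mem_filter.mpr ⟨Finset.mem_univ _, hi₀⟩
          have hle := Finset.card_le_card hsub
          rw [Finset.card_erase_of_mem hmem] at hle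
          have hpos := Finset.card_pos.mpr ⟨i₀, hmem⟩
          omega
      · rw [AlternatingMap.map_linearDependent _ _ hind]
        exact Submodule.zero_mem _
    have hsum : ExteriorAlgebra.ιMulti F (m+1) v =
        ExteriorAlgebra.ιMulti F (m+1) (Function.update v i₀ u') +
        ExteriorAlgebra.ιMulti F (m+1) (Function.update v i₀ w) := by
      conv_lhs => rw [hvsplit]
      exact (ExteriorAlgebra.ιMulti F (m+1)).map_update_add v i₀ u' w
    rw [hsum]
    exact Submodule.add_mem _ (hstep u' hqu' hu'j) (hstep w hqw hwj)

end Stmt16Aux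

open PolarGrass Module in
/-- `char F = 2`, a non-degenerate quadratic form with `N = 2n`, Witt index
`n ≥ 2` (anisotropic defect 0). For `1 ≤ k ≤ n` the Grassmann image coincides with the
symplectic Grassmann image of the polarization `f_q`. -/
theorem stmt16 (F : Type*) [Field F] (V : Type*) [AddCommGroup V] [Module F V]
    [FiniteDimensional F V]
    (hchar : ringChar F = 2)
    (q : QuadraticForm F V)
    (hndeg : ∀ v : V, q v = 0 → (∀ w : V, polarF F V q v w = 0) → v = 0)
    (n : ℕ) (hn : 2 ≤ n)
    (hdec : HasWittDecomp F V (polarF F V q) (fun v => q v = 0) (radSetQ F V q) n 0 0)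
    (hNV : Module.finrank F V = 2 * n) :
    ∀ k : ℕ, 1 ≤ k → k ≤ n →
      grassmann F V (TotSingQ F V q) k = grassmann F V (TotSingB F V (polarF F V q)) k := by
  classical
  have h2 : (2:F) = 0 := by
    have h : ((2:ℕ):F) = 0 := by
      rw [← hchar]
      exact ringChar.Nat.cast_ringChar
    exact_mod_cast h
  obtain ⟨W, W₀, R, hInt, hOrth, hPl, -, hW₀, hRset, hR⟩ := hdec
  choose e f hWsp hqe hqf hef using hPl
  have hef' : ∀ i, QuadraticMap.polar ⇑q (e i) (f i) = 1 := hef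
  have hW₀bot : W₀ = ⊥ := Submodule.finrank_eq_zero.mp hW₀
  have hRbot : R = ⊥ := Submodule.finrank_eq_zero.mp hR
  have hBorth : ∀ (i j : Fin n), i ≠ j → ∀ x ∈ W i, ∀ y ∈ W j,
      QuadraticMap.polar ⇑q x y = 0 := by
    intro i j hij x hx y hy
    exact hOrth (Sum.inl i) (Sum.inl j) (by simpa using hij) x hx y hy
  have hememW : ∀ i, e i ∈ W i := fun i => by
    rw [hWsp i]; exact Submodule.subset_span (by simp)
  have hfmemW : ∀ i, f i ∈ W i := fun i => by
    rw [hWsp i]; exact Submodule.subset_span (by simp)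
  have hBee : ∀ i j, QuadraticMap.polar ⇑q (e i) (e j) = 0 := by
    intro i j
    rcases eq_or_ne i j with rfl | hij
    · exact Bself q h2 _
    · exact hBorth i j hij _ (hememW i) _ (hememW j)
  have hBff : ∀ i j, QuadraticMap.polar ⇑q (f i) (f j) = 0 := by
    intro i j
    rcases eq_or_ne i j with rfl | hij
    · exact Bself q h2 _
    · exact hBorth i j hij _ (hfmemW i) _ (hfmemW j)
  have hBef : ∀ i j, i ≠ j → QuadraticMap.polar ⇑q (e i) (f j) = 0 := fun i j hij =>
    hBorth i j hij _ (hememW i) _ (hfmemW j)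
  have hBfe : ∀ i j, i ≠ j → QuadraticMap.polar ⇑q (f i) (e j) = 0 := fun i j hij =>
    hBorth i j hij _ (hfmemW i) _ (hememW j)
  have hTopLe : ∀ x : V, x ∈ Submodule.span F (Set.range (Sum.elim e f)) := by
    intro x
    have h1 := hInt.submodule_iSup_eq_top
    have hle : (⨆ js : Fin n ⊕ Fin 2, Sum.elim W ![W₀, R] js) ≤
        Submodule.span F (Set.range (Sum.elim e f)) := by
      apply iSup_le
      rintro (i | j)
      · rw [show Sum.elim W ![W₀, R] (Sum.inl i) = W i from rfl, hWsp i]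
        apply Submodule.span_le.mpr
        intro y hy
        rcases Set.mem_insert_iff.mp hy with rfl | hy'
        · exact Submodule.subset_span ⟨Sum.inl i, rfl⟩
        · rw [Set.mem_singleton_iff] at hy'
          subst hy'
          exact Submodule.subset_span ⟨Sum.inr i, rfl⟩
      · have hj : (![W₀, R] j : Submodule F V) = ⊥ := by
          fin_cases j
          · exact hW₀bot
          · exact hRbot
        show (![W₀, R] j : Submodule F V) ≤ _
        rw [hj]
        exact bot_le
    have hx : x ∈ (⨆ js : Fin n ⊕ Fin 2, Sum.elim W ![W₀, R] js) := by
      rw [h1]; trivial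
    exact hle hx
  have hcoef : ∀ x : V, ∃ ab : (Fin n ⊕ Fin n) → F,
      x = ∑ t, ab t • Sum.elim e f t := by
    intro x
    obtain ⟨cc, hcc⟩ := Submodule.mem_span_range_iff_exists_fun F |>.mp (hTopLe x)
    exact ⟨cc, hcc.symm⟩
  have hpair_f : ∀ (ab : (Fin n ⊕ Fin n) → F) (j : Fin n),
      QuadraticMap.polar ⇑q (∑ t, ab t • Sum.elim e f t) (f j) = ab (Sum.inl j) := by
    intro ab j
    rw [polar_sum_left, Fintype.sum_sum_type]
    have hx1 : ∑ i, ab (Sum.inl i) *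
        QuadraticMap.polar ⇑q (Sum.elim e f (Sum.inl i)) (f j) = ab (Sum.inl j) := by
      rw [Finset.sum_eq_single j]
      · rw [show Sum.elim e f (Sum.inl j) = e j from rfl, hef' j, mul_one]
      · intro i _ hij
        rw [show Sum.elim e f (Sum.inl i) = e i from rfl, hBef i j hij, mul_zero]
      · intro h; exact absurd (Finset.mem_univ j) h
    have hx2 : ∑ i, ab (Sum.inr i) *
        QuadraticMap.polar ⇑q (Sum.elim e f (Sum.inr i)) (f j) = 0 :=
      Finset.sum_eq_zero fun i _ => by
        rw [show Sum.elim e f (Sum.inr i) = f i from rfl, hBff i j, mul_zero]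
    rw [hx1, hx2, add_zero]
  have hpair_e : ∀ (ab : (Fin n ⊕ Fin n) → F) (j : Fin n),
      QuadraticMap.polar ⇑q (∑ t, ab t • Sum.elim e f t) (e j) = ab (Sum.inr j) := by
    intro ab j
    rw [polar_sum_left, Fintype.sum_sum_type]
    have hx1 : ∑ i, ab (Sum.inl i) *
        QuadraticMap.polar ⇑q (Sum.elim e f (Sum.inl i)) (e j) = 0 :=
      Finset.sum_eq_zero fun i _ => by
        rw [show Sum.elim e f (Sum.inl i) = e i from rfl, hBee i j, mul_zero]
    have hx2 : ∑ i, ab (Sum.inr i) *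
        QuadraticMap.polar ⇑q (Sum.elim e f (Sum.inr i)) (e j) = ab (Sum.inr j) := by
      rw [Finset.sum_eq_single j]
      · rw [show Sum.elim e f (Sum.inr j) = f j from rfl,
          QuadraticMap.polar_comm ⇑q (f j) (e j), hef' j, mul_one]
      · intro i _ hij
        rw [show Sum.elim e f (Sum.inr i) = f i from rfl, hBfe i j hij, mul_zero]
      · intro h; exact absurd (Finset.mem_univ j) h
    rw [hx1, hx2, zero_add]
  have hHyp : IsHyp q ⊤ := by
    constructor
    · intro x _ hall
      obtain ⟨ab, rfl⟩ := hcoef x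
      have hz : ∀ t, ab t = 0 := by
        rintro (i | i)
        · rw [← hpair_f ab i]
          exact hall (f i) Submodule.mem_top
        · rw [← hpair_e ab i]
          exact hall (e i) Submodule.mem_top
      exact Finset.sum_eq_zero fun t _ => by rw [hz t, zero_smul]
    · refine ⟨Submodule.span F (Set.range e), le_top, ?_, ?_⟩
      · intro x hx
        refine q_span q h2 ?_ ?_ x hx
        · rintro a ⟨i, rfl⟩ b ⟨j, rfl⟩; exact hBee i j
        · rintro a ⟨i, rfl⟩; exact hqe i
      · intro x _ hperp
        obtain ⟨ab, rfl⟩ := hcoef x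
        have hz : ∀ i, ab (Sum.inr i) = 0 := by
          intro i
          rw [← hpair_e ab i]
          exact hperp (e i) (Submodule.subset_span ⟨i, rfl⟩)
        have hxe : (∑ t, ab t • Sum.elim e f t) = ∑ i, ab (Sum.inl i) • e i := by
          rw [Fintype.sum_sum_type,
            Finset.sum_eq_zero (fun i (_ : i ∈ Finset.univ) => by
              rw [hz i, zero_smul] :
              ∀ i ∈ Finset.univ, ab (Sum.inr i) • Sum.elim e f (Sum.inr i) = 0),
            add_zero]
          rfl
        rw [hxe]
        exact Submodule.sum_mem _ fun i _ =>
          Submodule.smul_mem _ _ (Submodule.subset_span ⟨i, rfl⟩)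
  intro k hk1 hkn
  apply le_antisymm
  · simp only [grassmann, grassmannIn]
    apply Submodule.span_le.mpr
    rintro x ⟨v, hvU, hli, hsing, rfl⟩
    refine Submodule.subset_span ⟨v, hvU, hli, ?_, rfl⟩
    intro a ha b hb
    show QuadraticMap.polar ⇑q a b = 0
    have h1 := hsing _ (Submodule.add_mem _ ha hb)
    have h2' := hsing a ha
    have h3 := hsing b hb
    show q (a + b) - q a - q b = 0
    rw [h1, h2', h3]
    ring
  · simp only [grassmann, grassmannIn]
    apply Submodule.span_le.mpr
    rintro x ⟨v, hvU, hli, hsing, rfl⟩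
    have hiso : ∀ i j, QuadraticMap.polar ⇑q (v i) (v j) = 0 := fun i j =>
      hsing (v i) (Submodule.subset_span ⟨i, rfl⟩) (v j) (Submodule.subset_span ⟨j, rfl⟩)
    have hmain := mainind q h2 hHyp k k v hli hiso
      ((Finset.card_filter_le _ _).trans (by simp))
    exact hmain
end
end
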